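/- arXiv:2310.02142 — 3 statements merged into one kernel-verified Lean document; each statement's English description precedes it below -/
import Mathlib

section
/- Let G be an n-player safety game on a possibly infinite arena, where player i's objective is Safe(T_i) for a set T_i ⊆ V, and let π' be the outcome from v_0 of some Nash equilibrium. Then there exist K ≤ |Visit(π') ∖ {0}| and a Nash-equilibrium outcome π from v_0 with Visit(π) ∖ {0} = {j_1 < … < j_K} admitting a finite simple segment decomposition (sg_1, …, sg_{K+1}) such that: (i) π is a simple play or a simple lasso; (ii) if K > 0, then for all l ∈ [K], the concatenation sg_1 · … · sg_l equals the prefix of π up to position j_l; (iii) if K > 0, then for all l ∈ [K], there is no cycle of the arena that uses only vertices occurring in sg_1 · … · sg_l and avoids last(sg_l); and (iv) Sat(π') ⊆ Sat(π). -/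
open scoped ENNReal Classical

/-- An `n`-player arena on a (possibly infinite) directed graph: an edge relation
with no deadlocks, together with an assignment of each vertex to its owner. -/
structure Arena (V : Type) (n : ℕ) where
  E : V → V → Prop
  owner : V → Fin n
  no_deadlock : ∀ v, ∃ v', E v v'

namespace Arena

variable {V : Type} {n : ℕ}

/-- A play: an infinite sequence of vertices following edges. -/
def IsPlay (A : Arena V n) (π : ℕ → V) : Prop := ∀ j, A.E (π j) (π (j + 1))

/-- A strategy: given the past history (the earlier vertices, oldest first) and the
current vertex, pick an `E`-successor of the current vertex. -/
structure Strategy (A : Arena V n) where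
  next : List V → V → V
  valid : ∀ h v, A.E v (next h v)

/-- The list of the first `j` vertices of a play. -/
def pref (π : ℕ → V) (j : ℕ) : List V := (List.range j).map π

/-- A play is consistent with the strategy `σ` used by player `i`. -/
def Consistent (A : Arena V n) (i : Fin n) (σ : A.Strategy) (π : ℕ → V) : Prop :=
  ∀ j, A.owner (π j) = i → π (j + 1) = σ.next (pref π j) (π j)

/-- A memoryless strategy only depends on the current vertex. -/
def Memoryless {A : Arena V n} (σ : A.Strategy) : Prop :=
  ∀ h h' v, σ.next h v = σ.next h' v

def outcomeAux (A : Arena V n) (σ : Fin n → A.Strategy) (v0 : V) : ℕ → List V × V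
  | 0 => ([], v0)
  | j + 1 =>
      let p := outcomeAux A σ v0 j
      (p.1 ++ [p.2], (σ (A.owner p.2)).next p.1 p.2)

/-- The outcome of the strategy profile `σ` from `v0`: the unique play from `v0`
consistent with every strategy of the profile. -/
def outcome (A : Arena V n) (σ : Fin n → A.Strategy) (v0 : V) (j : ℕ) : V :=
  (outcomeAux A σ v0 j).2

/-- Reachability objective: visit `T`. -/
def ReachObj (T : Set V) : Set (ℕ → V) := {π | ∃ j, π j ∈ T}

/-- Safety objective: never visit `T`. -/
def SafeObj (T : Set V) : Set (ℕ → V) := {π | ∀ j, π j ∉ T}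

/-- Büchi objective: visit `T` infinitely often. -/
def BuchiObj (T : Set V) : Set (ℕ → V) := {π | ∀ j, ∃ k, j ≤ k ∧ π k ∈ T}

/-- co-Büchi objective: visit `T` only finitely often. -/
def CoBuchiObj (T : Set V) : Set (ℕ → V) := {π | ∃ j, ∀ k, j ≤ k → π k ∉ T}

/-- Shortest-path cost of a play: the total weight up to the first visit of `T`,
and `⊤` if `T` is never visited. -/
noncomputable def spCost (w : V → V → ℕ) (T : Set V) (π : ℕ → V) : ℝ≥0∞ :=
  if ∃ k, π k ∈ T then
    (Finset.range (sInf {k | π k ∈ T})).sum fun j => (w (π j) (π (j + 1)) : ℝ≥0∞)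
  else ⊤

/-- Winning region of player `p` (whose objective is `Ω`) in a two-player game:
vertices from which `p` has a strategy all of whose consistent plays lie in `Ω`. -/
def WinRegion (A : Arena V 2) (p : Fin 2) (Ω : Set (ℕ → V)) : Set V :=
  {v | ∃ σ : A.Strategy, ∀ π, A.IsPlay π → π 0 = v → A.Consistent p σ π → π ∈ Ω}

/-- Lower value `inf_{σ₁} sup_{σ₂}` of a two-player zero-sum game with cost `c`
(minimised by player 1, maximised by player 2). -/
noncomputable def valIS (A : Arena V 2) (c : (ℕ → V) → ℝ≥0∞) (v : V) : ℝ≥0∞ :=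
  ⨅ σ1 : A.Strategy, ⨆ σ2 : A.Strategy, c (outcome A ![σ1, σ2] v)

/-- Upper value `sup_{σ₂} inf_{σ₁}`. -/
noncomputable def valSI (A : Arena V 2) (c : (ℕ → V) → ℝ≥0∞) (v : V) : ℝ≥0∞ :=
  ⨆ σ2 : A.Strategy, ⨅ σ1 : A.Strategy, c (outcome A ![σ1, σ2] v)

/-- Nash equilibrium from `v0` for cost functions (each player minimises):
no unilateral deviation decreases the deviator's cost. -/
def IsNECost (A : Arena V n) (cost : Fin n → (ℕ → V) → ℝ≥0∞)
    (σ : Fin n → A.Strategy) (v0 : V) : Prop :=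
  ∀ (i : Fin n) (τ : A.Strategy),
    cost i (outcome A σ v0) ≤ cost i (outcome A (Function.update σ i τ) v0)

/-- Nash equilibrium from `v0` for objectives: if a unilateral deviation of player `i`
satisfies `Ω i`, then so does the equilibrium outcome. -/
def IsNEObj (A : Arena V n) (Ω : Fin n → Set (ℕ → V))
    (σ : Fin n → A.Strategy) (v0 : V) : Prop :=
  ∀ (i : Fin n) (τ : A.Strategy),
    outcome A (Function.update σ i τ) v0 ∈ Ω i → outcome A σ v0 ∈ Ω i

/-- The coalition arena of player `i`: player `i` (as player `0`) against all others. -/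
def coalition (A : Arena V n) (i : Fin n) : Arena V 2 where
  E := A.E
  owner := fun v => if A.owner v = i then 0 else 1
  no_deadlock := A.no_deadlock

/-- Winning region of player `i` in their coalition game for objective `Ω`. -/
def coalWin (A : Arena V n) (i : Fin n) (Ω : Set (ℕ → V)) : Set V :=
  WinRegion (coalition A i) 0 Ω

/-- Value of a vertex in player `i`'s coalition game with cost `c`. -/
noncomputable def coalVal (A : Arena V n) (i : Fin n) (c : (ℕ → V) → ℝ≥0∞) (v : V) :
    ℝ≥0∞ :=
  valIS (coalition A i) c v

/-- Players whose reachability objective is satisfied by `π`. -/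
def satReach (T : Fin n → Set V) (π : ℕ → V) : Set (Fin n) := {i | ∃ j, π j ∈ T i}

/-- Players whose safety objective is satisfied by `π`. -/
def satSafe (T : Fin n → Set V) (π : ℕ → V) : Set (Fin n) := {i | ∀ j, π j ∉ T i}

/-- Players whose Büchi objective is satisfied by `π`. -/
def satBuchi (T : Fin n → Set V) (π : ℕ → V) : Set (Fin n) :=
  {i | ∀ j, ∃ k, j ≤ k ∧ π k ∈ T i}

/-- Players whose co-Büchi objective is satisfied by `π`. -/
def satCoBuchi (T : Fin n → Set V) (π : ℕ → V) : Set (Fin n) :=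
  {i | ∃ j, ∀ k, j ≤ k → π k ∉ T i}

/-- Earliest positions at which the targets visited by `π` are first visited. -/
def visitSet (T : Fin n → Set V) (π : ℕ → V) : Set ℕ :=
  {m | ∃ i, (∃ j, π j ∈ T i) ∧ m = sInf {j | π j ∈ T i}}

/-- A Mealy machine with memory states `M`. -/
structure Mealy (A : Arena V n) (M : Type) where
  init : M
  up : M → V → M
  nxt : M → V → V
  valid : ∀ m v, A.E v (nxt m v)

/-- The strategy `σ` is induced by the Mealy machine `mm`. -/
def InducedBy {A : Arena V n} {M : Type} (σ : A.Strategy) (mm : Mealy A M) : Prop :=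
  ∀ h v, σ.next h v = mm.nxt (h.foldl mm.up mm.init) v

/-- `σ` has memory size at most `b`. -/
def HasMemorySize {A : Arena V n} (σ : A.Strategy) (b : ℕ) : Prop :=
  ∃ (M : Type) (mm : Mealy A M), Finite M ∧ Nat.card M ≤ b ∧ InducedBy σ mm

/-- `σ` is a finite-memory strategy. -/
def FiniteMemory {A : Arena V n} (σ : A.Strategy) : Prop :=
  ∃ (M : Type) (mm : Mealy A M), Finite M ∧ InducedBy σ mm

/-- The (finite) segment of `π` between positions `a` and `b` is a simple history. -/
def SimpleSeg (π : ℕ → V) (a b : ℕ) : Prop :=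
  ∀ m m', a ≤ m → m ≤ b → a ≤ m' → m' ≤ b → π m = π m' → m = m'

/-- The suffix of `π` from position `a` is a simple play. -/
def SimplePlaySeg (π : ℕ → V) (a : ℕ) : Prop :=
  ∀ m m', a ≤ m → a ≤ m' → π m = π m' → m = m'

/-- The suffix of `π` from position `a` is a simple lasso `p c^ω` with `p c`
a simple history. -/
def SimpleLassoSeg (π : ℕ → V) (a : ℕ) : Prop :=
  ∃ k ℓ, 0 < ℓ ∧ (∀ m, a + k ≤ m → π (m + ℓ) = π m) ∧
    ∀ m m', a ≤ m → m < a + k + ℓ → a ≤ m' → m' < a + k + ℓ → π m = π m' → m = m'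

/-- The segment of `π` between positions `a` and `b` is a simple cycle. -/
def SimpleCycleSeg (π : ℕ → V) (a b : ℕ) : Prop :=
  a < b ∧ π b = π a ∧
    ∀ m m', a ≤ m → m < b → a ≤ m' → m' < b → π m = π m' → m = m'

/-- Total weight of a history (a list of vertices). -/
def histWeight (w : V → V → ℕ) : List V → ℕ
  | [] => 0
  | [_] => 0
  | a :: b :: t => w a b + histWeight w (b :: t)

/-- The list of vertices along positions `a..b` (inclusive) of a play. -/
def segList (π : ℕ → V) (a b : ℕ) : List V :=
  (List.range (b - a + 1)).map fun m => π (a + m)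

/-- The segment of `π` between positions `a` and `b` has minimal weight among all
histories that share its first and last vertex and traverse only its vertices. -/
def MinWeightSeg (A : Arena V n) (w : V → V → ℕ) (π : ℕ → V) (a b : ℕ) : Prop :=
  ∀ h : List V, h ≠ [] → List.Chain' A.E h →
    h.head? = some (π a) → h.getLast? = some (π b) →
    (∀ x ∈ h, ∃ m, a ≤ m ∧ m ≤ b ∧ π m = x) →
    histWeight w (segList π a b) ≤ histWeight w h

/-- Given cut positions `p`, segments number `l` and `l'` of `π` carry the same
vertex sequence. -/
def SegEq (π : ℕ → V) (p : ℕ → ℕ) (l l' : ℕ) : Prop :=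
  p (l' + 1) - p l' = p (l + 1) - p l ∧
    ∀ m, m ≤ p (l + 1) - p l → π (p l' + m) = π (p l + m)

/-- There is no cycle of the arena using only vertices of `S` and avoiding `avoid`. -/
def NoCycleAvoid (A : Arena V n) (S : Set V) (avoid : V) : Prop :=
  ¬ ∃ (m : ℕ) (c : ℕ → V), 0 < m ∧ (∀ j, j < m → A.E (c j) (c (j + 1))) ∧
      c m = c 0 ∧ ∀ j, j ≤ m → c j ∈ S ∧ c j ≠ avoid

end Arena

open Arena List

namespace SafetyNE

variable {V : Type} {n : ℕ}

lemma pref_length (π : ℕ → V) (j : ℕ) : (pref π j).length = j := by simp [pref]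

lemma pref_succ (π : ℕ → V) (j : ℕ) : pref π (j+1) = pref π j ++ [π j] := by
  simp [pref, List.range_succ]

lemma outcomeAux_fst (A : Arena V n) (σ : Fin n → A.Strategy) (v0 : V) (j : ℕ) :
    (outcomeAux A σ v0 j).1 = pref (outcome A σ v0) j := by
  induction j with
  | zero => simp [outcomeAux, pref]
  | succ j ih =>
    show (outcomeAux A σ v0 j).1 ++ [(outcomeAux A σ v0 j).2] = _
    rw [ih, pref_succ]; rfl

lemma outcome_zero (A : Arena V n) (σ : Fin n → A.Strategy) (v0 : V) :
    outcome A σ v0 0 = v0 := rfl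

lemma outcome_succ (A : Arena V n) (σ : Fin n → A.Strategy) (v0 : V) (j : ℕ) :
    outcome A σ v0 (j+1)
      = (σ (A.owner (outcome A σ v0 j))).next (pref (outcome A σ v0) j)
          (outcome A σ v0 j) := by
  show (σ (A.owner (outcomeAux A σ v0 j).2)).next (outcomeAux A σ v0 j).1 _ = _
  rw [outcomeAux_fst]; rfl

lemma outcome_isPlay (A : Arena V n) (σ : Fin n → A.Strategy) (v0 : V) :
    A.IsPlay (outcome A σ v0) := by
  intro j; rw [outcome_succ]; exact (σ _).valid _ _

lemma outcome_eq_of (A : Arena V n) (σ : Fin n → A.Strategy) (v0 : V) (π : ℕ → V)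
    (h0 : π 0 = v0)
    (hstep : ∀ j, π (j+1) = (σ (A.owner (π j))).next (pref π j) (π j)) :
    outcome A σ v0 = π := by
  have key : ∀ j, outcome A σ v0 j = π j := by
    intro j
    induction j using Nat.strong_induction_on with
    | _ j ih =>
      match j with
      | 0 => simpa [outcome_zero] using h0.symm
      | j+1 =>
        have hpref : pref (outcome A σ v0) j = pref π j := by
          unfold pref
          exact List.map_congr_left fun m hm => ih m (lt_of_lt_of_le (List.mem_range.1 hm) (Nat.le_succ j))
        rw [outcome_succ, hpref, ih j (Nat.lt_succ_self j), ← hstep]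
  funext j; exact key j

end SafetyNE

namespace SafetyNE

variable {V : Type} {n : ℕ}

lemma pref_getElem (π : ℕ → V) {j m : ℕ} (h : m < j) :
    (pref π j)[m]'(by simpa [pref] using h) = π m := by
  simp [pref]

lemma pref_take (π : ℕ → V) (a b : ℕ) : (pref π a).take b = pref π (min b a) := by
  simp [pref, ← List.map_take, List.take_range]

lemma pref_congr {π π' : ℕ → V} {k : ℕ} (h : ∀ j, j < k → π j = π' j) :
    pref π k = pref π' k :=
  List.map_congr_left fun m hm => h m (List.mem_range.1 hm)

lemma pref_ne {π π' : ℕ → V} {k m : ℕ} (hm : m < k) (h : π m ≠ π' m) :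
    pref π k ≠ pref π' k := by
  intro heq
  apply h
  have h1 := List.getElem_of_eq heq (by simpa [pref] using hm)
  rw [pref_getElem π hm, pref_getElem π' hm] at h1
  exact h1

/-- A strategy that simply follows the play `ρ` (by history length). -/
noncomputable def followStrat (A : Arena V n) (ρ : ℕ → V) : A.Strategy where
  next h v := if A.E v (ρ (h.length + 1)) then ρ (h.length + 1)
    else Classical.choose (A.no_deadlock v)
  valid h v := by
    by_cases hE : A.E v (ρ (h.length + 1))
    · simpa [hE] using hE
    · simpa [hE] using Classical.choose_spec (A.no_deadlock v)

/-- First index at which the list `L` mismatches the play `π2`. -/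
noncomputable def devIdx (π2 : ℕ → V) (L : List V) : ℕ :=
  sInf {k | L.take (k+1) ≠ pref π2 (k+1)}

/-- Strategy for player `j`: follow `π2` on-path; after a deviation at position `d-1`,
replay the history translated into the `σ`-game (via `ψ`) and play as `σ j` there. -/
noncomputable def trStrat (A : Arena V n) (σ : Fin n → A.Strategy) (v0 : V)
    (π2 : ℕ → V) (ψ : ℕ → ℕ) (hplay : A.IsPlay π2) (j : Fin n) : A.Strategy where
  next h v :=
    if h ++ [v] = pref π2 (h.length + 1) then π2 (h.length + 1)
    else (σ j).next
      (pref (outcome A σ v0) (ψ (devIdx π2 (h ++ [v]) - 1))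
        ++ h.drop (devIdx π2 (h ++ [v]) - 1)) v
  valid h v := by
    by_cases hc : h ++ [v] = pref π2 (h.length + 1)
    · have hv : v = π2 h.length := by
        have := congrArg (fun l : List V => l.getLast?) hc
        simp only [pref_succ] at this
        simpa using this
      rw [if_pos hc, hv]
      exact hplay h.length
    · rw [if_neg hc]
      exact (σ j).valid _ _

lemma trStrat_next_pref (A : Arena V n) (σ : Fin n → A.Strategy) (v0 : V)
    (π2 : ℕ → V) (ψ : ℕ → ℕ) (hplay : A.IsPlay π2) (j : Fin n) (k : ℕ) :
    (trStrat A σ v0 π2 ψ hplay j).next (pref π2 k) (π2 k) = π2 (k+1) := by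
  have hc : pref π2 k ++ [π2 k] = pref π2 ((pref π2 k).length + 1) := by
    rw [pref_length, ← pref_succ]
  show (if _ then _ else _) = _
  rw [if_pos hc, pref_length]

lemma trStrat_next_dev (A : Arena V n) (σ : Fin n → A.Strategy) (v0 : V)
    (π2 : ℕ → V) (ψ : ℕ → ℕ) (hplay : A.IsPlay π2) (j : Fin n)
    (ρ : ℕ → V) (m k2 : ℕ)
    (hagree : ∀ i, i ≤ m → ρ i = π2 i) (hdev : ρ (m+1) ≠ π2 (m+1))
    (hk2 : m + 1 ≤ k2) :
    (trStrat A σ v0 π2 ψ hplay j).next (pref ρ k2) (ρ k2)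
      = (σ j).next
          (pref (outcome A σ v0) (ψ m) ++ (pref ρ k2).drop m) (ρ k2) := by
  have hL : pref ρ k2 ++ [ρ k2] = pref ρ (k2+1) := (pref_succ ρ k2).symm
  have hcond : ¬ (pref ρ k2 ++ [ρ k2] = pref π2 ((pref ρ k2).length + 1)) := by
    rw [hL, pref_length]
    exact pref_ne (by omega) hdev
  have hdevIdx : devIdx π2 (pref ρ k2 ++ [ρ k2]) = m + 1 := by
    rw [hL]
    have hmem : (m+1) ∈ {k | (pref ρ (k2+1)).take (k+1) ≠ pref π2 (k+1)} := by
      show (pref ρ (k2+1)).take (m+2) ≠ pref π2 (m+2)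
      rw [pref_take, min_eq_left (by omega)]
      exact pref_ne (by omega) hdev
    have hnot : ∀ k, k < m + 1 → k ∉ {k | (pref ρ (k2+1)).take (k+1) ≠ pref π2 (k+1)} := by
      intro k hk
      simp only [Set.mem_setOf_eq, not_not]
      rw [pref_take, min_eq_left (by omega)]
      exact pref_congr fun i hi => hagree i (by omega)
    refine le_antisymm (Nat.sInf_le hmem) ?_
    by_contra h
    push_neg at h
    exact hnot _ h (Nat.sInf_mem ⟨_, hmem⟩)
  show (if _ then _ else _) = _
  rw [if_neg hcond, hdevIdx]
  rfl

end SafetyNE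

namespace SafetyNE

variable {V : Type} {n : ℕ}

theorem transfer (A : Arena V n) (T : Fin n → Set V) (v0 : V)
    (σ : Fin n → A.Strategy)
    (hNE : A.IsNEObj (fun i => SafeObj (T i)) σ v0)
    (π2 : ℕ → V) (ψ : ℕ → ℕ)
    (hψ0 : ψ 0 = 0)
    (hψ : ∀ m, π2 m = outcome A σ v0 (ψ m))
    (hplay : A.IsPlay π2)
    (hcompat : ∀ (i : Fin n) (m q : ℕ), q ≤ ψ m → outcome A σ v0 q ∈ T i →
        ∃ q', q' ≤ m ∧ π2 q' ∈ T i) :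
    ∃ σ2 : Fin n → A.Strategy,
      A.IsNEObj (fun i => SafeObj (T i)) σ2 v0 ∧ outcome A σ2 v0 = π2 := by
  classical
  set out := outcome A σ v0 with hout
  set σ2 : Fin n → A.Strategy := fun j => trStrat A σ v0 π2 ψ hplay j with hσ2
  have hπ20 : π2 0 = v0 := by rw [hψ 0, hψ0]; rfl
  have hout2 : outcome A σ2 v0 = π2 := by
    apply outcome_eq_of _ _ _ _ hπ20
    intro k
    exact (trStrat_next_pref A σ v0 π2 ψ hplay _ k).symm
  refine ⟨σ2, ?_, hout2⟩
  intro i τ hdevsafe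
  set ρ := outcome A (Function.update σ2 i τ) v0 with hρdef
  by_cases hall : ∀ k, ρ k = π2 k
  · intro k hk
    rw [hout2] at hk
    exact hdevsafe k (by rw [hall k]; exact hk)
  push_neg at hall
  set k0 := sInf {k | ρ k ≠ π2 k} with hk0
  have hk0mem : ρ k0 ≠ π2 k0 := Nat.sInf_mem hall
  have hk0min : ∀ j, j < k0 → ρ j = π2 j := fun j hj =>
    not_not.1 (Nat.notMem_of_lt_sInf hj)
  have hρ0 : ρ 0 = π2 0 := by rw [hπ20]; rfl
  obtain ⟨m, hm⟩ : ∃ m, k0 = m + 1 := by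
    cases' Nat.eq_zero_or_pos k0 with h h
    · exact absurd (h ▸ hρ0) (h ▸ hk0mem)
    · exact ⟨k0 - 1, by omega⟩
  have hagree : ∀ j, j ≤ m → ρ j = π2 j := fun j hj => hk0min j (by omega)
  have hdev : ρ (m+1) ≠ π2 (m+1) := hm ▸ hk0mem
  -- the deviating vertex is owned by `i`
  have howner : A.owner (π2 m) = i := by
    by_contra hno
    apply hdev
    have hstep := outcome_succ A (Function.update σ2 i τ) v0 m
    have hprefρ : pref ρ m = pref π2 m := pref_congr fun q hq => hagree q hq.le
    rw [← hρdef] at hstep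
    rw [hstep, hagree m le_rfl, hprefρ, Function.update_of_ne hno]
    exact trStrat_next_pref A σ v0 π2 ψ hplay _ m
  -- the spliced deviation in the `σ`-game
  set q := ψ m with hqdef
  set ρ' : ℕ → V := fun k => if k ≤ q then out k else ρ (k - q + m) with hρ'
  have hρ'le : ∀ k, k ≤ q → ρ' k = out k := fun k hk => by simp [hρ', hk]
  have houtq : out q = ρ m := by rw [← hψ m, hagree m le_rfl]
  have hρ'ge : ∀ k, q ≤ k → ρ' k = ρ (k - q + m) := by
    intro k hk
    rcases eq_or_lt_of_le hk with h | h
    · rw [← h, hρ'le q le_rfl, houtq]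
      congr 1
      omega
    · simp [hρ', not_le.2 h]
  have hρplay : A.IsPlay ρ := outcome_isPlay _ _ _
  have hρ'play : A.IsPlay ρ' := by
    intro k
    rcases lt_or_ge k q with h | h
    · rw [hρ'le k h.le, hρ'le (k+1) h]
      exact outcome_isPlay A σ v0 k
    · rw [hρ'ge k h, hρ'ge (k+1) (by omega)]
      have : k + 1 - q + m = (k - q + m) + 1 := by omega
      rw [this]
      exact hρplay _
  set τ' := followStrat A ρ' with hτ'
  have htr : ∀ k, q ≤ k → pref out q ++ (pref ρ (k - q + m)).drop m = pref ρ' k := by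
    intro k hk
    apply List.ext_getElem
    · simp [pref]; omega
    · intro i hi1 hi2
      rw [pref_length] at hi2
      rcases lt_or_ge i q with h | h
      · rw [List.getElem_append_left (by simpa [pref] using h)]
        rw [pref_getElem out h, pref_getElem ρ' hi2, hρ'le i h.le]
      · have hlen : (pref out q).length = q := pref_length out q
        rw [List.getElem_append_right (by omega)]
        simp only [pref_length]
        rw [List.getElem_drop]
        rw [pref_getElem ρ (by omega), pref_getElem ρ' hi2, hρ'ge i h]
        congr 1
        omega
  have hout' : outcome A (Function.update σ i τ') v0 = ρ' := by
    apply outcome_eq_of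
    · rw [hρ'le 0 (Nat.zero_le _)]
      rfl
    · intro k
      by_cases hi : A.owner (ρ' k) = i
      · rw [hi, Function.update_self, hτ']
        show ρ' (k+1) = (if _ then _ else _)
        rw [pref_length, if_pos (hρ'play k)]
      · rw [Function.update_of_ne hi]
        rcases lt_or_ge k q with hk | hk
        · have h1 : pref ρ' k = pref out k := pref_congr fun j hj => hρ'le j (by omega)
          rw [h1, hρ'le k hk.le, ← outcome_succ, hρ'le (k+1) hk]
        · have hkgt : q < k := by
            rcases eq_or_lt_of_le hk with h | h
            · exfalso
              apply hi
              rw [← h, hρ'le q le_rfl, ← hψ m]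
              exact howner
            · exact h
          set k2 := k - q + m with hk2def
          have hk2m : m + 1 ≤ k2 := by omega
          have hownk2 : A.owner (ρ k2) ≠ i := by
            rw [← hρ'ge k hk]; exact hi
          have hstep2 : ρ (k2+1) = (σ2 (A.owner (ρ k2))).next (pref ρ k2) (ρ k2) := by
            have := outcome_succ A (Function.update σ2 i τ) v0 k2
            rw [← hρdef] at this
            rw [this, Function.update_of_ne hownk2]
          have hev := trStrat_next_dev A σ v0 π2 ψ hplay (A.owner (ρ k2)) ρ m k2
            hagree hdev hk2m
          simp only [hσ2] at hstep2
          rw [hev] at hstep2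
          have hlist : pref out (ψ m) ++ (pref ρ k2).drop m = pref ρ' k := htr k hk
          rw [hlist] at hstep2
          rw [hρ'ge (k+1) (by omega), hρ'ge k hk]
          have harith : k + 1 - q + m = k2 + 1 := by omega
          rw [harith]
          exact hstep2
  have hsafe' : outcome A (Function.update σ i τ') v0 ∈ SafeObj (T i) := by
    rw [hout']
    intro k hk
    rcases le_or_gt k q with h | h
    · rw [hρ'le k h] at hk
      obtain ⟨q', hq', hq'T⟩ := hcompat i m k h hk
      exact hdevsafe q' (by rw [hρdef] at *; rw [hagree q' hq']; exact hq'T)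
    · rw [hρ'ge k h.le] at hk
      exact hdevsafe _ hk
  have hfin := hNE i τ' hsafe'
  rw [hout2]
  intro k hk
  exact hfin (ψ k) (by rw [← hout, ← hψ k]; exact hk)

end SafetyNE

namespace SafetyNE

variable {V : Type} {n : ℕ}

lemma mod_succ_shift {a ℓ : ℕ} : (a + 1) % ℓ = (a % ℓ + 1) % ℓ := by
  conv_rhs => rw [Nat.add_mod, Nat.mod_mod_of_dvd _ dvd_rfl, ← Nat.add_mod]

lemma eq_of_mod_eq {a b ℓ : ℕ} (hℓ : 0 < ℓ) (h : a % ℓ = b % ℓ)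
    (hab : a < b + ℓ) (hba : b < a + ℓ) : a = b := by
  rcases le_total a b with hle | hle
  · have hdvd : ℓ ∣ b - a := (Nat.modEq_iff_dvd' hle).1 h
    have := Nat.eq_zero_of_dvd_of_lt hdvd
    omega
  · have hdvd : ℓ ∣ a - b := (Nat.modEq_iff_dvd' hle).1 h.symm
    have := Nat.eq_zero_of_dvd_of_lt hdvd
    omega

lemma visitSet_finite (T : Fin n → Set V) (ρ : ℕ → V) : (visitSet T ρ).Finite := by
  have hsub : visitSet T ρ ⊆ (fun i => sInf {j | ρ j ∈ T i}) '' Set.univ := by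
    rintro m ⟨i, hi, rfl⟩
    exact ⟨i, trivial, rfl⟩
  exact (Set.finite_univ.image _).subset hsub

lemma visit_spec {T : Fin n → Set V} {ρ : ℕ → V} {e : ℕ} (he : e ∈ visitSet T ρ) :
    ∃ i : Fin n, ρ e ∈ T i ∧ ∀ j, j < e → ρ j ∉ T i := by
  obtain ⟨i, ⟨j, hj⟩, rfl⟩ := he
  exact ⟨i, Nat.sInf_mem (s := {j | ρ j ∈ T i}) ⟨j, hj⟩, fun j hj' => Nat.notMem_of_lt_sInf hj'⟩

lemma firstVisit_mem {T : Fin n → Set V} {ρ : ℕ → V} {i : Fin n} {j : ℕ}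
    (h : ρ j ∈ T i) : sInf {j | ρ j ∈ T i} ∈ visitSet T ρ :=
  ⟨i, ⟨j, h⟩, rfl⟩

/-- Key comparison of first-visit positions along a vertex-preserving transform. -/
lemma visit_sub {T : Fin n → Set V} {ρ π2 : ℕ → V} {ψ : ℕ → ℕ} {b : ℕ}
    (hval : ∀ m, π2 m = ρ (ψ m)) (hψle : ∀ m, ψ m ≤ m) (hψb : ∀ m, ψ m ≤ b)
    (hpre : ∀ m, m ≤ b → π2 m = ρ m) :
    ∀ f ∈ visitSet T π2, f ∈ visitSet T ρ ∧ f ≤ b := by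
  rintro f ⟨i, ⟨j0, hj0⟩, rfl⟩
  set g := sInf {j | ρ j ∈ T i} with hg
  set f := sInf {j | π2 j ∈ T i} with hf
  have hρj0 : ρ (ψ j0) ∈ T i := by rw [← hval]; exact hj0
  have hgb : g ≤ b := le_trans (Nat.sInf_le hρj0) (hψb j0)
  have hρg : ρ g ∈ T i := Nat.sInf_mem (s := {j | ρ j ∈ T i}) ⟨_, hρj0⟩
  have hπ2g : π2 g ∈ T i := by rw [hpre g hgb]; exact hρg
  have hfg : f ≤ g := Nat.sInf_le hπ2g
  have hπ2f : π2 f ∈ T i := Nat.sInf_mem (s := {j | π2 j ∈ T i}) ⟨_, hπ2g⟩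
  have hρψf : ρ (ψ f) ∈ T i := by rw [← hval]; exact hπ2f
  have hgf : g ≤ f := le_trans (Nat.sInf_le hρψf) (hψle f)
  have hfeq : f = g := le_antisymm hfg hgf
  exact ⟨hfeq ▸ (firstVisit_mem hρg : g ∈ visitSet T ρ), hfeq ▸ hgb⟩

/-- If moreover every first visit of `ρ` lies in the preserved prefix, the
visit sets agree. -/
lemma visit_eq {T : Fin n → Set V} {ρ π2 : ℕ → V} {ψ : ℕ → ℕ} {b : ℕ}
    (hval : ∀ m, π2 m = ρ (ψ m)) (hψle : ∀ m, ψ m ≤ m) (hψb : ∀ m, ψ m ≤ b)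
    (hpre : ∀ m, m ≤ b → π2 m = ρ m)
    (hvb : ∀ g ∈ visitSet T ρ, g ≤ b) :
    visitSet T π2 = visitSet T ρ := by
  apply Set.Subset.antisymm
  · intro f hfmem
    exact (visit_sub hval hψle hψb hpre f hfmem).1
  · rintro g ⟨i, ⟨j0, hj0⟩, rfl⟩
    set g := sInf {j | ρ j ∈ T i} with hg
    have hgmem : g ∈ visitSet T ρ := firstVisit_mem hj0
    have hgb : g ≤ b := hvb g hgmem
    have hρg : ρ g ∈ T i := Nat.sInf_mem (s := {j | ρ j ∈ T i}) ⟨_, hj0⟩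
    have hπ2g : π2 g ∈ T i := by rw [hpre g hgb]; exact hρg
    have hmem2 : sInf {j | π2 j ∈ T i} ∈ visitSet T π2 := firstVisit_mem hπ2g
    obtain ⟨hmem, -⟩ := visit_sub hval hψle hψb hpre _ hmem2
    -- the element of visitSet ρ produced is g itself
    have hfg : sInf {j | π2 j ∈ T i} ≤ g := Nat.sInf_le hπ2g
    have hπ2f : π2 (sInf {j | π2 j ∈ T i}) ∈ T i := Nat.sInf_mem (s := {j | π2 j ∈ T i}) ⟨_, hπ2g⟩
    have hρψf : ρ (ψ (sInf {j | π2 j ∈ T i})) ∈ T i := by rw [← hval]; exact hπ2f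
    have hgf : g ≤ sInf {j | π2 j ∈ T i} :=
      le_trans (Nat.sInf_le hρψf) (hψle _)
    have : sInf {j | π2 j ∈ T i} = g := le_antisymm hfg hgf
    rw [← this]
    exact hmem2

/-- Sorted enumeration of a finite set of positive naturals. -/
lemma assemble {F : Set ℕ} (hF : F.Finite) (h0 : 0 ∉ F) :
    ∃ e : ℕ → ℕ, e 0 = 0 ∧ (∀ l, l < F.ncard → e l < e (l+1)) ∧
      (∀ m, m ∈ F ↔ ∃ l, 1 ≤ l ∧ l ≤ F.ncard ∧ m = e l) ∧
      (∀ l, 1 ≤ l → l ≤ F.ncard → e l ∈ F) := by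
  classical
  set L := hF.toFinset.sort (· ≤ ·) with hL
  have hlen : L.length = F.ncard := by
    rw [hL, Finset.length_sort, Set.ncard_eq_toFinset_card _ hF]
  have hsorted : List.Pairwise (· < ·) L := hF.toFinset.sortedLT_sort.pairwise
  have hmemL : ∀ m, m ∈ L ↔ m ∈ F := by
    intro m
    rw [hL, Finset.mem_sort]
    exact hF.mem_toFinset
  have hmono : ∀ a b (ha : a < L.length) (hb : b < L.length), a < b → L[a] < L[b] := by
    intro a b ha hb hab
    exact List.Pairwise.rel_get_of_lt hsorted (a := ⟨a, ha⟩) (b := ⟨b, hb⟩) (by exact hab)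
  set e : ℕ → ℕ := fun l => if l = 0 then 0 else L.getD (l-1) 0 with he
  have hegetd : ∀ l (h1 : 1 ≤ l) (h2 : l ≤ F.ncard), e l = L[l-1]'(by rw [hlen]; omega) := by
    intro l h1 h2
    simp only [he, if_neg (by omega : ¬ l = 0)]
    exact List.getD_eq_getElem L 0 (by rw [hlen]; omega)
  have hemem : ∀ l, 1 ≤ l → l ≤ F.ncard → e l ∈ F := by
    intro l h1 h2
    rw [hegetd l h1 h2, ← hmemL]
    exact List.getElem_mem _
  refine ⟨e, by simp [he], ?_, ?_, hemem⟩
  · intro l hl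
    rcases Nat.eq_zero_or_pos l with rfl | hpos
    · have h1 : e 1 ∈ F := hemem 1 le_rfl (by omega)
      have hne : e 1 ≠ 0 := fun h => h0 (h ▸ h1)
      have h00 : e 0 = 0 := by simp [he]
      show e 0 < e 1
      omega
    · rw [hegetd l hpos hl.le, hegetd (l+1) (by omega) (by omega)]
      exact hmono (l-1) l (by rw [hlen]; omega) (by rw [hlen]; omega) (by omega)
  · intro m
    constructor
    · intro hm
      rw [← hmemL] at hm
      obtain ⟨idx, hidx, hval⟩ := List.mem_iff_getElem.1 hm
      refine ⟨idx + 1, by omega, by rw [hlen] at hidx; omega, ?_⟩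
      rw [hegetd (idx+1) (by omega) (by rw [hlen] at hidx; omega)]
      simp [hval]
    · rintro ⟨l, h1, h2, rfl⟩
      exact hemem l h1 h2

end SafetyNE

namespace SafetyNE

variable {V : Type} {n : ℕ}

lemma lasso_spec (A : Arena V n) (ρ : ℕ → V) (hplay : A.IsPlay ρ) (q1 q2 : ℕ)
    (hlt : q1 < q2) (heq : ρ q1 = ρ q2) :
    ∃ (π2 : ℕ → V) (ψ : ℕ → ℕ),
      (∀ m, π2 m = ρ (ψ m)) ∧ ψ 0 = 0 ∧ (∀ m, ψ m ≤ m) ∧ (∀ m, ψ m < q2) ∧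
      (∀ m, m < q2 → π2 m = ρ m) ∧ A.IsPlay π2 ∧
      (∀ m, q1 ≤ m → π2 (m + (q2 - q1)) = π2 m) ∧
      (∀ m, q1 ≤ m → π2 m = ρ (q1 + (m - q1) % (q2 - q1))) := by
  set ℓ := q2 - q1 with hℓdef
  have hℓ : 0 < ℓ := by omega
  set ψ : ℕ → ℕ := fun m => if m ≤ q1 then m else q1 + (m - q1) % ℓ with hψdef
  set π2 : ℕ → V := fun m => ρ (ψ m) with hπ2def
  have hval : ∀ m, π2 m = ρ (ψ m) := fun m => rfl
  have hψ0 : ψ 0 = 0 := by simp [hψdef]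
  have hψle : ∀ m, ψ m ≤ m := by
    intro m
    by_cases h : m ≤ q1
    · simp [hψdef, h]
    · simp only [hψdef, if_neg h]
      have := Nat.mod_le (m - q1) ℓ
      omega
  have hψlt : ∀ m, ψ m < q2 := by
    intro m
    by_cases h : m ≤ q1
    · simp only [hψdef, if_pos h]; omega
    · simp only [hψdef, if_neg h]
      have := Nat.mod_lt (m - q1) hℓ
      omega
  have hnf : ∀ m, q1 ≤ m → π2 m = ρ (q1 + (m - q1) % ℓ) := by
    intro m hm
    by_cases h : m ≤ q1
    · have : m = q1 := by omega
      subst this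
      simp [hπ2def, hψdef]
    · simp [hπ2def, hψdef, if_neg h]
  have hpre : ∀ m, m < q2 → π2 m = ρ m := by
    intro m hm
    by_cases h : m ≤ q1
    · simp [hπ2def, hψdef, h]
    · rw [hnf m (by omega), Nat.mod_eq_of_lt (by omega)]
      congr 1
      omega
  have hstep : ∀ m, π2 (m + 1) = ρ (ψ m + 1) := by
    intro m
    by_cases h : m + 1 ≤ q1
    · rw [hpre (m+1) (by omega)]
      have hm' : ψ m = m := by simp [hψdef, show m ≤ q1 by omega]
      rw [hm']
    · have hm : q1 ≤ m := by omega
      rw [hnf (m+1) (by omega)]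
      by_cases h2 : m = q1
      · subst h2
        simp only [hψdef, if_pos le_rfl]
        rcases eq_or_lt_of_le (show 1 ≤ ℓ from hℓ) with h3 | h3
        · rw [Nat.add_sub_cancel_left, ← h3, Nat.mod_self, Nat.add_zero, heq]
          congr 1
          omega
        · rw [Nat.add_sub_cancel_left, Nat.mod_eq_of_lt h3]
      · have hmq : q1 < m := by omega
        simp only [hψdef, if_neg (by omega : ¬ m ≤ q1)]
        have hsh : (m + 1 - q1) % ℓ = ((m - q1) % ℓ + 1) % ℓ := by
          have : m + 1 - q1 = (m - q1) + 1 := by omega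
          rw [this, mod_succ_shift]
        rw [hsh]
        have hr : (m - q1) % ℓ < ℓ := Nat.mod_lt _ hℓ
        rcases eq_or_lt_of_le (show (m - q1) % ℓ + 1 ≤ ℓ from hr) with h3 | h3
        · rw [h3, Nat.mod_self, Nat.add_zero, heq]
          congr 1
          omega
        · rw [Nat.mod_eq_of_lt h3]
          try congr 1
          try omega
  have hplay2 : A.IsPlay π2 := by
    intro m
    rw [hstep m, hval m]
    exact hplay (ψ m)
  have hper : ∀ m, q1 ≤ m → π2 (m + ℓ) = π2 m := by
    intro m hm
    rw [hnf (m + ℓ) (by omega), hnf m hm]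
    congr 2
    have : m + ℓ - q1 = (m - q1) + ℓ := by omega
    rw [this, Nat.add_mod_right]
  exact ⟨π2, ψ, hval, hψ0, hψle, hψlt, hpre, hplay2, hper, hnf⟩

lemma cycle_spec (A : Arena V n) (ρ : ℕ → V) (hplay : A.IsPlay ρ) (e : ℕ)
    (mc : ℕ) (c : ℕ → V) (hmc : 0 < mc)
    (hedges : ∀ j, j < mc → A.E (c j) (c (j+1)))
    (hc0 : c mc = c 0)
    (hin : ∀ j, j ≤ mc → (∃ m, m ≤ e ∧ ρ m = c j) ∧ c j ≠ ρ e) :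
    ∃ (π2 : ℕ → V) (ψ : ℕ → ℕ) (p : ℕ), p < e ∧
      (∀ m, π2 m = ρ (ψ m)) ∧ ψ 0 = 0 ∧ (∀ m, ψ m ≤ m) ∧ (∀ m, ψ m ≤ p) ∧
      (∀ m, m ≤ p → π2 m = ρ m) ∧ A.IsPlay π2 := by
  classical
  set pos : ℕ → ℕ := fun j => sInf {m | ρ m = c j} with hposdef
  have hposval : ∀ j, j ≤ mc → ρ (pos j) = c j := by
    intro j hj
    obtain ⟨⟨m, hme, hm⟩, -⟩ := hin j hj
    exact Nat.sInf_mem (s := {m | ρ m = c j}) ⟨m, hm⟩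
  have hpose : ∀ j, j ≤ mc → pos j < e := by
    intro j hj
    obtain ⟨⟨m, hme, hm⟩, hne⟩ := hin j hj
    have h1 : pos j ≤ m := Nat.sInf_le hm
    have h2 : pos j ≠ e := by
      intro h
      exact hne (by rw [← hposval j hj, h])
    omega
  obtain ⟨j0, hj0mem, hj0⟩ :=
    Finset.exists_mem_eq_sup (Finset.range mc) ⟨0, Finset.mem_range.2 hmc⟩ pos
  rw [Finset.mem_range] at hj0mem
  set p := Finset.sup (Finset.range mc) pos with hpdef
  have hple : ∀ j, j < mc → pos j ≤ p := fun j hj =>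
    Finset.le_sup (Finset.mem_range.2 hj)
  have hpe : p < e := by rw [hj0]; exact hpose j0 (by omega)
  set ψ : ℕ → ℕ := fun m => if m ≤ p then m else pos ((j0 + (m - p)) % mc) with hψdef
  set π2 : ℕ → V := fun m => ρ (ψ m) with hπ2def
  have hval : ∀ m, π2 m = ρ (ψ m) := fun m => rfl
  have hψ0 : ψ 0 = 0 := by simp [hψdef]
  have hψp : ∀ m, ψ m ≤ p := by
    intro m
    by_cases h : m ≤ p
    · simp [hψdef, h]
    · simp only [hψdef, if_neg h]
      exact hple _ (Nat.mod_lt _ hmc)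
  have hψle : ∀ m, ψ m ≤ m := by
    intro m
    by_cases h : m ≤ p
    · simp [hψdef, h]
    · exact le_trans (hψp m) (by omega)
  have hpre : ∀ m, m ≤ p → π2 m = ρ m := by
    intro m hm
    simp [hπ2def, hψdef, hm]
  have hge : ∀ m, p ≤ m → π2 m = c ((j0 + (m - p)) % mc) := by
    intro m hm
    by_cases h : m ≤ p
    · have hmp : m = p := by omega
      rw [hmp]
      have hj : (j0 + (p - p)) % mc = j0 := by
        rw [Nat.sub_self, Nat.add_zero, Nat.mod_eq_of_lt hj0mem]
      rw [hj, hpre p le_rfl, hj0]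
      exact hposval j0 (by omega)
    · simp only [hπ2def, hψdef, if_neg h]
      exact hposval _ (le_of_lt (Nat.mod_lt _ hmc))
  have hedge : ∀ s : ℕ, A.E (c (s % mc)) (c ((s+1) % mc)) := by
    intro s
    have hr : s % mc < mc := Nat.mod_lt _ hmc
    have h1 : (s+1) % mc = (s % mc + 1) % mc := mod_succ_shift
    rcases eq_or_lt_of_le (show s % mc + 1 ≤ mc from hr) with h2 | h2
    · have h4 : c mc = c (s % mc + 1) := by rw [h2]
      rw [h1, h2, Nat.mod_self, ← hc0, h4]
      exact hedges _ hr
    · rw [h1, Nat.mod_eq_of_lt h2]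
      exact hedges _ hr
  have hplay2 : A.IsPlay π2 := by
    intro m
    by_cases h : m + 1 ≤ p
    · rw [hpre m (by omega), hpre (m+1) h]
      exact hplay m
    · by_cases h2 : m < p
      · omega
      · have hm : p ≤ m := by omega
        rw [hge m hm, hge (m+1) (by omega)]
        have : j0 + (m + 1 - p) = (j0 + (m - p)) + 1 := by omega
        rw [this]
        exact hedge _
  exact ⟨π2, ψ, p, hpe, hval, hψ0, hψle, hψp, hpre, hplay2⟩

end SafetyNE

namespace SafetyNE

variable {V : Type} {n : ℕ}

def Concl (A : Arena V n) (T : Fin n → Set V) (v0 : V) (ρ : ℕ → V) (N : ℕ) : Prop :=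
  ∃ (K : ℕ) (σ : Fin n → A.Strategy) (π : ℕ → V) (e : ℕ → ℕ),
    K ≤ N ∧
    A.IsNEObj (fun i => SafeObj (T i)) σ v0 ∧
    outcome A σ v0 = π ∧
    (SimplePlaySeg π 0 ∨ SimpleLassoSeg π 0) ∧
    e 0 = 0 ∧ (∀ l, l < K → e l < e (l + 1)) ∧
    visitSet T π \ {0} = {m | ∃ l, 1 ≤ l ∧ l ≤ K ∧ m = e l} ∧
    (∀ l, l < K → SimpleSeg π (e l) (e (l + 1))) ∧
    (SimplePlaySeg π (e K) ∨ SimpleLassoSeg π (e K)) ∧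
    (∀ l, 1 ≤ l → l ≤ K →
      NoCycleAvoid A {x | ∃ m, m ≤ e l ∧ π m = x} (π (e l))) ∧
    satSafe T ρ ⊆ satSafe T π

theorem main (A : Arena V n) (T : Fin n → Set V) (v0 : V) :
    ∀ (N : ℕ) (ρ : ℕ → V) (σρ : Fin n → A.Strategy),
      A.IsNEObj (fun i => SafeObj (T i)) σρ v0 → outcome A σρ v0 = ρ →
      (visitSet T ρ \ {0}).ncard ≤ N → Concl A T v0 ρ N := by
  intro N
  induction N using Nat.strong_induction_on with
  | _ N IH =>
  intro ρ σρ hNEρ houtρ hN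
  classical
  set F := visitSet T ρ \ {0} with hFdef
  have hFfin : F.Finite := (visitSet_finite T ρ).sdiff
  have hρplay : A.IsPlay ρ := houtρ ▸ outcome_isPlay A σρ v0
  -- recursion step: any compatible transform whose range stays below a dropped cut
  have recurse : ∀ (π2 : ℕ → V) (ψ : ℕ → ℕ) (b eD : ℕ),
      eD ∈ F → b < eD →
      (∀ m, π2 m = ρ (ψ m)) → ψ 0 = 0 → (∀ m, ψ m ≤ m) → (∀ m, ψ m ≤ b) →
      (∀ m, m ≤ b → π2 m = ρ m) → A.IsPlay π2 → Concl A T v0 ρ N := by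
    intro π2 ψ b eD heD hbe hval hψ0 hψle hψb hpre hplay2
    have hcompat : ∀ (i : Fin n) (m q : ℕ), q ≤ ψ m → outcome A σρ v0 q ∈ T i →
        ∃ q', q' ≤ m ∧ π2 q' ∈ T i := by
      intro i m q hq hT
      rw [houtρ] at hT
      exact ⟨q, le_trans hq (hψle m),
        by rw [hpre q (le_trans hq (hψb m))]; exact hT⟩
    obtain ⟨σ2, hNE2, hout2⟩ := transfer A T v0 σρ hNEρ π2 ψ hψ0
      (by intro m; rw [houtρ]; exact hval m) hplay2 hcompat
    have hsub := visit_sub (T := T) hval hψle hψb hpre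
    have hF2sub : visitSet T π2 \ {0} ⊆ F \ {eD} := by
      rintro f ⟨hf, hf0⟩
      obtain ⟨hmem, hfb⟩ := hsub f hf
      refine ⟨⟨hmem, hf0⟩, ?_⟩
      intro h
      rw [Set.mem_singleton_iff] at h
      omega
    have hssub : visitSet T π2 \ {0} ⊂ F :=
      Set.ssubset_of_subset_of_ssubset hF2sub (Set.diff_singleton_ssubset.2 heD)
    have hcard : (visitSet T π2 \ {0}).ncard < F.ncard := Set.ncard_lt_ncard hssub hFfin
    have hFpos : 0 < F.ncard := (Set.ncard_pos hFfin).2 ⟨eD, heD⟩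
    obtain ⟨K, σf, πf, ef, hK, c2, c3, c4, c5, c6, c7, c8, c9, c10, c11⟩ :=
      IH (N - 1) (by omega) π2 σ2 hNE2 hout2 (by omega)
    refine ⟨K, σf, πf, ef, by omega, c2, c3, c4, c5, c6, c7, c8, c9, c10, ?_⟩
    intro i hi
    apply c11
    intro j
    rw [hval j]
    exact hi (ψ j)
  by_cases hR1 : ∃ q1 q2 eD, q1 < q2 ∧ ρ q1 = ρ q2 ∧ eD ∈ F ∧ q2 < eD
  · obtain ⟨q1, q2, eD, hlt, heq, heD, hq2e⟩ := hR1
    obtain ⟨π2, ψ, hval, hψ0, hψle, hψlt, hpre, hplay2, -, -⟩ :=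
      lasso_spec A ρ hρplay q1 q2 hlt heq
    exact recurse π2 ψ (q2 - 1) eD heD (by omega) hval hψ0 hψle
      (fun m => by have := hψlt m; omega) (fun m hm => hpre m (by omega)) hplay2
  by_cases hR2 : ∃ eD ∈ F, ¬ NoCycleAvoid A {x | ∃ m, m ≤ eD ∧ ρ m = x} (ρ eD)
  · obtain ⟨eD, heD, hcyc⟩ := hR2
    obtain ⟨mc, c, hmc, hedges, hc0, hinavoid⟩ := not_not.1 hcyc
    obtain ⟨π2, ψ, p, hpe, hval, hψ0, hψle, hψp, hpre, hplay2⟩ :=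
      cycle_spec A ρ hρplay eD mc c hmc hedges hc0 hinavoid
    exact recurse π2 ψ p eD heD hpe hval hψ0 hψle hψp hpre hplay2
  -- terminal cases: no small repeats, no bad cycles
  push_neg at hR1
  push_neg at hR2
  have h0F : (0 : ℕ) ∉ F := fun h => h.2 rfl
  have hFle : ∀ (q1 q2 : ℕ), q1 < q2 → ρ q1 = ρ q2 → ∀ eD ∈ F, eD < q2 := by
    intro q1 q2 hlt heq eD heD
    have h1 : eD ≤ q2 := hR1 q1 q2 eD hlt heq heD
    rcases eq_or_lt_of_le h1 with h2 | h2
    · exfalso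
      obtain ⟨i, hT, hfirst⟩ := visit_spec heD.1
      exact hfirst q1 (by omega) (by rw [heq, ← h2]; exact hT)
    · exact h2
  obtain ⟨e, he0, hmono, hiff, hmem⟩ := assemble hFfin h0F
  by_cases hrep : ∃ q2 q1, q1 < q2 ∧ ρ q1 = ρ q2
  · -- a repeat exists: all of it lies beyond the cuts; build a simple lasso
    have hrepset : {q | ∃ q1, q1 < q ∧ ρ q1 = ρ q}.Nonempty := by
      obtain ⟨q2, q1, h1, h2⟩ := hrep
      exact ⟨q2, q1, h1, h2⟩
    set q2 := sInf {q | ∃ q1, q1 < q ∧ ρ q1 = ρ q} with hq2def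
    obtain ⟨q1, hq1lt, hq1eq⟩ :=
      Nat.sInf_mem (s := {q | ∃ q1, q1 < q ∧ ρ q1 = ρ q}) hrepset
    have hinjρ : ∀ a b, a < q2 → b < q2 → ρ a = ρ b → a = b := by
      intro a b ha hb h
      rcases lt_trichotomy a b with h2 | h2 | h2
      · exact absurd ⟨a, h2, h⟩ (Nat.notMem_of_lt_sInf hb)
      · exact h2
      · exact absurd ⟨b, h2, h.symm⟩ (Nat.notMem_of_lt_sInf ha)
    have hFlt : ∀ eD ∈ F, eD < q2 := fun eD heD => hFle q1 q2 hq1lt hq1eq eD heD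
    obtain ⟨π2, ψ, hval, hψ0, hψle, hψlt, hpre, hplay2, hper, hnf⟩ :=
      lasso_spec A ρ hρplay q1 q2 hq1lt hq1eq
    set ℓ := q2 - q1 with hℓdef
    have hℓ : 0 < ℓ := by omega
    have hcompat : ∀ (i : Fin n) (m q : ℕ), q ≤ ψ m → outcome A σρ v0 q ∈ T i →
        ∃ q', q' ≤ m ∧ π2 q' ∈ T i := by
      intro i m q hq hT
      rw [houtρ] at hT
      exact ⟨q, le_trans hq (hψle m),
        by rw [hpre q (lt_of_le_of_lt hq (hψlt m))]; exact hT⟩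
    obtain ⟨σ2, hNE2, hout2⟩ := transfer A T v0 σρ hNEρ π2 ψ hψ0
      (by intro m; rw [houtρ]; exact hval m) hplay2 hcompat
    have hveq : visitSet T π2 = visitSet T ρ := by
      apply visit_eq hval hψle (b := q2 - 1)
        (fun m => by have := hψlt m; omega) (fun m hm => hpre m (by omega))
      intro g hg
      by_cases hg0 : g = 0
      · omega
      · have : g ∈ F := ⟨hg, hg0⟩
        have := hFlt g this
        omega
    have hinjπ2 : ∀ m m', m < q2 → m' < q2 → π2 m = π2 m' → m = m' := by
      intro m m' hm hm' h
      rw [hpre m hm, hpre m' hm'] at h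
      exact hinjρ m m' hm hm' h
    have heF : ∀ l, 1 ≤ l → l ≤ F.ncard → e l < q2 := fun l h1 h2 =>
      hFlt (e l) (hmem l h1 h2)
    have heK : e F.ncard < q2 := by
      rcases Nat.eq_zero_or_pos F.ncard with h | h
      · rw [h, he0]; omega
      · exact heF _ h le_rfl
    refine ⟨F.ncard, σ2, π2, e, hN, hNE2, hout2, ?_, he0, hmono, ?_, ?_, ?_, ?_, ?_⟩
    · -- simple lasso from 0
      refine Or.inr ⟨q1, ℓ, hℓ, fun m hm => hper m (by omega), ?_⟩
      intro m m' _ hm _ hm' h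
      exact hinjπ2 m m' (by omega) (by omega) h
    · rw [hveq]
      exact Set.ext fun m => hiff m
    · intro l hl
      have hb : e (l+1) < q2 := heF (l+1) (by omega) (by omega)
      intro m m' _ hm _ hm' h
      exact hinjπ2 m m' (by omega) (by omega) h
    · -- suffix from e K is a simple lasso
      refine Or.inr ?_
      by_cases hcase : e F.ncard ≤ q1
      · refine ⟨q1 - e F.ncard, ℓ, hℓ, fun m hm => hper m (by omega), ?_⟩
        intro m m' _ hm _ hm' h
        exact hinjπ2 m m' (by omega) (by omega) h
      · refine ⟨0, ℓ, hℓ, fun m hm => hper m (by omega), ?_⟩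
        intro m m' hm0 hm hm0' hm' h
        rw [hnf m (by omega), hnf m' (by omega)] at h
        have h1 : (m - q1) % ℓ < ℓ := Nat.mod_lt _ hℓ
        have h2 : (m' - q1) % ℓ < ℓ := Nat.mod_lt _ hℓ
        have h3 := hinjρ _ _ (by omega) (by omega) h
        have h4 : (m - q1) % ℓ = (m' - q1) % ℓ := by omega
        have h5 : m - q1 = m' - q1 := eq_of_mod_eq hℓ h4 (by omega) (by omega)
        omega
    · intro l h1 h2
      have hb : e l < q2 := heF l h1 h2
      have hset : {x | ∃ m, m ≤ e l ∧ π2 m = x} = {x | ∃ m, m ≤ e l ∧ ρ m = x} := by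
        ext x
        simp only [Set.mem_setOf_eq]
        constructor <;> rintro ⟨m, hm1, hm2⟩ <;> refine ⟨m, hm1, ?_⟩
        · rw [← hm2, hpre m (by omega)]
        · rw [← hm2, hpre m (by omega)]
      rw [hset, hpre (e l) hb]
      exact hR2 (e l) (hmem l h1 h2)
    · intro i hi j
      rw [hval j]
      exact hi (ψ j)
  · -- no repeat at all: ρ is injective, a simple play
    push_neg at hrep
    have hinj : ∀ a b, ρ a = ρ b → a = b := by
      intro a b hab
      rcases lt_trichotomy a b with h | h | h
      · exact absurd hab (hrep b a h)
      · exact h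
      · exact absurd hab.symm (hrep a b h)
    refine ⟨F.ncard, σρ, ρ, e, hN, hNEρ, houtρ,
      Or.inl fun m m' _ _ h => hinj m m' h, he0, hmono,
      Set.ext fun m => hiff m,
      fun l hl m m' _ _ _ _ h => hinj m m' h,
      Or.inl fun m m' _ _ h => hinj m m' h,
      fun l h1 h2 => hR2 (e l) (hmem l h1 h2),
      subset_rfl⟩

end SafetyNE

open Arena

/-- Well-structured Nash-equilibrium outcomes in safety games.  The
decomposition `(sg_1, …, sg_{K+1})` of `π` is encoded by its cut positions
`e 0 = 0, e 1, …, e K` (so that `sg_l = π[e (l-1) .. e l]` and `sg_{K+1}` is the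
suffix of `π` from `e K`); in particular `sg_1 ⋯ sg_l` is the prefix of `π` up
to position `e l`. -/
theorem safety_simple_decomposition
    (V : Type) (n : ℕ) (A : Arena V n) (T : Fin n → Set V) (v0 : V)
    (σ' : Fin n → A.Strategy)
    (hNE : A.IsNEObj (fun i => SafeObj (T i)) σ' v0)
    (π' : ℕ → V) (hπ' : outcome A σ' v0 = π') :
    ∃ (K : ℕ) (σ : Fin n → A.Strategy) (π : ℕ → V) (e : ℕ → ℕ),
      K ≤ (visitSet T π' \ {0}).ncard ∧
      A.IsNEObj (fun i => SafeObj (T i)) σ v0 ∧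
      outcome A σ v0 = π ∧
      -- (i): π is a simple play or a simple lasso
      (SimplePlaySeg π 0 ∨ SimpleLassoSeg π 0) ∧
      -- (ii): the cut positions `e 1 < … < e K` are exactly `Visit(π) ∖ {0}`
      e 0 = 0 ∧ (∀ l, l < K → e l < e (l + 1)) ∧
      visitSet T π \ {0} = {m | ∃ l, 1 ≤ l ∧ l ≤ K ∧ m = e l} ∧
      -- the decomposition is simple
      (∀ l, l < K → SimpleSeg π (e l) (e (l + 1))) ∧
      (SimplePlaySeg π (e K) ∨ SimpleLassoSeg π (e K)) ∧
      -- (iii): no cycle inside the vertices of `sg_1 ⋯ sg_l` avoiding `last(sg_l)`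
      (∀ l, 1 ≤ l → l ≤ K →
        NoCycleAvoid A {x | ∃ m, m ≤ e l ∧ π m = x} (π (e l))) ∧
      -- (iv)
      satSafe T π' ⊆ satSafe T π := by
  obtain ⟨K, σ, π, e, h1, h2, h3, h4, h5, h6, h7, h8, h9, h10, h11⟩ :=
    SafetyNE.main A T v0 ((visitSet T π' \ {0}).ncard) π' σ' hNE hπ' le_rfl
  exact ⟨K, σ, π, e, h1, h2, h3, h4, h5, h6, h7, h8, h9, h10, h11⟩
end

section
/- Let G be an n-player safety game on a possibly infinite arena, where player i's objective is Safe(T_i) for a set T_i ⊆ V, and let σ' be a Nash equilibrium from a vertex v_0. Then there exists a Nash equilibrium σ from v_0 in which every strategy is finite-memory with memory size at most max{1, n − |Sat(out(σ', v_0))|} · (|Visit(out(σ', v_0)) ∖ {0}| + 2) (in particular at most n² + 2n), and such that Sat(out(σ', v_0)) ⊆ Sat(out(σ, v_0)). -/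
open scoped ENNReal Classical

open Arena

/-! ### Auxiliary machinery for the proof -/

noncomputable section SafetyFM

open Classical

namespace SafetyFM

variable {V : Type} {n : ℕ}

/-- An arbitrary successor. -/
noncomputable def anySucc (A : Arena V n) (v : V) : V := Classical.choose (A.no_deadlock v)

lemma anySucc_spec (A : Arena V n) (v : V) : A.E v (anySucc A v) :=
  Classical.choose_spec (A.no_deadlock v)

lemma pref_succ (π : ℕ → V) (t : ℕ) : pref π (t + 1) = pref π t ++ [π t] := by
  simp [Arena.pref, List.range_succ]

lemma pref_length (π : ℕ → V) (t : ℕ) : (pref π t).length = t := by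
  simp [Arena.pref]

lemma outcome_zero (A : Arena V n) (σ : Fin n → A.Strategy) (v0 : V) :
    outcome A σ v0 0 = v0 := rfl

lemma outcomeAux_fst (A : Arena V n) (σ : Fin n → A.Strategy) (v0 : V) (t : ℕ) :
    (outcomeAux A σ v0 t).1 = pref (outcome A σ v0) t := by
  induction t with
  | zero => simp [Arena.outcomeAux, Arena.pref]
  | succ t ih =>
      rw [pref_succ]
      show (outcomeAux A σ v0 t).1 ++ [(outcomeAux A σ v0 t).2] = _
      rw [ih]; rfl

lemma outcome_succ (A : Arena V n) (σ : Fin n → A.Strategy) (v0 : V) (t : ℕ) :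
    outcome A σ v0 (t + 1) =
      (σ (A.owner (outcome A σ v0 t))).next (pref (outcome A σ v0) t)
        (outcome A σ v0 t) := by
  show (outcomeAux A σ v0 (t+1)).2 = _
  rw [show (outcomeAux A σ v0 (t+1)).2
      = (σ (A.owner (outcomeAux A σ v0 t).2)).next (outcomeAux A σ v0 t).1
          (outcomeAux A σ v0 t).2 from rfl, outcomeAux_fst]
  rfl

lemma outcome_isPlay (A : Arena V n) (σ : Fin n → A.Strategy) (v0 : V) :
    A.IsPlay (outcome A σ v0) := by
  intro j
  rw [outcome_succ]
  exact (σ _).valid _ _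

/-! ### Attractors -/

section Attractor

variable (A : Arena V n) (i : Fin n) (Ti : Set V)

/-- One step of the attractor construction for the coalition against player `i`,
with target `Ti`. -/
def attrStep (Y : Set V) : Set V :=
  Ti ∪ {v | A.owner v ≠ i ∧ ∃ w, A.E v w ∧ w ∈ Y} ∪
    {v | A.owner v = i ∧ ∀ w, A.E v w → w ∈ Y}

lemma attrStep_mono {Y Z : Set V} (h : Y ⊆ Z) : attrStep A i Ti Y ⊆ attrStep A i Ti Z := by
  intro v hv
  rcases hv with (hv | hv) | hv
  · exact Or.inl (Or.inl hv)
  · exact Or.inl (Or.inr ⟨hv.1, hv.2.imp fun w hw => ⟨hw.1, h hw.2⟩⟩)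
  · exact Or.inr ⟨hv.1, fun w hw => h (hv.2 w hw)⟩

/-- Ordinal-indexed approximations of the attractor. -/
noncomputable def attrApprox : Ordinal.{0} → Set V :=
  fun o => attrStep A i Ti (⋃ o' : {x : Ordinal.{0} // x < o}, attrApprox o'.1)
  termination_by o => o
  decreasing_by exact o'.2

lemma attrApprox_eq (o : Ordinal.{0}) :
    attrApprox A i Ti o = attrStep A i Ti (⋃ o' : {x : Ordinal.{0} // x < o}, attrApprox A i Ti o'.1) := by
  rw [attrApprox]

/-- The attractor of `Ti` for the coalition against `i`. -/
def Attr : Set V := {v | ∃ o, v ∈ attrApprox A i Ti o}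

lemma target_subset_attrApprox (o : Ordinal) : Ti ⊆ attrApprox A i Ti o := by
  rw [attrApprox_eq]; intro v hv; exact Or.inl (Or.inl hv)

lemma target_subset_attr : Ti ⊆ Attr A i Ti := fun v hv => ⟨0, target_subset_attrApprox A i Ti 0 hv⟩

/-- Rank of a vertex in the attractor. -/
noncomputable def attrRank (v : V) : Ordinal.{0} := sInf {o : Ordinal.{0} | v ∈ attrApprox A i Ti o}

lemma mem_attrApprox_rank {v : V} (hv : v ∈ Attr A i Ti) :
    v ∈ attrApprox A i Ti (attrRank A i Ti v) :=
  csInf_mem hv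

lemma attrRank_le {v : V} {o : Ordinal.{0}} (h : v ∈ attrApprox A i Ti o) :
    attrRank A i Ti v ≤ o := csInf_le' h

/-- Closure: a coalition vertex with a successor in the attractor is in it. -/
lemma attr_closed_coalition {v w : V} (hown : A.owner v ≠ i) (he : A.E v w)
    (hw : w ∈ Attr A i Ti) : v ∈ Attr A i Ti := by
  obtain ⟨o, ho⟩ := hw
  refine ⟨o + 1, ?_⟩
  rw [attrApprox_eq]
  exact Or.inl (Or.inr ⟨hown, w, he, Set.mem_iUnion.2 ⟨⟨o, lt_add_one o⟩, ho⟩⟩)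

/-- Closure: an avoider vertex all of whose successors lie in the attractor is in it. -/
lemma attr_closed_avoider {v : V} (hown : A.owner v = i)
    (h : ∀ w, A.E v w → w ∈ Attr A i Ti) : v ∈ Attr A i Ti := by
  classical
  set f : {w // A.E v w} → Ordinal.{0} := fun w => attrRank A i Ti w.1 + 1 with hf
  have hbdd : BddAbove (Set.range f) := Ordinal.bddAbove_range f
  set o : Ordinal.{0} := iSup f with ho
  refine ⟨o + 1, ?_⟩
  rw [attrApprox_eq]
  refine Or.inr ⟨hown, fun w hw => ?_⟩
  have hmem := mem_attrApprox_rank A i Ti (h w hw)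
  refine Set.mem_iUnion.2 ⟨⟨attrRank A i Ti w, ?_⟩, hmem⟩
  have : f ⟨w, hw⟩ ≤ o := le_ciSup hbdd ⟨w, hw⟩
  calc attrRank A i Ti w < attrRank A i Ti w + 1 := lt_add_one _
    _ ≤ o := this
    _ < o + 1 := lt_add_one o

/-- Trap property: from outside the attractor, a coalition vertex has no successor inside. -/
lemma attr_out_coalition {v : V} (hv : v ∉ Attr A i Ti) (hown : A.owner v ≠ i) :
    ∀ w, A.E v w → w ∉ Attr A i Ti := by
  intro w he hw
  exact hv (attr_closed_coalition A i Ti hown he hw)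

lemma attr_out_avoider {v : V} (hv : v ∉ Attr A i Ti) (hown : A.owner v = i) :
    ∃ w, A.E v w ∧ w ∉ Attr A i Ti := by
  by_contra h
  push_neg at h
  exact hv (attr_closed_avoider A i Ti hown fun w hw => h w hw)

lemma attr_out_target {v : V} (hv : v ∉ Attr A i Ti) : v ∉ Ti :=
  fun h => hv (target_subset_attr A i Ti h)

/-- From an avoider vertex in the attractor outside the target, every successor is in the
attractor, with smaller rank. -/
lemma attr_avoider_succ {v : V} (hv : v ∈ Attr A i Ti) (hT : v ∉ Ti) (hown : A.owner v = i) :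
    ∀ w, A.E v w → w ∈ Attr A i Ti ∧ attrRank A i Ti w < attrRank A i Ti v := by
  intro w hw
  have hmem := mem_attrApprox_rank A i Ti hv
  rw [attrApprox_eq] at hmem
  rcases hmem with (h | h) | h
  · exact absurd h hT
  · exact absurd h.1 (by simp [hown])
  · have := h.2 w hw
    rw [Set.mem_iUnion] at this
    obtain ⟨⟨o', ho'⟩, hmem'⟩ := this
    exact ⟨⟨o', hmem'⟩, lt_of_le_of_lt (attrRank_le A i Ti hmem') ho'⟩

/-- A coalition vertex in the attractor outside the target has a successor with smaller rank. -/
lemma attr_coalition_succ {v : V} (hv : v ∈ Attr A i Ti) (hT : v ∉ Ti) (hown : A.owner v ≠ i) :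
    ∃ w, A.E v w ∧ w ∈ Attr A i Ti ∧ attrRank A i Ti w < attrRank A i Ti v := by
  have hmem := mem_attrApprox_rank A i Ti hv
  rw [attrApprox_eq] at hmem
  rcases hmem with (h | h) | h
  · exact absurd h hT
  · obtain ⟨_, w, he, hw⟩ := h
    rw [Set.mem_iUnion] at hw
    obtain ⟨⟨o', ho'⟩, hmem'⟩ := hw
    exact ⟨w, he, ⟨o', hmem'⟩, lt_of_le_of_lt (attrRank_le A i Ti hmem') ho'⟩
  · exact absurd h.1 hown

/-- Memoryless punishing (attractor) strategy choice. -/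
noncomputable def aFun (v : V) : V :=
  if h : v ∈ Attr A i Ti ∧ v ∉ Ti ∧ A.owner v ≠ i then
    Classical.choose (attr_coalition_succ A i Ti h.1 h.2.1 h.2.2)
  else anySucc A v

lemma aFun_valid (v : V) : A.E v (aFun A i Ti v) := by
  unfold aFun
  split
  · next h => exact (Classical.choose_spec (attr_coalition_succ A i Ti h.1 h.2.1 h.2.2)).1
  · exact anySucc_spec A v

lemma aFun_spec {v : V} (hv : v ∈ Attr A i Ti) (hT : v ∉ Ti) (hown : A.owner v ≠ i) :
    aFun A i Ti v ∈ Attr A i Ti ∧ attrRank A i Ti (aFun A i Ti v) < attrRank A i Ti v := by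
  have h : v ∈ Attr A i Ti ∧ v ∉ Ti ∧ A.owner v ≠ i := ⟨hv, hT, hown⟩
  rw [aFun, dif_pos h]
  exact (Classical.choose_spec (attr_coalition_succ A i Ti h.1 h.2.1 h.2.2)).2

/-- Forcing lemma: along a play that starts in the attractor and in which every
coalition move follows `aFun`, the target is eventually reached. -/
lemma attr_forcing (ρ : ℕ → V) (hplay : A.IsPlay ρ) (t0 : ℕ)
    (h0 : ρ t0 ∈ Attr A i Ti)
    (hcoal : ∀ t, t0 ≤ t → A.owner (ρ t) ≠ i → ρ (t + 1) = aFun A i Ti (ρ t)) :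
    ∃ t, t0 ≤ t ∧ ρ t ∈ Ti := by
  by_contra hno
  push_neg at hno
  -- show by wf induction on rank that this is impossible
  have key : ∀ o : Ordinal.{0}, ∀ t, t0 ≤ t → ρ t ∈ Attr A i Ti → attrRank A i Ti (ρ t) = o → False := by
    intro o
    induction o using Ordinal.induction with
    | h o IH =>
      intro t ht hmem hrank
      have hT : ρ t ∉ Ti := hno t ht
      by_cases hown : A.owner (ρ t) = i
      · obtain ⟨hw, hlt⟩ := attr_avoider_succ A i Ti hmem hT hown (ρ (t+1)) (hplay t)
        exact IH _ (hrank ▸ hlt) (t+1) (le_trans ht (Nat.le_succ t)) hw rfl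
      · have hstep := hcoal t ht hown
        obtain ⟨hw, hlt⟩ := aFun_spec A i Ti hmem hT hown
        rw [← hstep] at hw hlt
        exact IH _ (hrank ▸ hlt) (t+1) (le_trans ht (Nat.le_succ t)) hw rfl
  exact key _ t0 le_rfl h0 rfl

end Attractor

/-! ### Main construction -/

/-- Bundled context: a safety game with a distinguished initial vertex and profile. -/
structure GameCtx (V : Type) (n : ℕ) where
  A : Arena V n
  T : Fin n → Set V
  v0 : V
  sig : Fin n → A.Strategy

namespace GameCtx

variable {V : Type} {n : ℕ} (C : GameCtx V n)

/-- The equilibrium play. -/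
noncomputable def piE : ℕ → V := outcome C.A C.sig C.v0

/-- Safe players. -/
def Ssafe : Set (Fin n) := satSafe C.T C.piE

/-- Doomed players. -/
def Dset : Set (Fin n) := C.Ssafeᶜ

/-- Union of the targets of the safe players. -/
def Bset : Set V := {v | ∃ j, j ∈ C.Ssafe ∧ v ∈ C.T j}

/-- Vertices from which there is a `B`-avoiding play. -/
def Xset : Set V := {v | ∃ ρ, C.A.IsPlay ρ ∧ ρ 0 = v ∧ ∀ t, ρ t ∉ C.Bset}

lemma piE_isPlay : C.A.IsPlay C.piE := outcome_isPlay C.A C.sig C.v0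

lemma piE_zero : C.piE 0 = C.v0 := rfl

lemma piE_avoids_B (t : ℕ) : C.piE t ∉ C.Bset := by
  rintro ⟨j, hj, hm⟩
  exact hj t hm

lemma piE_shift_mem_X (t0 : ℕ) : C.piE t0 ∈ C.Xset :=
  ⟨fun t => C.piE (t0 + t), fun j => C.piE_isPlay (t0 + j), by simp,
    fun t => C.piE_avoids_B (t0 + t)⟩

/-- Memoryless choice staying in `Xset`. -/
noncomputable def gfun (v : V) : V :=
  if h : v ∈ C.Xset then (Classical.choose h) 1 else anySucc C.A v

lemma gfun_valid (v : V) : C.A.E v (C.gfun v) := by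
  unfold gfun
  split
  · next h =>
      have hs := Classical.choose_spec h
      have := hs.1 0
      rwa [hs.2.1] at this
  · exact anySucc_spec C.A v

lemma Xset_not_B {v : V} (h : v ∈ C.Xset) : v ∉ C.Bset := by
  obtain ⟨ρ, _, h0, hB⟩ := h
  have := hB 0
  rwa [h0] at this

lemma gfun_mem_X {v : V} (h : v ∈ C.Xset) : C.gfun v ∈ C.Xset := by
  rw [gfun, dif_pos h]
  obtain ⟨hplay, h0, hB⟩ := Classical.choose_spec h
  exact ⟨fun t => (Classical.choose h) (1 + t), fun j => hplay (1 + j), by simp,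
    fun t => hB (1 + t)⟩

/-- First visit position of `T i` along the equilibrium play. -/
noncomputable def fvis (i : Fin n) : ℕ := sInf {j | C.piE j ∈ C.T i}

lemma fvis_mem {i : Fin n} (hi : i ∈ C.Dset) : C.piE (C.fvis i) ∈ C.T i := by
  have hne : {j | C.piE j ∈ C.T i}.Nonempty := by
    by_contra h
    rw [Set.not_nonempty_iff_eq_empty] at h
    refine hi (fun j hj => ?_)
    exact absurd hj (by intro hc; exact (Set.eq_empty_iff_forall_notMem.1 h j) hc)
  exact Nat.sInf_mem hne

lemma fvis_min {i : Fin n} {t : ℕ} (ht : t < C.fvis i) : C.piE t ∉ C.T i := by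
  intro hc
  have h2 : C.fvis i ≤ t := Nat.sInf_le hc
  omega

lemma fvis_mem_visitSet {i : Fin n} (hi : i ∈ C.Dset) :
    C.fvis i ∈ visitSet C.T C.piE :=
  ⟨i, ⟨_, C.fvis_mem hi⟩, rfl⟩

lemma visitSet_subset_range :
    visitSet C.T C.piE ⊆ Set.range (fun i => sInf {j | C.piE j ∈ C.T i}) := by
  rintro m ⟨i, _, rfl⟩
  exact ⟨i, rfl⟩

lemma visit_finite : (visitSet C.T C.piE \ {0}).Finite :=
  ((Set.finite_range _).subset C.visitSet_subset_range).subset Set.diff_subset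

/-- The nonzero first-visit positions, as a finset. -/
noncomputable def QS : Finset ℕ := C.visit_finite.toFinset

/-- Number of nonzero first-visit positions. -/
noncomputable def KK : ℕ := C.QS.card

lemma KK_eq_ncard : C.KK = (visitSet C.T C.piE \ {0}).ncard := by
  rw [KK, QS, Set.ncard_eq_toFinset_card _ C.visit_finite]

/-- Enumeration of the visit positions in increasing order: `q 0 = 0`, and `q (s+1)` is the
`s`-th nonzero visit position. -/
noncomputable def qpos : ℕ → ℕ := fun s =>
  match s with
  | 0 => 0
  | s + 1 => if h : s < C.KK then (C.QS.orderIsoOfFin rfl ⟨s, h⟩ : ℕ) else 0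

lemma qpos_zero : C.qpos 0 = 0 := rfl

lemma qpos_mem {s : ℕ} (hs : s < C.KK) :
    C.qpos (s + 1) ∈ visitSet C.T C.piE \ {0} := by
  have : C.qpos (s+1) ∈ C.QS := by
    rw [qpos, dif_pos hs]
    exact (C.QS.orderIsoOfFin rfl ⟨s, hs⟩).2
  rwa [QS, Set.Finite.mem_toFinset] at this

lemma qpos_pos {s : ℕ} (hs : s < C.KK) : 0 < C.qpos (s + 1) := by
  have := C.qpos_mem hs
  have h0 : C.qpos (s+1) ≠ 0 := by
    intro hc
    exact this.2 (by simp [hc])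
  omega

lemma qpos_strictMono {s s' : ℕ} (h : s < s') (hs' : s' ≤ C.KK) :
    C.qpos s < C.qpos s' := by
  match s, s' with
  | 0, s' + 1 => exact C.qpos_pos (by omega)
  | s + 1, s' + 1 =>
      have hs : s < C.KK := by omega
      have hs'2 : s' < C.KK := by omega
      rw [qpos, qpos]
      rw [dif_pos hs, dif_pos hs'2]
      have := (C.QS.orderIsoOfFin rfl).strictMono
        (show (⟨s, hs⟩ : Fin _) < ⟨s', hs'2⟩ from by simp only [Fin.mk_lt_mk]; omega)
      exact_mod_cast this

lemma qpos_mono {s s' : ℕ} (h : s ≤ s') (hs' : s' ≤ C.KK) : C.qpos s ≤ C.qpos s' := by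
  rcases eq_or_lt_of_le h with rfl | h
  · exact le_rfl
  · exact le_of_lt (C.qpos_strictMono h hs')

/-- Every nonzero first-visit position is some `q m` with `1 ≤ m ≤ K`. -/
lemma exists_qpos {F : ℕ} (hF : F ∈ visitSet C.T C.piE) (hF0 : F ≠ 0) :
    ∃ m, 1 ≤ m ∧ m ≤ C.KK ∧ C.qpos m = F := by
  have hFQ : F ∈ C.QS := by
    rw [QS, Set.Finite.mem_toFinset]
    exact ⟨hF, by simp [hF0]⟩
  obtain ⟨s, hs⟩ := (C.QS.orderIsoOfFin rfl).surjective ⟨F, hFQ⟩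
  have hsK : (s : ℕ) < C.KK := s.2
  refine ⟨s.1 + 1, by omega, by omega, ?_⟩
  rw [qpos, dif_pos hsK]
  have : (⟨(s : ℕ), hsK⟩ : Fin C.QS.card) = s := by ext; rfl
  rw [this, hs]

/-! ### Prefix of the equilibrium play lies in the attractors -/

/-- Memoryless choice staying outside the attractor. -/
noncomputable def sOut (i : Fin n) (v : V) : V :=
  if h : ∃ w, C.A.E v w ∧ w ∉ Attr C.A i (C.T i) then Classical.choose h else anySucc C.A v

lemma sOut_valid (i : Fin n) (v : V) : C.A.E v (C.sOut i v) := by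
  unfold sOut
  split
  · next h => exact (Classical.choose_spec h).1
  · exact anySucc_spec C.A v

lemma sOut_spec {i : Fin n} {v : V} (h : ∃ w, C.A.E v w ∧ w ∉ Attr C.A i (C.T i)) :
    C.sOut i v ∉ Attr C.A i (C.T i) := by
  rw [sOut, dif_pos h]
  exact (Classical.choose_spec h).2

lemma pref_congr {f g : ℕ → V} {t : ℕ} (h : ∀ x, x < t → f x = g x) :
    pref f t = pref g t := by
  unfold Arena.pref
  exact List.map_congr_left (fun x hx => h x (List.mem_range.1 hx))

/-- Using the Nash property of `C.sig`: every position of the equilibrium play up to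
the first visit of a doomed player's target lies in the coalition's attractor. -/
lemma prefix_attr (hNE : C.A.IsNEObj (fun i => SafeObj (C.T i)) C.sig C.v0)
    {i : Fin n} (hi : i ∈ C.Dset) {pos : ℕ} (hpos : pos ≤ C.fvis i) :
    C.piE pos ∈ Attr C.A i (C.T i) := by
  by_contra hout
  have hposf : pos < C.fvis i := by
    rcases eq_or_lt_of_le hpos with rfl | h
    · exact absurd (target_subset_attr C.A i (C.T i) (C.fvis_mem hi)) hout
    · exact h
  -- deviating strategy
  set τ : C.A.Strategy := ⟨fun h v =>
      if hc : h.length < pos ∧ v = C.piE h.length then C.piE (h.length + 1) else C.sOut i v,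
    by
      intro h v
      split
      · next hc => rw [hc.2]; exact C.piE_isPlay h.length
      · exact C.sOut_valid i v⟩ with hτ
  set w : ℕ → V := outcome C.A (Function.update C.sig i τ) C.v0 with hw
  have hwplay : C.A.IsPlay w := outcome_isPlay _ _ _
  have claim1 : ∀ t, t ≤ pos → w t = C.piE t := by
    intro t
    induction t using Nat.strong_induction_on with
    | _ t IH =>
      match t with
      | 0 => intro _; rfl
      | t + 1 =>
          intro ht
          have hwt : w t = C.piE t := IH t (by omega) (by omega)
          have hpref : pref w t = pref C.piE t :=
            pref_congr (fun x hx => IH x (by omega) (by omega))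
          have hstep : w (t+1) =
              (Function.update C.sig i τ (C.A.owner (w t))).next (pref w t) (w t) :=
            outcome_succ _ _ _ _
          by_cases hown : C.A.owner (w t) = i
          · rw [hstep, hown, Function.update_self, hτ]
            dsimp only
            rw [dif_pos (by
              constructor
              · rw [pref_length]; omega
              · rw [pref_length, hwt])]
            rw [pref_length]
          · rw [hstep, Function.update_of_ne hown, hpref, hwt]
            exact (outcome_succ C.A C.sig C.v0 t).symm
  have claim2 : ∀ u, w (pos + u) ∉ Attr C.A i (C.T i) := by
    intro u
    induction u with
    | zero => rw [Nat.add_zero, claim1 pos le_rfl]; exact hout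
    | succ u IH =>
        have hv : w (pos + u) ∉ Attr C.A i (C.T i) := IH
        have hnext : w (pos + u + 1) = w (pos + (u+1)) := by ring_nf
        by_cases hown : C.A.owner (w (pos + u)) = i
        · have hstep : w (pos + u + 1) =
              (Function.update C.sig i τ (C.A.owner (w (pos+u)))).next (pref w (pos+u)) (w (pos+u)) :=
            outcome_succ _ _ _ _
          rw [hown, Function.update_self, hτ] at hstep
          dsimp only at hstep
          rw [dif_neg (by
            rw [pref_length]
            rintro ⟨h1, -⟩
            omega)] at hstep
          rw [← hnext, hstep]
          exact C.sOut_spec (attr_out_avoider C.A i (C.T i) hv hown)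
        · rw [← hnext]
          exact attr_out_coalition C.A i (C.T i) hv hown _ (hwplay (pos+u))
  have hsafe : ∀ t, w t ∉ C.T i := by
    intro t
    rcases le_or_gt t pos with h | h
    · rw [claim1 t h]
      exact C.fvis_min (by omega)
    · have := claim2 (t - pos)
      rw [show pos + (t - pos) = t from by omega] at this
      exact fun hc => this (target_subset_attr C.A i (C.T i) hc)
  exact hi (hNE i τ hsafe)

/-! ### Simple minimal paths -/

structure TraceData (A : Arena V n) (y z : V) (R : Set V) : Type where
  L : ℕ
  x : ℕ → V
  hx0 : x 0 = y
  hxL : x L = z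
  hL : 1 ≤ L
  hedge : ∀ m, m < L → A.E (x m) (x (m + 1))
  hmem : ∀ m, m ≤ L → x m ∈ R
  hinj : ∀ a b, a ≤ L → b ≤ L → x a = x b → a = b

lemma exists_traceData {A : Arena V n} {R : Set V} {y z : V} (hyz : y ≠ z)
    (hwalk : ∃ N, ∃ w : ℕ → V, w 0 = y ∧ w N = z ∧ (∀ m, m < N → A.E (w m) (w (m+1))) ∧
      (∀ m, m ≤ N → w m ∈ R)) :
    Nonempty (TraceData A y z R) := by
  classical
  set P : ℕ → Prop := fun l => ∃ w : ℕ → V, w 0 = y ∧ w l = z ∧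
      (∀ m, m < l → A.E (w m) (w (m+1))) ∧ (∀ m, m ≤ l → w m ∈ R) with hP
  have hex : ∃ l, P l := by
    obtain ⟨N, w, h⟩ := hwalk
    exact ⟨N, w, h⟩
  set L := Nat.find hex with hLdef
  obtain ⟨w, hw0, hwL, hwe, hwm⟩ := Nat.find_spec hex
  rw [← hLdef] at hwL hwe hwm
  have hL1 : 1 ≤ L := by
    rcases Nat.eq_zero_or_pos L with h0 | h
    · exfalso; apply hyz; rw [← hw0, ← hwL, h0]
    · exact h
  refine ⟨⟨L, w, hw0, hwL, hL1, hwe, hwm, ?_⟩⟩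
  intro a b ha hb hab
  by_contra hne
  -- wlog a < b
  wlog hlt : a < b generalizing a b
  · exact this b a hb ha hab.symm (Ne.symm hne) (by omega)
  -- splice out the cycle
  have hPshort : P (L - (b - a)) := by
    refine ⟨fun m => if m < a then w m else w (m + (b - a)), ?_, ?_, ?_, ?_⟩
    · dsimp only
      by_cases h : 0 < a
      · rw [if_pos h]; exact hw0
      · rw [if_neg (by omega), show 0 + (b - a) = b from by omega, ← hab,
          show a = 0 from by omega]
        exact hw0
    · dsimp only
      have hge : ¬ (L - (b - a) < a) := by omega
      rw [if_neg hge, show L - (b - a) + (b - a) = L from by omega]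
      exact hwL
    · intro m hm
      dsimp only
      by_cases h1 : m + 1 < a
      · rw [if_pos (by omega), if_pos h1]
        exact hwe m (by omega)
      · by_cases h2 : m < a
        · -- m + 1 = a
          have hma : m + 1 = a := by omega
          rw [if_pos h2, if_neg (by omega),
            show m + 1 + (b - a) = b from by omega, ← hab, ← hma]
          exact hwe m (by omega)
        · rw [if_neg h2, if_neg (by omega),
            show m + 1 + (b - a) = m + (b - a) + 1 from by omega]
          exact hwe (m + (b - a)) (by omega)
    · intro m hm
      dsimp only
      by_cases h2 : m < a
      · rw [if_pos h2]; exact hwm m (by omega)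
      · rw [if_neg h2]; exact hwm (m + (b - a)) (by omega)
  have := Nat.find_min hex (show L - (b - a) < L from by omega)
  exact this hPshort

/-! ### The traces between consecutive visit positions -/

/-- Vertices of the equilibrium play between two consecutive visit positions. -/
def Rreg (s : ℕ) : Set V := {v | ∃ pos, C.qpos s ≤ pos ∧ pos ≤ C.qpos (s+1) ∧ C.piE pos = v}

lemma visit_vertex {s : ℕ} (hs : s < C.KK) :
    ∃ i : Fin n, C.piE (C.qpos (s+1)) ∈ C.T i ∧ C.qpos (s+1) = sInf {j | C.piE j ∈ C.T i} := by
  have := C.qpos_mem hs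
  obtain ⟨i, hvis, heq⟩ := this.1
  refine ⟨i, ?_, heq⟩
  rw [heq]
  exact Nat.sInf_mem hvis

lemma trace_ends_ne {s : ℕ} (hs : s < C.KK) : C.piE (C.qpos s) ≠ C.piE (C.qpos (s+1)) := by
  obtain ⟨i, hmem, heq⟩ := C.visit_vertex hs
  intro hc
  have h1 : C.piE (C.qpos s) ∈ C.T i := by rw [hc]; exact hmem
  have h2 : sInf {j | C.piE j ∈ C.T i} ≤ C.qpos s := Nat.sInf_le h1
  have h3 : C.qpos s < C.qpos (s+1) := C.qpos_strictMono (by omega) (by omega)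
  omega

lemma exists_trace {s : ℕ} (hs : s < C.KK) :
    Nonempty (TraceData C.A (C.piE (C.qpos s)) (C.piE (C.qpos (s+1))) (C.Rreg s)) := by
  refine exists_traceData (C.trace_ends_ne hs) ?_
  have hmono : C.qpos s ≤ C.qpos (s+1) := C.qpos_mono (by omega) (by omega)
  refine ⟨C.qpos (s+1) - C.qpos s, fun m => C.piE (C.qpos s + m), rfl, ?_, ?_, ?_⟩
  · dsimp only
    rw [show C.qpos s + (C.qpos (s+1) - C.qpos s) = C.qpos (s+1) from by omega]
  · intro m _
    exact C.piE_isPlay (C.qpos s + m)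
  · intro m hm
    exact ⟨C.qpos s + m, by omega, by omega, rfl⟩

noncomputable def TDfun (s : ℕ) (hs : s < C.KK) :
    TraceData C.A (C.piE (C.qpos s)) (C.piE (C.qpos (s+1))) (C.Rreg s) :=
  (C.exists_trace hs).some

/-- Total length function of trace `s`. -/
noncomputable def Lfun (s : ℕ) : ℕ := if h : s < C.KK then (C.TDfun s h).L else 1

/-- Total vertex function of trace `s`. -/
noncomputable def xfun (s m : ℕ) : V := if h : s < C.KK then (C.TDfun s h).x m else C.v0

lemma xfun_zero {s : ℕ} (hs : s < C.KK) : C.xfun s 0 = C.piE (C.qpos s) := by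
  rw [xfun, dif_pos hs]; exact (C.TDfun s hs).hx0

lemma xfun_last {s : ℕ} (hs : s < C.KK) : C.xfun s (C.Lfun s) = C.piE (C.qpos (s+1)) := by
  rw [xfun, Lfun, dif_pos hs, dif_pos hs]; exact (C.TDfun s hs).hxL

lemma Lfun_pos (s : ℕ) : 1 ≤ C.Lfun s := by
  rw [Lfun]; split
  · next h => exact (C.TDfun s h).hL
  · exact le_rfl

lemma xfun_edge {s m : ℕ} (hs : s < C.KK) (hm : m < C.Lfun s) :
    C.A.E (C.xfun s m) (C.xfun s (m+1)) := by
  rw [Lfun, dif_pos hs] at hm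
  rw [xfun, xfun, dif_pos hs, dif_pos hs]
  exact (C.TDfun s hs).hedge m hm

lemma xfun_mem {s m : ℕ} (hs : s < C.KK) (hm : m ≤ C.Lfun s) : C.xfun s m ∈ C.Rreg s := by
  rw [Lfun, dif_pos hs] at hm
  rw [xfun, dif_pos hs]
  exact (C.TDfun s hs).hmem m hm

lemma xfun_inj {s a b : ℕ} (hs : s < C.KK) (ha : a ≤ C.Lfun s) (hb : b ≤ C.Lfun s)
    (hab : C.xfun s a = C.xfun s b) : a = b := by
  rw [Lfun, dif_pos hs] at ha hb
  rw [xfun, xfun, dif_pos hs, dif_pos hs] at hab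
  exact (C.TDfun s hs).hinj a b ha hb hab

/-! ### Backward edges and truncation -/

/-- Trace `s` has a backward edge strictly inside it. -/
def HasBack (s : ℕ) : Prop :=
  ∃ a b, a < C.Lfun s ∧ b ≤ a ∧ C.A.E (C.xfun s a) (C.xfun s b)

def habk : Prop := ∃ s, s < C.KK ∧ C.HasBack s

/-- The number of traces actually used: up to the first trace with a backward edge. -/
noncomputable def rK : ℕ := if h : C.habk then Nat.find h else C.KK

lemma rK_le : C.rK ≤ C.KK := by
  rw [rK]; split
  · next h => exact le_of_lt (Nat.find_spec h).1
  · exact le_rfl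

lemma no_back {s : ℕ} (hs : s < C.rK) : ¬ C.HasBack s := by
  rw [rK] at hs
  split at hs
  · next h =>
      have hfs := (Nat.find_spec h).1
      exact fun hb => Nat.find_min h hs ⟨by omega, hb⟩
  · next h => exact fun hb => h ⟨s, hs, hb⟩

lemma rK_lt_of_habk (h : C.habk) : C.rK < C.KK := by
  rw [rK, dif_pos h]; exact (Nat.find_spec h).1

lemma hasBack_rK (h : C.habk) : C.HasBack C.rK := by
  rw [rK, dif_pos h]; exact (Nat.find_spec h).2

noncomputable def aStar : ℕ :=
  if h : C.habk then Classical.choose (C.hasBack_rK h) else 0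

noncomputable def bStar : ℕ :=
  if h : C.habk then Classical.choose (Classical.choose_spec (C.hasBack_rK h)) else 0

lemma star_spec (h : C.habk) :
    C.aStar < C.Lfun C.rK ∧ C.bStar ≤ C.aStar ∧
      C.A.E (C.xfun C.rK C.aStar) (C.xfun C.rK C.bStar) := by
  rw [aStar, bStar, dif_pos h, dif_pos h]
  exact Classical.choose_spec (Classical.choose_spec (C.hasBack_rK h))

/-! ### Trace-following and tail functions -/

/-- Successor along trace `s`. -/
noncomputable def trSucc (s : ℕ) (v : V) : V :=
  if h : ∃ m, m < C.Lfun s ∧ C.xfun s m = v ∧ C.A.E v (C.xfun s (m+1)) then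
    C.xfun s (Classical.choose h + 1)
  else anySucc C.A v

lemma trSucc_valid (s : ℕ) (v : V) : C.A.E v (C.trSucc s v) := by
  rw [trSucc]
  split
  · next h =>
      exact (Classical.choose_spec h).2.2
  · exact anySucc_spec C.A v

lemma trSucc_eq {s p : ℕ} (hs : s < C.KK) (hp : p < C.Lfun s) :
    C.trSucc s (C.xfun s p) = C.xfun s (p + 1) := by
  have hex : ∃ m, m < C.Lfun s ∧ C.xfun s m = C.xfun s p ∧
      C.A.E (C.xfun s p) (C.xfun s (m+1)) := by
    refine ⟨p, hp, rfl, C.xfun_edge hs hp⟩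
  rw [trSucc, dif_pos hex]
  have hspec := Classical.choose_spec hex
  have : Classical.choose hex = p :=
    C.xfun_inj hs (by omega) (by omega) hspec.2.1
  rw [this]

/-- Successor along the final loop (truncated case). -/
noncomputable def lsucc (v : V) : V :=
  if C.habk ∧ v = C.xfun C.rK C.aStar then C.xfun C.rK C.bStar else C.trSucc C.rK v

lemma lsucc_valid (v : V) : C.A.E v (C.lsucc v) := by
  rw [lsucc]
  split
  · next h =>
      rw [h.2]
      exact (C.star_spec h.1).2.2
  · exact C.trSucc_valid C.rK v

/-- Tail function after all traces have been played. -/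
noncomputable def tailF (v : V) : V := if C.habk then C.lsucc v else C.gfun v

lemma tailF_valid (v : V) : C.A.E v (C.tailF v) := by
  rw [tailF]
  split
  · exact C.lsucc_valid v
  · exact C.gfun_valid v

/-- Start vertex of the tail. -/
noncomputable def tailStart : V := C.piE (C.qpos C.rK)

/-- Invariant region of the tail. -/
noncomputable def tailSet : Set V :=
  if C.habk then {v | ∃ m2, m2 ≤ C.aStar ∧ C.xfun C.rK m2 = v} else C.Xset

lemma tailStart_mem : C.tailStart ∈ C.tailSet := by
  by_cases h : C.habk
  · rw [tailSet, if_pos h]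
    refine ⟨0, Nat.zero_le _, ?_⟩
    rw [C.xfun_zero (C.rK_lt_of_habk h)]
    rfl
  · rw [tailSet, if_neg h]
    exact C.piE_shift_mem_X _

lemma tailF_closed {v : V} (hv : v ∈ C.tailSet) : C.tailF v ∈ C.tailSet := by
  by_cases h : C.habk
  · rw [tailSet, if_pos h] at hv ⊢
    rw [tailF, if_pos h]
    obtain ⟨m2, hm2, rfl⟩ := hv
    rw [lsucc]
    have hrK : C.rK < C.KK := C.rK_lt_of_habk h
    have hstar := C.star_spec h
    by_cases hc : C.xfun C.rK m2 = C.xfun C.rK C.aStar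
    · rw [if_pos ⟨h, hc⟩]
      exact ⟨C.bStar, hstar.2.1, rfl⟩
    · rw [if_neg (by tauto)]
      have hm2a : m2 < C.aStar := by
        rcases eq_or_lt_of_le hm2 with rfl | hlt
        · exact absurd rfl hc
        · exact hlt
      rw [C.trSucc_eq hrK (by omega)]
      exact ⟨m2 + 1, by omega, rfl⟩
  · rw [tailSet, if_neg h] at hv ⊢
    rw [tailF, if_neg h]
    exact C.gfun_mem_X hv

lemma tailSet_not_B {v : V} (hv : v ∈ C.tailSet) : v ∉ C.Bset := by
  by_cases h : C.habk
  · rw [tailSet, if_pos h] at hv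
    obtain ⟨m2, hm2, rfl⟩ := hv
    have hrK : C.rK < C.KK := C.rK_lt_of_habk h
    have := C.xfun_mem hrK (le_trans hm2 (le_of_lt (C.star_spec h).1))
    obtain ⟨pos, _, _, hpos⟩ := this
    rw [← hpos]
    exact C.piE_avoids_B pos
  · rw [tailSet, if_neg h] at hv
    exact C.Xset_not_B hv

/-! ### The finite-memory machine -/

/-- The second memory component: a doomed player (punish target / last owner). -/
abbrev DD : Type := {i : Fin n // i ∈ C.Dset}

instance DD_finite : Finite C.DD := Subtype.finite

/-- Memory states. -/
abbrev MSt : Type := Fin (C.rK + 2) × C.DD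

instance MSt_finite : Finite C.MSt := by
  unfold MSt; infer_instance

noncomputable def d0 (hD : C.Dset.Nonempty) : C.DD := ⟨hD.some, hD.some_mem⟩

/-- Vertex set of trace `s`. -/
def traceSet (s : ℕ) : Set V := {v | ∃ m, m ≤ C.Lfun s ∧ C.xfun s m = v}

/-- Last vertex of trace `s`. -/
noncomputable def endV (s : ℕ) : V := C.xfun s (C.Lfun s)

lemma endV_mem_traceSet (s : ℕ) : C.endV s ∈ C.traceSet s := ⟨C.Lfun s, le_rfl, rfl⟩

lemma xfun_mem_traceSet {s m : ℕ} (hm : m ≤ C.Lfun s) : C.xfun s m ∈ C.traceSet s :=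
  ⟨m, hm, rfl⟩

lemma xfun_ne_endV {s p : ℕ} (hs : s < C.KK) (hp : p < C.Lfun s) :
    C.xfun s p ≠ C.endV s := by
  intro hc
  have := C.xfun_inj hs (by omega) le_rfl hc
  omega

/-- Update of the stored owner. -/
noncomputable def dOwn (v : V) (o : C.DD) : C.DD :=
  if h : C.A.owner v ∈ C.Dset then ⟨C.A.owner v, h⟩ else o

lemma dOwn_eq {v : V} (o : C.DD) (h : C.A.owner v ∈ C.Dset) :
    C.dOwn v o = ⟨C.A.owner v, h⟩ := dif_pos h

/-- Memory update function. -/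
noncomputable def mUp : C.MSt → V → C.MSt := fun m v =>
  if hp : (m.1 : ℕ) < C.rK then
    if v = C.endV (m.1 : ℕ) then (⟨(m.1 : ℕ) + 1, by omega⟩, C.dOwn v m.2)
    else if v ∈ C.traceSet (m.1 : ℕ) then (m.1, C.dOwn v m.2)
    else (⟨C.rK + 1, by omega⟩, m.2)
  else m

/-- Next-move function. -/
noncomputable def mNxt : C.MSt → V → V := fun m v =>
  if hp : (m.1 : ℕ) < C.rK then
    if v = C.endV (m.1 : ℕ) then
      (if (m.1 : ℕ) + 1 < C.rK then C.trSucc ((m.1 : ℕ) + 1) v else C.tailF v)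
    else if v ∈ C.traceSet (m.1 : ℕ) then C.trSucc (m.1 : ℕ) v
    else aFun C.A m.2.1 (C.T m.2.1) v
  else if (m.1 : ℕ) = C.rK then C.tailF v
  else aFun C.A m.2.1 (C.T m.2.1) v

lemma mNxt_valid (m : C.MSt) (v : V) : C.A.E v (C.mNxt m v) := by
  rw [mNxt]
  split
  · split
    · split
      · exact C.trSucc_valid _ v
      · exact C.tailF_valid v
    · split
      · exact C.trSucc_valid _ v
      · exact aFun_valid C.A _ _ v
  · split
    · exact C.tailF_valid v
    · exact aFun_valid C.A _ _ v

noncomputable def initSt (hD : C.Dset.Nonempty) : C.MSt := (⟨0, by omega⟩, C.d0 hD)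

/-- The Mealy machine. -/
noncomputable def mealy (hD : C.Dset.Nonempty) : Mealy C.A C.MSt :=
  ⟨C.initSt hD, C.mUp, C.mNxt, C.mNxt_valid⟩

/-- The shared finite-memory strategy. -/
noncomputable def sigStar (hD : C.Dset.Nonempty) : C.A.Strategy :=
  ⟨fun h v => C.mNxt (h.foldl C.mUp (C.initSt hD)) v,
    fun h v => C.mNxt_valid _ v⟩

lemma sigStar_induced (hD : C.Dset.Nonempty) : InducedBy (C.sigStar hD) (C.mealy hD) :=
  fun _ _ => rfl

/-- The new strategy profile: everybody plays `sigStar`. -/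
noncomputable def sigFin (hD : C.Dset.Nonempty) : Fin n → C.A.Strategy := fun _ => C.sigStar hD

/-- Memory state along a play. -/
noncomputable def stF (hD : C.Dset.Nonempty) (ρ : ℕ → V) (t : ℕ) : C.MSt :=
  (pref ρ t).foldl C.mUp (C.initSt hD)

lemma stF_zero (hD : C.Dset.Nonempty) (ρ : ℕ → V) : C.stF hD ρ 0 = C.initSt hD := by
  simp [stF, Arena.pref]

lemma stF_succ (hD : C.Dset.Nonempty) (ρ : ℕ → V) (t : ℕ) :
    C.stF hD ρ (t + 1) = C.mUp (C.stF hD ρ t) (ρ t) := by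
  rw [stF, pref_succ, List.foldl_append]
  rfl

/-- Any play `ρ` in which the move at time `t` is made by `sigStar` continues with
`mNxt` of the current machine state. -/
lemma sigStar_move (hD : C.Dset.Nonempty) (ρ : ℕ → V) (t : ℕ)
    (h : ρ (t+1) = (C.sigStar hD).next (pref ρ t) (ρ t)) :
    ρ (t+1) = C.mNxt (C.stF hD ρ t) (ρ t) := h

/-- Offsets of the traces in the global script. -/
noncomputable def off (s : ℕ) : ℕ := (Finset.range s).sum C.Lfun

lemma off_zero : C.off 0 = 0 := by simp [off]

lemma off_succ (s : ℕ) : C.off (s + 1) = C.off s + C.Lfun s := by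
  rw [off, off, Finset.sum_range_succ]

lemma off_le_succ (s : ℕ) : C.off s + 1 ≤ C.off (s + 1) := by
  have := C.Lfun_pos s
  rw [C.off_succ]
  omega

lemma off_mono {s s' : ℕ} (h : s ≤ s') : C.off s ≤ C.off s' := by
  induction s' with
  | zero =>
      have h0 : s = 0 := by omega
      subst h0
      exact le_rfl
  | succ s' ih =>
      rcases Nat.lt_or_ge s (s'+1) with h2 | h2
      · have h3 := ih (by omega)
        have h4 := C.off_le_succ s'
        omega
      · have h0 : s = s' + 1 := by omega
        subst h0
        exact le_rfl

/-- The outcome of the new profile. -/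
noncomputable def outF (hD : C.Dset.Nonempty) : ℕ → V := outcome C.A (C.sigFin hD) C.v0

lemma endV_eq (s : ℕ) (hs : s < C.KK) : C.endV s = C.piE (C.qpos (s+1)) := C.xfun_last hs

lemma tailStart_eq_endV (h : 1 ≤ C.rK) : C.tailStart = C.endV (C.rK - 1) := by
  rw [tailStart, C.endV_eq (C.rK - 1) (by have := C.rK_le; omega),
    show C.rK - 1 + 1 = C.rK from by omega]

lemma xfun_start_succ {s : ℕ} (hs : s + 1 < C.KK) : C.endV s = C.xfun (s+1) 0 := by
  rw [C.endV_eq s (by omega), C.xfun_zero hs]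


/-! Branch computation lemmas for the machine. -/

lemma mUp_int {s : ℕ} (hs : s < C.rK) (h2 : s < C.rK + 2) (o : C.DD) {v : V}
    (hne : v ≠ C.endV s) (hmem : v ∈ C.traceSet s) :
    C.mUp ((⟨s, h2⟩ : Fin (C.rK + 2)), o) v = ((⟨s, h2⟩ : Fin (C.rK + 2)), C.dOwn v o) := by
  show (if hp : s < C.rK then _ else _) = _
  rw [dif_pos hs]
  show (if v = C.endV s then _ else _) = _
  rw [if_neg hne]
  show (if v ∈ C.traceSet s then _ else _) = _
  rw [if_pos hmem]

lemma mUp_end {s : ℕ} (hs : s < C.rK) (h2 : s < C.rK + 2) (h3 : s + 1 < C.rK + 2) (o : C.DD) :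
    C.mUp ((⟨s, h2⟩ : Fin (C.rK + 2)), o) (C.endV s) =
      ((⟨s + 1, h3⟩ : Fin (C.rK + 2)), C.dOwn (C.endV s) o) := by
  show (if hp : s < C.rK then _ else _) = _
  rw [dif_pos hs]
  show (if C.endV s = C.endV s then _ else _) = _
  rw [if_pos rfl]

lemma mUp_off {s : ℕ} (hs : s < C.rK) (h2 : s < C.rK + 2) (h3 : C.rK + 1 < C.rK + 2)
    (o : C.DD) {v : V} (hne : v ≠ C.endV s) (hmem : v ∉ C.traceSet s) :
    C.mUp ((⟨s, h2⟩ : Fin (C.rK + 2)), o) v = ((⟨C.rK + 1, h3⟩ : Fin (C.rK + 2)), o) := by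
  show (if hp : s < C.rK then _ else _) = _
  rw [dif_pos hs]
  show (if v = C.endV s then _ else _) = _
  rw [if_neg hne]
  show (if v ∈ C.traceSet s then _ else _) = _
  rw [if_neg hmem]

lemma mUp_frozen {s : ℕ} (hs : ¬ s < C.rK) (h2 : s < C.rK + 2) (o : C.DD) (v : V) :
    C.mUp ((⟨s, h2⟩ : Fin (C.rK + 2)), o) v = ((⟨s, h2⟩ : Fin (C.rK + 2)), o) := by
  show (if hp : s < C.rK then _ else _) = _
  rw [dif_neg hs]

lemma mNxt_int {s : ℕ} (hs : s < C.rK) (h2 : s < C.rK + 2) (o : C.DD) {v : V}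
    (hne : v ≠ C.endV s) (hmem : v ∈ C.traceSet s) :
    C.mNxt ((⟨s, h2⟩ : Fin (C.rK + 2)), o) v = C.trSucc s v := by
  show (if hp : s < C.rK then _ else _) = _
  rw [dif_pos hs]
  show (if v = C.endV s then _ else _) = _
  rw [if_neg hne]
  show (if v ∈ C.traceSet s then _ else _) = _
  rw [if_pos hmem]

lemma mNxt_end {s : ℕ} (hs : s < C.rK) (h2 : s < C.rK + 2) (o : C.DD) :
    C.mNxt ((⟨s, h2⟩ : Fin (C.rK + 2)), o) (C.endV s) =
      (if s + 1 < C.rK then C.trSucc (s + 1) (C.endV s) else C.tailF (C.endV s)) := by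
  show (if hp : s < C.rK then _ else _) = _
  rw [dif_pos hs]
  show (if C.endV s = C.endV s then _ else _) = _
  rw [if_pos rfl]

lemma mNxt_off {s : ℕ} (hs : s < C.rK) (h2 : s < C.rK + 2) (o : C.DD) {v : V}
    (hne : v ≠ C.endV s) (hmem : v ∉ C.traceSet s) :
    C.mNxt ((⟨s, h2⟩ : Fin (C.rK + 2)), o) v = aFun C.A o.1 (C.T o.1) v := by
  show (if hp : s < C.rK then _ else _) = _
  rw [dif_pos hs]
  show (if v = C.endV s then _ else _) = _
  rw [if_neg hne]
  show (if v ∈ C.traceSet s then _ else _) = _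
  rw [if_neg hmem]

lemma mNxt_tail (h2 : C.rK < C.rK + 2) (o : C.DD) (v : V) :
    C.mNxt ((⟨C.rK, h2⟩ : Fin (C.rK + 2)), o) v = C.tailF v := by
  show (if hp : C.rK < C.rK then _ else _) = _
  rw [dif_neg (lt_irrefl _)]
  show (if C.rK = C.rK then _ else _) = _
  rw [if_pos rfl]

lemma mNxt_punish (h2 : C.rK + 1 < C.rK + 2) (o : C.DD) (v : V) :
    C.mNxt ((⟨C.rK + 1, h2⟩ : Fin (C.rK + 2)), o) v = aFun C.A o.1 (C.T o.1) v := by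
  show (if hp : C.rK + 1 < C.rK then _ else _) = _
  rw [dif_neg (by omega)]
  show (if C.rK + 1 = C.rK then _ else _) = _
  rw [if_neg (by omega)]

/-- Configuration invariant for the outcome of the new profile. -/
lemma outF_spec (hD : C.Dset.Nonempty) (t : ℕ) :
    (∃ (s p : ℕ) (o : C.DD) (h2 : s < C.rK + 2), s < C.rK ∧ p ≤ C.Lfun s ∧ t = C.off s + p ∧
        C.stF hD (C.outF hD) t = ((⟨s, h2⟩ : Fin (C.rK + 2)), o) ∧ C.outF hD t = C.xfun s p)
    ∨ (∃ (o : C.DD) (h2 : C.rK < C.rK + 2), C.off C.rK ≤ t ∧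
        C.stF hD (C.outF hD) t = ((⟨C.rK, h2⟩ : Fin (C.rK + 2)), o) ∧
        C.outF hD t = C.tailF^[t - C.off C.rK] C.tailStart) := by
  induction t with
  | zero =>
      rcases Nat.eq_zero_or_pos C.rK with h0 | h1
      · right
        have hoff0 : C.off C.rK = 0 := by rw [h0, C.off_zero]
        refine ⟨C.d0 hD, by omega, by omega, ?_, ?_⟩
        · rw [C.stF_zero, initSt]
          congr 1
          exact Fin.ext h0.symm
        · rw [hoff0]
          show C.outF hD 0 = C.tailStart
          rw [tailStart, h0, qpos_zero]
          rfl
      · left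
        refine ⟨0, 0, C.d0 hD, by omega, h1, by omega, by rw [C.off_zero], ?_, ?_⟩
        · rw [C.stF_zero]; rfl
        · rw [C.xfun_zero (by have := C.rK_le; omega), qpos_zero]
          rfl
  | succ t ih =>
      have hmove : C.outF hD (t+1) = C.mNxt (C.stF hD (C.outF hD) t) (C.outF hD t) :=
        outcome_succ _ _ _ _
      rcases ih with ⟨s, p, o, h2, hs, hp, ht, hst, hout⟩ | ⟨o, h2, hge, hst, hout⟩
      · have hsK : s < C.KK := by have := C.rK_le; omega
        rcases Nat.lt_or_ge p (C.Lfun s) with hpL | hpL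
        · -- interior step
          left
          refine ⟨s, p + 1, C.dOwn (C.xfun s p) o, h2, hs, by omega, by omega, ?_, ?_⟩
          · rw [C.stF_succ, hst, hout,
              C.mUp_int hs h2 o (C.xfun_ne_endV hsK hpL) (C.xfun_mem_traceSet (by omega))]
          · rw [hmove, hst, hout,
              C.mNxt_int hs h2 o (C.xfun_ne_endV hsK hpL) (C.xfun_mem_traceSet (by omega))]
            exact C.trSucc_eq hsK hpL
        · -- at the end of trace s
          have hpe : p = C.Lfun s := by omega
          have hve : C.outF hD t = C.endV s := by rw [hout, hpe]; rfl
          rcases Nat.lt_or_ge (s+1) C.rK with hs1 | hs1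
          · -- advance to trace s+1
            left
            have hs1K : s + 1 < C.KK := by have := C.rK_le; omega
            refine ⟨s + 1, 1, C.dOwn (C.endV s) o, by omega, hs1, C.Lfun_pos (s+1), ?_, ?_, ?_⟩
            · have := C.off_succ s
              omega
            · rw [C.stF_succ, hst, hve, C.mUp_end hs h2 (by omega) o]
            · rw [hmove, hst, hve, C.mNxt_end hs h2 o, if_pos hs1, C.xfun_start_succ hs1K,
                C.trSucc_eq hs1K (by have := C.Lfun_pos (s+1); omega)]
          · -- advance to the tail (s+1 = rK)
            have hs1e : s + 1 = C.rK := by omega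
            right
            have hoff : C.off C.rK = t := by
              rw [← hs1e]
              have := C.off_succ s
              omega
            refine ⟨C.dOwn (C.endV s) o, by omega, by omega, ?_, ?_⟩
            · rw [C.stF_succ, hst, hve, C.mUp_end hs h2 (by omega) o]
              congr 1
              exact Fin.ext hs1e
            · rw [hmove, hst, hve, C.mNxt_end hs h2 o, if_neg (by omega)]
              have harg : t + 1 - C.off C.rK = 1 := by omega
              rw [harg]
              show C.tailF (C.endV s) = C.tailF^[1] C.tailStart
              rw [Function.iterate_one, C.tailStart_eq_endV (by omega)]
              congr 2
              omega
      · -- tail step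
        right
        refine ⟨o, h2, by omega, ?_, ?_⟩
        · rw [C.stF_succ, hst, C.mUp_frozen (lt_irrefl _) h2 o]
        · rw [hmove, hst, C.mNxt_tail h2 o, hout,
            show t + 1 - C.off C.rK = (t - C.off C.rK) + 1 from by omega,
            Function.iterate_succ_apply']

/-! ### Properties of the final outcome -/

lemma tail_iter_mem (u : ℕ) : C.tailF^[u] C.tailStart ∈ C.tailSet := by
  induction u with
  | zero => exact C.tailStart_mem
  | succ u ih =>
      rw [Function.iterate_succ_apply']
      exact C.tailF_closed ih

lemma outF_avoids_B (hD : C.Dset.Nonempty) (t : ℕ) : C.outF hD t ∉ C.Bset := by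
  rcases C.outF_spec hD t with ⟨s, p, o, h2, hs, hp, ht, hst, hout⟩ | ⟨o, h2, hge, hst, hout⟩
  · rw [hout]
    have hsK : s < C.KK := by have := C.rK_le; omega
    obtain ⟨pos, _, _, hpos⟩ := C.xfun_mem hsK hp
    rw [← hpos]
    exact C.piE_avoids_B pos
  · rw [hout]
    exact C.tailSet_not_B (C.tail_iter_mem _)

lemma ssafe_subset_final (hD : C.Dset.Nonempty) : C.Ssafe ⊆ satSafe C.T (C.outF hD) := by
  intro j hj t hT
  exact C.outF_avoids_B hD t ⟨j, hj, hT⟩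

lemma trace_mem_attr (hNE : C.A.IsNEObj (fun i => SafeObj (C.T i)) C.sig C.v0)
    {i : Fin n} (hiD : i ∈ C.Dset) {m s p : ℕ} (hm : m ≤ C.KK)
    (hqm : C.qpos m = C.fvis i) (hsm : s < m) (hp : p ≤ C.Lfun s) :
    C.xfun s p ∈ Attr C.A i (C.T i) := by
  have hsK : s < C.KK := by omega
  obtain ⟨pos, _, hposle, hpos⟩ := C.xfun_mem hsK hp
  have hle : pos ≤ C.fvis i := by
    have := C.qpos_mono (show s + 1 ≤ m from hsm) hm
    rw [hqm] at this
    omega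
  rw [← hpos]
  exact C.prefix_attr hNE hiD hle

/-! ### Deviations by a doomed player reach their target -/

lemma dev_reach (hNE : C.A.IsNEObj (fun i => SafeObj (C.T i)) C.sig C.v0)
    (hD : C.Dset.Nonempty) {i : Fin n} (hiD : i ∈ C.Dset) (τ : C.A.Strategy)
    {m : ℕ} (hm1 : 1 ≤ m) (hmr : m ≤ C.rK) (hqm : C.qpos m = C.fvis i) :
    ∃ t, outcome C.A (Function.update (C.sigFin hD) i τ) C.v0 t ∈ C.T i := by
  by_contra hno
  push_neg at hno
  set ρ : ℕ → V := outcome C.A (Function.update (C.sigFin hD) i τ) C.v0 with hρ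
  have hplay : C.A.IsPlay ρ := outcome_isPlay _ _ _
  have hedge : ∀ t, C.A.E (ρ t) (ρ (t+1)) := hplay
  have hcons : ∀ t, C.A.owner (ρ t) ≠ i → ρ (t+1) = C.mNxt (C.stF hD ρ t) (ρ t) := by
    intro t hown
    have h := outcome_succ C.A (Function.update (C.sigFin hD) i τ) C.v0 t
    rw [Function.update_of_ne hown] at h
    exact h
  have hKr := C.rK_le
  have hmK : m ≤ C.KK := by omega
  -- punishment helper
  have hpunish : ∀ t1, ρ (t1+1) ∈ Attr C.A i (C.T i) →
      C.stF hD ρ (t1+2) = ((⟨C.rK+1, by omega⟩ : Fin (C.rK+2)), (⟨i, hiD⟩ : C.DD)) →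
      (C.A.owner (ρ (t1+1)) ≠ i → ρ (t1+2) = aFun C.A i (C.T i) (ρ (t1+1))) → False := by
    intro t1 hw hst2 hmv1
    have habs : ∀ u, C.stF hD ρ (t1+2+u) =
        ((⟨C.rK+1, by omega⟩ : Fin (C.rK+2)), (⟨i, hiD⟩ : C.DD)) := by
      intro u
      induction u with
      | zero => exact hst2
      | succ u ih =>
          rw [show t1+2+(u+1) = (t1+2+u)+1 from by omega, C.stF_succ, ih,
            C.mUp_frozen (by omega) (by omega) _ _]
    have hforce := attr_forcing C.A i (C.T i) ρ hplay (t1+1) hw ?_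
    · obtain ⟨t, _, hT⟩ := hforce
      exact hno t hT
    · intro t ht hown
      rcases eq_or_lt_of_le ht with heq | hlt
      · rw [← heq]
        rw [← heq] at hown
        exact hmv1 hown
      · have := habs (t - (t1+2))
        rw [show t1+2+(t-(t1+2)) = t from by omega] at this
        rw [hcons t hown, this, C.mNxt_punish (by omega) _ _]
  -- one follow step
  have hstep : ∀ t s p (o : C.DD) (h2 : s < C.rK + 2), s < m → p ≤ C.Lfun s →
      C.stF hD ρ t = ((⟨s, h2⟩ : Fin (C.rK+2)), o) → ρ t = C.xfun s p →
      ∃ (s' p' : ℕ) (o' : C.DD) (h2' : s' < C.rK + 2), s' < m ∧ p' ≤ C.Lfun s' ∧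
        C.stF hD ρ (t+1) = ((⟨s', h2'⟩ : Fin (C.rK+2)), o') ∧ ρ (t+1) = C.xfun s' p' ∧
        C.off s + p < C.off s' + p' := by
    intro t s p o h2 hsm hp hst hout
    have hsr : s < C.rK := by omega
    have hsK : s < C.KK := by omega
    have hvT : ρ t ∉ C.T i := hno t
    rcases Nat.lt_or_ge p (C.Lfun s) with hpL | hpL
    · -- interior of trace s
      have hne := C.xfun_ne_endV hsK hpL
      have hmem : C.xfun s p ∈ C.traceSet s := C.xfun_mem_traceSet (le_of_lt hpL)
      have hst1 : C.stF hD ρ (t+1) =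
          ((⟨s, h2⟩ : Fin (C.rK+2)), C.dOwn (C.xfun s p) o) := by
        rw [C.stF_succ, hst, hout, C.mUp_int hsr h2 o hne hmem]
      by_cases hown : C.A.owner (ρ t) = i
      · rw [hout] at hown
        have hdO : C.dOwn (C.xfun s p) o = (⟨i, hiD⟩ : C.DD) := by
          rw [dOwn, dif_pos (show C.A.owner (C.xfun s p) ∈ C.Dset from hown ▸ hiD)]
          exact Subtype.ext hown
        have hAt : ρ t ∈ Attr C.A i (C.T i) := by
          rw [hout]
          exact C.trace_mem_attr hNE hiD hmK hqm hsm hp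
        by_cases hwt : ρ (t+1) ∈ C.traceSet s
        · obtain ⟨p', hp', hw'⟩ := hwt
          have hgt : p < p' := by
            by_contra hle
            push_neg at hle
            refine C.no_back hsr ⟨p, p', hpL, hle, ?_⟩
            have hE := hedge t
            rw [hout, ← hw'] at hE
            exact hE
          refine ⟨s, p', ⟨i, hiD⟩, h2, hsm, hp', by rw [hst1, hdO], hw'.symm, by omega⟩
        · exfalso
          have hwAttr : ρ (t+1) ∈ Attr C.A i (C.T i) := by
            have := attr_avoider_succ C.A i (C.T i) hAt hvT (by rw [hout]; exact hown)
              (ρ (t+1)) (hedge t)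
            exact this.1
          have hne2 : ρ (t+1) ≠ C.endV s := fun hc => hwt (hc ▸ C.endV_mem_traceSet s)
          have hst2 : C.stF hD ρ (t+2) =
              ((⟨C.rK+1, by omega⟩ : Fin (C.rK+2)), (⟨i, hiD⟩ : C.DD)) := by
            rw [show t+2 = (t+1)+1 from rfl, C.stF_succ, hst1, hdO,
              C.mUp_off hsr h2 (by omega) _ hne2 hwt]
          refine hpunish t hwAttr hst2 ?_
          intro hown1
          rw [hcons (t+1) hown1, hst1, hdO, C.mNxt_off hsr h2 _ hne2 hwt]
      · have hmv := hcons t hown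
        rw [hst, hout, C.mNxt_int hsr h2 o hne hmem, C.trSucc_eq hsK hpL] at hmv
        exact ⟨s, p+1, C.dOwn (C.xfun s p) o, h2, hsm, by omega, hst1, hmv, by omega⟩
    · -- at the end of trace s
      have hpe : p = C.Lfun s := by omega
      have hve : ρ t = C.endV s := by rw [hout, hpe]; rfl
      have hsm1 : s + 1 < m := by
        rcases eq_or_lt_of_le (show s + 1 ≤ m from hsm) with he | h
        · exfalso
          apply hvT
          rw [hve, C.endV_eq s hsK, he, hqm]
          exact C.fvis_mem hiD
        · exact h
      have hs1r : s + 1 < C.rK := by omega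
      have hs1K : s + 1 < C.KK := by omega
      have hst1 : C.stF hD ρ (t+1) =
          ((⟨s+1, by omega⟩ : Fin (C.rK+2)), C.dOwn (C.endV s) o) := by
        rw [C.stF_succ, hst, hve, C.mUp_end hsr h2 (by omega) o]
      have hAt : ρ t ∈ Attr C.A i (C.T i) := by
        rw [hout]
        exact C.trace_mem_attr hNE hiD hmK hqm hsm hp
      by_cases hown : C.A.owner (ρ t) = i
      · rw [hve] at hown
        have hdO : C.dOwn (C.endV s) o = (⟨i, hiD⟩ : C.DD) := by
          rw [dOwn, dif_pos (show C.A.owner (C.endV s) ∈ C.Dset from hown ▸ hiD)]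
          exact Subtype.ext hown
        by_cases hwt : ρ (t+1) ∈ C.traceSet (s+1)
        · obtain ⟨p', hp', hw'⟩ := hwt
          have hp'1 : 1 ≤ p' := by
            by_contra h0
            push_neg at h0
            have hp0 : p' = 0 := by omega
            refine C.no_back hs1r ⟨0, 0, by have := C.Lfun_pos (s+1); omega, le_rfl, ?_⟩
            have hw0 : ρ (t+1) = C.xfun (s+1) 0 := by rw [← hw', hp0]
            have hE := hedge t
            rw [hve, hw0, C.xfun_start_succ hs1K] at hE
            exact hE
          refine ⟨s+1, p', ⟨i, hiD⟩, by omega, hsm1, hp', by rw [hst1, hdO], hw'.symm, ?_⟩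
          have hoffs := C.off_succ s
          omega
        · exfalso
          have hwAttr : ρ (t+1) ∈ Attr C.A i (C.T i) := by
            have := attr_avoider_succ C.A i (C.T i) hAt hvT (by rw [hve]; exact hown)
              (ρ (t+1)) (hedge t)
            exact this.1
          have hne2 : ρ (t+1) ≠ C.endV (s+1) := fun hc => hwt (hc ▸ C.endV_mem_traceSet (s+1))
          have hst2 : C.stF hD ρ (t+2) =
              ((⟨C.rK+1, by omega⟩ : Fin (C.rK+2)), (⟨i, hiD⟩ : C.DD)) := by
            rw [show t+2 = (t+1)+1 from rfl, C.stF_succ, hst1, hdO,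
              C.mUp_off hs1r (by omega) (by omega) _ hne2 hwt]
          refine hpunish t hwAttr hst2 ?_
          intro hown1
          rw [hcons (t+1) hown1, hst1, hdO, C.mNxt_off hs1r (by omega) _ hne2 hwt]
      · have hmv := hcons t hown
        rw [hst, hve, C.mNxt_end hsr h2 o, if_pos hs1r, C.xfun_start_succ hs1K,
          C.trSucc_eq hs1K (by have := C.Lfun_pos (s+1); omega)] at hmv
        refine ⟨s+1, 1, C.dOwn (C.endV s) o, by omega, hsm1, C.Lfun_pos (s+1), hst1, hmv, ?_⟩
        have hoffs := C.off_succ s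
        omega
  -- growth of the position measure
  have grow : ∀ u, ∃ (t s p : ℕ) (o : C.DD) (h2 : s < C.rK+2), s < m ∧ p ≤ C.Lfun s ∧
      C.stF hD ρ t = ((⟨s, h2⟩ : Fin (C.rK+2)), o) ∧ ρ t = C.xfun s p ∧
      u ≤ C.off s + p := by
    intro u
    induction u with
    | zero =>
        refine ⟨0, 0, 0, C.d0 hD, by omega, by omega, by omega, ?_, ?_, by omega⟩
        · rw [C.stF_zero]; rfl
        · show C.v0 = _
          rw [C.xfun_zero (by omega), qpos_zero]
          rfl
    | succ u ih =>
        obtain ⟨t, s, p, o, h2, hsm, hp, hst, hout, hu⟩ := ih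
        obtain ⟨s', p', o', h2', hsm', hp', hst', hout', hlt⟩ :=
          hstep t s p o h2 hsm hp hst hout
        exact ⟨t+1, s', p', o', h2', hsm', hp', hst', hout', by omega⟩
  obtain ⟨t, s, p, o, h2, hsm, hp, _, _, hu⟩ := grow (C.off m + 1)
  have h1 : C.off s + p ≤ C.off (s+1) := by
    rw [C.off_succ]
    omega
  have h2' : C.off (s+1) ≤ C.off m := C.off_mono (by omega)
  omega

/-! ### The Nash property of the final profile -/

lemma outF_safe_of_trunc (hD : C.Dset.Nonempty) {i : Fin n} {m : ℕ}
    (hmK : m ≤ C.KK) (hqm : C.qpos m = C.fvis i) (hgt : C.rK < m) :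
    ∀ t, C.outF hD t ∉ C.T i := by
  intro t hT
  have hKr := C.rK_le
  rcases C.outF_spec hD t with ⟨s, p, o, h2, hs, hp, ht, hst, hout⟩ | ⟨o, h2, hge, hst, hout⟩
  · have hsK : s < C.KK := by omega
    obtain ⟨pos, _, hple, hpos⟩ := C.xfun_mem hsK hp
    have h1 : C.qpos (s+1) ≤ C.qpos C.rK := C.qpos_mono (by omega) (by omega)
    have h2q : C.qpos C.rK < C.qpos m := C.qpos_strictMono hgt hmK
    have hlt : pos < C.fvis i := by rw [← hqm]; omega
    apply C.fvis_min hlt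
    rw [hpos, ← hout]
    exact hT
  · have hab : C.habk := by
      by_contra h
      have : C.rK = C.KK := by rw [rK, dif_neg h]
      omega
    have hrKK : C.rK < C.KK := C.rK_lt_of_habk hab
    have hmem := C.tail_iter_mem (t - C.off C.rK)
    rw [tailSet, if_pos hab] at hmem
    obtain ⟨m2, hm2, heq⟩ := hmem
    have hm2L : m2 < C.Lfun C.rK := by
      have := (C.star_spec hab).1
      omega
    obtain ⟨pos, hpge, hple, hpos⟩ := C.xfun_mem (s := C.rK) (m := m2) hrKK (by omega : m2 ≤ C.Lfun C.rK)
    have hTpos : C.piE pos ∈ C.T i := by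
      rw [hpos, heq, ← hout]; exact hT
    have hfle : C.fvis i ≤ pos := Nat.sInf_le hTpos
    have hq1 : C.qpos (C.rK + 1) ≤ C.qpos m := C.qpos_mono (by omega) hmK
    have hposq : pos = C.qpos (C.rK + 1) := by
      rw [hqm] at hq1
      omega
    -- then xfun rK m2 = endV rK, contradicting m2 < Lfun rK
    have hveq : C.xfun C.rK m2 = C.xfun C.rK (C.Lfun C.rK) := by
      rw [← hpos, hposq, ← C.endV_eq C.rK hrKK]
      rfl
    have := C.xfun_inj hrKK (by omega) le_rfl hveq
    omega

lemma isNE_final (hNE : C.A.IsNEObj (fun i => SafeObj (C.T i)) C.sig C.v0)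
    (hD : C.Dset.Nonempty) :
    C.A.IsNEObj (fun i => SafeObj (C.T i)) (C.sigFin hD) C.v0 := by
  intro i τ hprem
  by_cases hsafe : ∀ t, C.outF hD t ∉ C.T i
  · exact hsafe
  · exfalso
    push_neg at hsafe
    obtain ⟨t0, hT0⟩ := hsafe
    have hiD : i ∈ C.Dset := fun hiS => C.outF_avoids_B hD t0 ⟨i, hiS, hT0⟩
    rcases Nat.eq_zero_or_pos (C.fvis i) with hf0 | hf1
    · have h0 : C.piE 0 ∈ C.T i := by
        have := C.fvis_mem hiD
        rw [hf0] at this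
        exact this
      exact hprem 0 h0
    · obtain ⟨m, hm1, hmK, hqm⟩ := C.exists_qpos (C.fvis_mem_visitSet hiD) (by omega)
      have hmr : m ≤ C.rK := by
        by_contra hgt
        push_neg at hgt
        exact (C.outF_safe_of_trunc hD hmK hqm hgt) t0 hT0
      obtain ⟨t, ht⟩ := C.dev_reach hNE hD hiD τ hm1 hmr hqm
      exact hprem t ht

/-! ### Memory bounds -/

lemma card_MSt : Nat.card C.MSt = (C.rK + 2) * C.Dset.ncard := by
  have h1 : Nat.card C.MSt = Nat.card (Fin (C.rK + 2)) * Nat.card C.DD := Nat.card_prod _ _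
  have h2 : Nat.card (Fin (C.rK + 2)) = C.rK + 2 :=
    Nat.card_eq_fintype_card.trans (Fintype.card_fin _)
  have h3 : Nat.card C.DD = C.Dset.ncard := Nat.card_coe_set_eq C.Dset
  rw [h1, h2, h3]

lemma hasMem (hD : C.Dset.Nonempty) (b : ℕ) (hb : (C.rK + 2) * C.Dset.ncard ≤ b) :
    HasMemorySize (C.sigStar hD) b :=
  ⟨C.MSt, C.mealy hD, C.MSt_finite, by rw [C.card_MSt]; exact hb, C.sigStar_induced hD⟩

lemma dcard_pos (hD : C.Dset.Nonempty) : 1 ≤ C.Dset.ncard :=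
  (Set.ncard_pos C.Dset.toFinite).2 hD

lemma ncard_compl_eq : C.Dset.ncard = n - C.Ssafe.ncard := by
  have h := Set.ncard_add_ncard_compl C.Ssafe
  rw [Nat.card_eq_fintype_card, Fintype.card_fin] at h
  show C.Ssafeᶜ.ncard = n - C.Ssafe.ncard
  omega

lemma KK_le_n : C.KK ≤ n := by
  rw [C.KK_eq_ncard]
  have h1 : (visitSet C.T C.piE \ {0}).ncard ≤
      (Set.range (fun i => sInf {j | C.piE j ∈ C.T i})).ncard :=
    Set.ncard_le_ncard (le_trans Set.diff_subset C.visitSet_subset_range)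
      (Set.finite_range _)
  have h2 : (Set.range (fun i : Fin n => sInf {j | C.piE j ∈ C.T i})).ncard ≤ n := by
    rw [← Set.image_univ]
    calc (Set.univ.image fun i : Fin n => sInf {j | C.piE j ∈ C.T i}).ncard
        ≤ (Set.univ : Set (Fin n)).ncard := Set.ncard_image_le Set.univ.toFinite
      _ = n := by rw [Set.ncard_univ, Nat.card_eq_fintype_card, Fintype.card_fin]
  omega

lemma dcard_le_n : C.Dset.ncard ≤ n := by
  have := C.ncard_compl_eq
  omega

/-! ### The trivial profile when everybody is safe -/

noncomputable def gStrat : C.A.Strategy :=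
  ⟨fun _ v => C.gfun v, fun _ v => C.gfun_valid v⟩

noncomputable def gMealy : Mealy C.A PUnit :=
  ⟨PUnit.unit, fun _ _ => PUnit.unit, fun _ v => C.gfun v, fun _ v => C.gfun_valid v⟩

lemma gStrat_induced : InducedBy C.gStrat C.gMealy := fun _ _ => rfl

lemma gOut_mem_X (t : ℕ) : outcome C.A (fun _ => C.gStrat) C.v0 t ∈ C.Xset := by
  induction t with
  | zero => exact C.piE_shift_mem_X 0
  | succ t ih =>
      rw [outcome_succ]
      exact C.gfun_mem_X ih

end GameCtx


end SafetyFM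

end SafetyFM

/-- From any NE in a safety game one can derive a finite-memory NE
whose outcome satisfies at least the same safety objectives; memory size at most
`max 1 (n − |Sat|) * (|Visit ∖ {0}| + 2)`, in particular at most `n² + 2n`. -/
theorem safety_fm_ne
    (V : Type) (n : ℕ) (A : Arena V n) (T : Fin n → Set V) (v0 : V)
    (σ' : Fin n → A.Strategy)
    (hNE : A.IsNEObj (fun i => SafeObj (T i)) σ' v0) :
    ∃ σ : Fin n → A.Strategy,
      A.IsNEObj (fun i => SafeObj (T i)) σ v0 ∧
      satSafe T (outcome A σ' v0) ⊆ satSafe T (outcome A σ v0) ∧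
      ∀ i, HasMemorySize (σ i)
          (max 1 (n - (satSafe T (outcome A σ' v0)).ncard) *
            ((visitSet T (outcome A σ' v0) \ {0}).ncard + 2)) ∧
        HasMemorySize (σ i) (n ^ 2 + 2 * n) := by
  classical
  set C : SafetyFM.GameCtx V n := ⟨A, T, v0, σ'⟩ with hC
  by_cases hD : C.Dset.Nonempty
  · refine ⟨C.sigFin hD, C.isNE_final hNE hD, C.ssafe_subset_final hD, ?_⟩
    intro j
    have hd1 : 1 ≤ C.Dset.ncard := C.dcard_pos hD
    have hdn : C.Dset.ncard ≤ n := C.dcard_le_n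
    have hkn : C.KK ≤ n := C.KK_le_n
    have hrk : C.rK ≤ C.KK := C.rK_le
    have he : satSafe T (outcome A σ' v0) = C.Ssafe := rfl
    have hvis : (visitSet T (outcome A σ' v0) \ {0}).ncard = C.KK := (C.KK_eq_ncard).symm
    have hmax : max 1 (n - (satSafe T (outcome A σ' v0)).ncard) = C.Dset.ncard := by
      rw [he, ← C.ncard_compl_eq]
      exact max_eq_right hd1
    constructor
    · apply C.hasMem hD
      rw [hmax, hvis]
      calc (C.rK + 2) * C.Dset.ncard ≤ (C.KK + 2) * C.Dset.ncard :=
            Nat.mul_le_mul (by omega) le_rfl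
        _ = C.Dset.ncard * (C.KK + 2) := Nat.mul_comm _ _
    · apply C.hasMem hD
      calc (C.rK + 2) * C.Dset.ncard ≤ (n + 2) * n := Nat.mul_le_mul (by omega) hdn
        _ = n ^ 2 + 2 * n := by ring
  · refine ⟨fun _ => C.gStrat, ?_, ?_, ?_⟩
    · intro i τ hprem t hT
      have hiS : i ∈ C.Ssafe := by
        by_contra h
        exact hD ⟨i, h⟩
      exact (C.Xset_not_B (C.gOut_mem_X t)) ⟨i, hiS, hT⟩
    · intro j hj t hT
      exact (C.Xset_not_B (C.gOut_mem_X t)) ⟨j, hj, hT⟩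
    · intro j
      have hn : 0 < n := j.pos
      have hmem1 : ∀ b : ℕ, 1 ≤ b → HasMemorySize (C.gStrat) b := by
        intro b hb
        refine ⟨PUnit, C.gMealy, inferInstance, ?_, C.gStrat_induced⟩
        simpa [Nat.card_eq_fintype_card] using hb
      constructor
      · apply hmem1
        have h1 : 1 ≤ max 1 (n - (satSafe T (outcome A σ' v0)).ncard) := le_max_left _ _
        have h2 : 1 ≤ (visitSet T (outcome A σ' v0) \ {0}).ncard + 2 := by omega
        calc 1 = 1 * 1 := rfl
          _ ≤ _ := Nat.mul_le_mul h1 h2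
      · apply hmem1
        calc 1 ≤ 2 * n := by omega
          _ ≤ n ^ 2 + 2 * n := Nat.le_add_left _ _
end

section
/- Let G be an n-player Büchi game on a possibly infinite arena, where player i's objective is Büchi(T_i) for a set T_i ⊆ V. Let π' be the outcome from v_0 of some Nash equilibrium such that some vertex occurs infinitely often in π' and Sat(π') ≠ ∅. Then there exists a Nash-equilibrium outcome π from v_0 with Sat(π) = Sat(π') admitting an infinite simple segment decomposition (sg_0, sg_1, sg_2, …) such that: (i) for all l ≥ 1 and all players i ∉ Sat(π), no vertex of T_i occurs in sg_l; (ii) there exists K with 1 ≤ K ≤ |Sat(π')| such that sg_l = sg_{l+K} for all l ≥ 1; and (iii) either K = 1 and sg_1 is a simple cycle, or K > 1 and sg_l is a nontrivial simple history for all l ∈ [K]. -/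
open scoped ENNReal Classical

open Arena

namespace Arena

variable {V : Type} {n : ℕ}

lemma pref_length (π : ℕ → V) (j : ℕ) : (pref π j).length = j := by
  simp [pref]

lemma pref_succ (π : ℕ → V) (j : ℕ) : pref π (j+1) = pref π j ++ [π j] := by
  simp [pref, List.range_succ]

lemma pref_congr {π ρ : ℕ → V} {j : ℕ} (h : ∀ s < j, ρ s = π s) :
    pref ρ j = pref π j := by
  unfold pref
  exact List.map_congr_left (fun a ha => h a (List.mem_range.mp ha))

lemma pref_eq_imp {π ρ : ℕ → V} {j : ℕ} (h : pref ρ j = pref π j) :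
    ∀ s < j, ρ s = π s := by
  intro s hs
  have h1 : (pref ρ j)[s]'(by simp [pref_length]; exact hs)
      = (pref π j)[s]'(by simp [pref_length]; exact hs) := by
    simp only [h]
  simpa [pref] using h1

lemma pref_add (ρ : ℕ → V) (e t : ℕ) :
    pref ρ (e + t) = pref ρ e ++ (List.range t).map (fun s => ρ (e + s)) := by
  unfold pref
  rw [List.range_add, List.map_append, List.map_map]
  rfl

lemma pref_take (ρ : ℕ → V) {j m : ℕ} (h : j ≤ m) :
    (pref ρ m).take j = pref ρ j := by
  unfold pref
  rw [← List.map_take, List.take_range, min_eq_left h]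

lemma pref_drop (ρ : ℕ → V) (e t : ℕ) :
    (pref ρ (e + t)).drop e = (List.range t).map (fun s => ρ (e + s)) := by
  rw [pref_add]
  have := List.drop_left (l₁ := pref ρ e) (l₂ := (List.range t).map (fun s => ρ (e + s)))
  rwa [pref_length] at this

lemma outcomeAux_fst (A : Arena V n) (σ : Fin n → A.Strategy) (v0 : V) (j : ℕ) :
    (outcomeAux A σ v0 j).1 = pref (outcome A σ v0) j := by
  induction j with
  | zero => simp [outcomeAux, pref]
  | succ j ih => rw [pref_succ]; simp [outcomeAux, ih]; rfl

lemma outcome_zero (A : Arena V n) (σ : Fin n → A.Strategy) (v0 : V) :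
    outcome A σ v0 0 = v0 := rfl

lemma outcome_step (A : Arena V n) (σ : Fin n → A.Strategy) (v0 : V) (j : ℕ) :
    outcome A σ v0 (j+1) =
      (σ (A.owner (outcome A σ v0 j))).next (pref (outcome A σ v0) j)
        (outcome A σ v0 j) := by
  show (outcomeAux A σ v0 (j+1)).2 = _
  rw [show outcomeAux A σ v0 (j+1) = ((outcomeAux A σ v0 j).1 ++ [(outcomeAux A σ v0 j).2],
    (σ (A.owner (outcomeAux A σ v0 j).2)).next (outcomeAux A σ v0 j).1 (outcomeAux A σ v0 j).2) from rfl]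
  rw [outcomeAux_fst]
  rfl

lemma outcome_isPlay (A : Arena V n) (σ : Fin n → A.Strategy) (v0 : V) :
    A.IsPlay (outcome A σ v0) := by
  intro j
  rw [outcome_step]
  exact (σ _).valid _ _

lemma outcome_eq (A : Arena V n) (σ : Fin n → A.Strategy) (v0 : V) (ρ : ℕ → V)
    (h0 : ρ 0 = v0)
    (hstep : ∀ j, ρ (j+1) = (σ (A.owner (ρ j))).next (pref ρ j) (ρ j)) :
    outcome A σ v0 = ρ := by
  have key : ∀ j, outcome A σ v0 j = ρ j := by
    intro j
    induction j using Nat.strong_induction_on with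
    | _ j ih =>
      match j with
      | 0 => exact h0.symm
      | j+1 =>
        rw [outcome_step, hstep]
        have hp : pref (outcome A σ v0) j = pref ρ j :=
          pref_congr (fun s hs => ih s (Nat.lt_succ_of_lt hs))
        rw [hp, ih j (Nat.lt_succ_self j)]
  funext j; exact key j

end Arena
namespace Arena

variable {V : Type} {n : ℕ}

/-- Shortcut a finite walk to a simple path with the same endpoints, using only
its vertices. -/
lemma exists_simple_path (E : V → V → Prop) :
    ∀ (m : ℕ) (w : ℕ → V), (∀ t < m, E (w t) (w (t+1))) →
    ∃ (m' : ℕ) (w' : ℕ → V), m' ≤ m ∧ (∀ t < m', E (w' t) (w' (t+1))) ∧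
      w' 0 = w 0 ∧ w' m' = w m ∧
      (∀ t t', t ≤ m' → t' ≤ m' → w' t = w' t' → t = t') ∧
      (∀ t ≤ m', ∃ s ≤ m, w s = w' t) := by
  intro m
  induction m using Nat.strong_induction_on with
  | _ m ih =>
    intro w hE
    by_cases hinj : ∀ t t', t ≤ m → t' ≤ m → w t = w t' → t = t'
    · exact ⟨m, w, le_rfl, hE, rfl, rfl, hinj, fun t ht => ⟨t, ht, rfl⟩⟩
    · push_neg at hinj
      obtain ⟨t, t', ht, ht', heq, hne⟩ := hinj
      -- wlog t < t'
      obtain ⟨a, b, hab, ha, hb, hweq⟩ : ∃ a b, a < b ∧ a ≤ m ∧ b ≤ m ∧ w a = w b := by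
        rcases lt_or_gt_of_ne hne with h | h
        · exact ⟨t, t', h, ht, ht', heq⟩
        · exact ⟨t', t, h, ht', ht, heq.symm⟩
      set δ := b - a with hδ
      have hδpos : 0 < δ := Nat.sub_pos_of_lt hab
      have hδle : δ ≤ m := le_trans (Nat.sub_le _ _) hb
      set m₂ := m - δ with hm₂
      have hm₂lt : m₂ < m := Nat.sub_lt (lt_of_lt_of_le (lt_of_le_of_lt (Nat.zero_le a) hab) hb) hδpos
      set w₂ : ℕ → V := fun s => if s ≤ a then w s else w (s + δ) with hw₂
      have haδ : a + δ = b := by omega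
      have hE₂ : ∀ t < m₂, E (w₂ t) (w₂ (t+1)) := by
        intro s hs
        by_cases h1 : s + 1 ≤ a
        · have : s ≤ a := le_trans (Nat.le_succ s) h1
          simp only [hw₂, if_pos this, if_pos h1]
          exact hE s (by omega)
        · by_cases h2 : s ≤ a
          · have hsa : s = a := by omega
            simp only [hw₂, if_pos h2, if_neg h1]
            have : s + 1 + δ = b + 1 := by omega
            rw [this, hsa, hweq]
            exact hE b (by omega)
          · simp only [hw₂, if_neg h2, if_neg h1]
            have : s + 1 + δ = s + δ + 1 := by omega
            rw [this]
            exact hE (s + δ) (by omega)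
      obtain ⟨m', w', h1, h2, h3, h4, h5, h6⟩ := ih m₂ hm₂lt w₂ hE₂
      refine ⟨m', w', le_trans h1 (le_of_lt hm₂lt), h2, ?_, ?_, h5, ?_⟩
      · rw [h3]; simp [hw₂]
      · rw [h4]
        by_cases h : m₂ ≤ a
        · have h1 : m₂ = a := by omega
          have h2 : b = m := by omega
          simp only [hw₂, if_pos h, h1, hweq, h2]
          simp
        · simp only [hw₂, if_neg h]
          congr 1; omega
      · intro t htle
        obtain ⟨s, hs, hws⟩ := h6 t htle
        by_cases h : s ≤ a
        · exact ⟨s, by omega, by simpa [hw₂, if_pos h] using hws⟩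
        · exact ⟨s + δ, by omega, by simpa [hw₂, if_neg h] using hws⟩

/-- Shortcut a closed walk to a simple cycle through its base vertex. -/
lemma exists_simple_cycle (E : V → V → Prop) :
    ∀ (m : ℕ) (w : ℕ → V), 0 < m → (∀ t < m, E (w t) (w (t+1))) → w m = w 0 →
    ∃ (m' : ℕ) (w' : ℕ → V), 0 < m' ∧ m' ≤ m ∧ (∀ t < m', E (w' t) (w' (t+1))) ∧
      w' 0 = w 0 ∧ w' m' = w 0 ∧
      (∀ t t', t < m' → t' < m' → w' t = w' t' → t = t') ∧
      (∀ t ≤ m', ∃ s ≤ m, w s = w' t) := by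
  intro m
  induction m using Nat.strong_induction_on with
  | _ m ih =>
    intro w hm hE hclosed
    by_cases hinj : ∀ t t', t < m → t' < m → w t = w t' → t = t'
    · exact ⟨m, w, hm, le_rfl, hE, rfl, hclosed, hinj, fun t ht => ⟨t, ht, rfl⟩⟩
    · push_neg at hinj
      obtain ⟨t, t', ht, ht', heq, hne⟩ := hinj
      obtain ⟨a, b, hab, hb, hweq⟩ : ∃ a b, a < b ∧ b < m ∧ w a = w b := by
        rcases lt_or_gt_of_ne hne with h | h
        · exact ⟨t, t', h, ht', heq⟩
        · exact ⟨t', t, h, ht, heq.symm⟩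
      set δ := b - a with hδ
      have hδpos : 0 < δ := Nat.sub_pos_of_lt hab
      set m₂ := m - δ with hm₂
      have hm₂pos : 0 < m₂ := by omega
      have hm₂lt : m₂ < m := by omega
      set w₂ : ℕ → V := fun s => if s ≤ a then w s else w (s + δ) with hw₂
      have hE₂ : ∀ t < m₂, E (w₂ t) (w₂ (t+1)) := by
        intro s hs
        by_cases h1 : s + 1 ≤ a
        · have : s ≤ a := le_trans (Nat.le_succ s) h1
          simp only [hw₂, if_pos this, if_pos h1]
          exact hE s (by omega)
        · by_cases h2 : s ≤ a
          · have hsa : s = a := by omega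
            simp only [hw₂, if_pos h2, if_neg h1]
            have : s + 1 + δ = b + 1 := by omega
            rw [this, hsa, hweq]
            exact hE b (by omega)
          · simp only [hw₂, if_neg h2, if_neg h1]
            have : s + 1 + δ = s + δ + 1 := by omega
            rw [this]
            exact hE (s + δ) (by omega)
      have hcl₂ : w₂ m₂ = w₂ 0 := by
        have h0 : w₂ 0 = w 0 := by simp [hw₂]
        rw [h0]
        have h : ¬ m₂ ≤ a := by omega
        simp only [hw₂, if_neg h]
        rw [show m₂ + δ = m from by omega, hclosed]
      obtain ⟨m', w', h0, h1, h2, h3, h4, h5, h6⟩ := ih m₂ hm₂lt w₂ hm₂pos hE₂ hcl₂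
      refine ⟨m', w', h0, le_trans h1 (le_of_lt hm₂lt), h2, ?_, ?_, h5, ?_⟩
      · rw [h3]; simp [hw₂]
      · rw [h4]; simp [hw₂]
      · intro t htle
        obtain ⟨s, hs, hws⟩ := h6 t htle
        by_cases h : s ≤ a
        · exact ⟨s, by omega, by simpa [hw₂, if_pos h] using hws⟩
        · exact ⟨s + δ, by omega, by simpa [hw₂, if_neg h] using hws⟩

end Arena
namespace Arena

variable {V : Type} {n : ℕ}

/-- Transfer a Nash equilibrium: any play `π` from `v0` whose vertices are pointwise
vertices of the NE outcome `π'` (via `F`) and that satisfies at least the players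
satisfied by `π'` is itself an NE outcome. -/
lemma ne_transfer (A : Arena V n) (T : Fin n → Set V) (v0 : V)
    (σ' : Fin n → A.Strategy)
    (hNE : A.IsNEObj (fun i => BuchiObj (T i)) σ' v0)
    (π' : ℕ → V) (hπ' : outcome A σ' v0 = π')
    (π : ℕ → V) (F : ℕ → ℕ)
    (hπ0 : π 0 = v0) (hplay : A.IsPlay π) (hF : ∀ m, π' (F m) = π m)
    (hsub : satBuchi T π' ⊆ satBuchi T π) :
    ∃ σ : Fin n → A.Strategy,
      outcome A σ v0 = π ∧ A.IsNEObj (fun i => BuchiObj (T i)) σ v0 := by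
  have hπ'0 : π' 0 = v0 := by rw [← hπ']; rfl
  have hπ'play : A.IsPlay π' := hπ' ▸ outcome_isPlay A σ' v0
  have hπ'step : ∀ j, π' (j+1) = (σ' (A.owner (π' j))).next (pref π' j) (π' j) := by
    intro j; rw [← hπ']; exact outcome_step A σ' v0 j
  -- history translation
  set ψ : List V → List V := fun h =>
    let j := Nat.findGreatest (fun j => h.take j = pref π j) h.length
    if j = 0 then h else pref π' (F (j-1)) ++ h.drop (j-1) with hψdef
  -- the new profile
  set σ : Fin n → A.Strategy := fun k =>
    ⟨fun h v => if h = pref π h.length ∧ v = π h.length then π (h.length + 1)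
       else (σ' k).next (ψ h) v,
     by
      intro h v
      split
      · next hc => rw [hc.2]; exact hplay h.length
      · exact (σ' k).valid _ _⟩ with hσdef
  have hσnext : ∀ k h v, (σ k).next h v =
      if h = pref π h.length ∧ v = π h.length then π (h.length + 1)
      else (σ' k).next (ψ h) v := fun _ _ _ => rfl
  have hσon : ∀ (k : Fin n) (j : ℕ), (σ k).next (pref π j) (π j) = π (j+1) := by
    intro k j
    rw [hσnext, if_pos ⟨by rw [pref_length], by rw [pref_length]⟩, pref_length]
  have hout : outcome A σ v0 = π := by
    apply outcome_eq A σ v0 π hπ0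
    intro j
    rw [hσon]
  refine ⟨σ, hout, ?_⟩
  intro i τ hdev
  rw [hout]
  by_cases hi : i ∈ satBuchi T π
  · exact hi
  have hi' : i ∉ satBuchi T π' := fun h => hi (hsub h)
  exfalso
  set ρ := outcome A (Function.update σ i τ) v0 with hρdef
  have hρ0 : ρ 0 = v0 := rfl
  have hρplay : A.IsPlay ρ := outcome_isPlay _ _ _
  have hρstep : ∀ j, ρ (j+1) =
      ((Function.update σ i τ) (A.owner (ρ j))).next (pref ρ j) (ρ j) :=
    fun j => outcome_step _ _ _ j
  have hρB : ρ ∈ BuchiObj (T i) := hdev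
  by_cases hag : ∀ m, ρ m = π m
  · apply hi
    intro j
    obtain ⟨k, hk, hkT⟩ := hρB j
    exact ⟨k, hk, (hag k) ▸ hkT⟩
  push_neg at hag
  have hd : ρ (Nat.find hag) ≠ π (Nat.find hag) := Nat.find_spec hag
  set d := Nat.find hag with hddef
  have hdmin : ∀ s < d, ρ s = π s := fun s hs => not_not.mp (Nat.find_min hag hs)
  have hd0 : d ≠ 0 := by
    intro h
    exact hd (by rw [h, hρ0, hπ0])
  set e := d - 1 with hedef
  have hde : d = e + 1 := by omega
  have hρe : ρ e = π e := hdmin e (by omega)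
  have hprefe : pref ρ e = pref π e := pref_congr (fun s hs => hdmin s (by omega))
  -- the deviator at position e is player i
  have howner : A.owner (π e) = i := by
    by_contra hk
    apply hd
    rw [hde, hρstep e, hρe, hprefe, Function.update_of_ne hk, hσon]
  -- the corresponding deviation play against σ'
  set g := F e with hgdef
  have hFe : π' g = π e := hF e
  set ρ'' : ℕ → V := fun m => if m < g then π' m else ρ (e + (m - g)) with hρ''def
  have hρ''j : ∀ t, ρ'' (g + t) = ρ (e + t) := by
    intro t
    have h1 : ¬ (g + t < g) := by omega
    simp only [hρ''def, if_neg h1]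
    congr 1
    omega
  have hρ''lt : ∀ m < g, ρ'' m = π' m := by
    intro m hm
    simp only [hρ''def, if_pos hm]
  have hρ''le : ∀ m ≤ g, ρ'' m = π' m := by
    intro m hm
    rcases lt_or_eq_of_le hm with h | h
    · exact hρ''lt m h
    · subst h
      have := hρ''j 0
      simp only [Nat.add_zero] at this
      rw [this, hρe, ← hFe]
  have hρ''0 : ρ'' 0 = v0 := by rw [hρ''le 0 (Nat.zero_le g), hπ'0]
  have hρ''play : A.IsPlay ρ'' := by
    intro m
    by_cases h1 : m + 1 ≤ g
    · rw [hρ''le m (by omega), hρ''le (m+1) h1]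
      exact hπ'play m
    · have h2 : g ≤ m := by omega
      have hm : m = g + (m - g) := by omega
      have hm1 : m + 1 = g + (m - g + 1) := by omega
      rw [hm1, hρ''j]
      conv_lhs => rw [hm, hρ''j]
      have : e + (m - g + 1) = (e + (m - g)) + 1 := by omega
      rw [this]
      exact hρplay (e + (m - g))
  have hpref1 : pref ρ'' g = pref π' g := pref_congr (fun s hs => hρ''lt s hs)
  have hpref2 : ∀ t, pref ρ'' (g + t) =
      pref π' g ++ (List.range t).map (fun s => ρ (e + s)) := by
    intro t
    rw [pref_add, hpref1]
    congr 1
    exact List.map_congr_left (fun s _ => hρ''j s)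
  -- the deviating strategy for player i in the original game
  set τ' : A.Strategy :=
    ⟨fun h v => if h = pref ρ'' h.length ∧ v = ρ'' h.length then ρ'' (h.length + 1)
       else Classical.choose (A.no_deadlock v),
     by
      intro h v
      split
      · next hc => rw [hc.2]; exact hρ''play h.length
      · exact Classical.choose_spec (A.no_deadlock v)⟩ with hτ'def
  have hτ'on : ∀ (j : ℕ), τ'.next (pref ρ'' j) (ρ'' j) = ρ'' (j+1) := by
    intro j
    show (if pref ρ'' j = pref ρ'' (pref ρ'' j).length ∧ ρ'' j = ρ'' (pref ρ'' j).length
      then ρ'' ((pref ρ'' j).length + 1) else _) = ρ'' (j+1)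
    rw [if_pos ⟨by rw [pref_length], by rw [pref_length]⟩, pref_length]
  have houtρ'' : outcome A (Function.update σ' i τ') v0 = ρ'' := by
    apply outcome_eq A _ v0 ρ'' hρ''0
    intro m
    by_cases howm : A.owner (ρ'' m) = i
    · rw [howm, Function.update_self, hτ'on]
    · rw [Function.update_of_ne howm]
      rcases lt_trichotomy m g with hlt | heq | hgt
      · -- before the junction: follow π'
        have h1 : ρ'' m = π' m := hρ''lt m hlt
        have h2 : pref ρ'' m = pref π' m :=
          pref_congr (fun s hs => hρ''lt s (by omega))
        have h3 : ρ'' (m+1) = π' (m+1) := hρ''le (m+1) (by omega)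
        rw [h1, h2, h3]
        exact hπ'step m
      · -- at the junction: the owner is i, contradiction
        exfalso
        apply howm
        rw [heq]
        have : ρ'' g = π e := by
          have := hρ''j 0
          simp only [Nat.add_zero] at this
          rw [this, hρe]
        rw [this, howner]
      · -- after the junction: follow ρ via the translation ψ
        set t := m - g with htdef
        have ht1 : 1 ≤ t := by omega
        have hmgt : m = g + t := by omega
        have howk : A.owner (ρ (e + t)) ≠ i := by
          rw [← hρ''j t, ← hmgt]; exact howm
        have hstep := hρstep (e + t)
        rw [Function.update_of_ne howk, hσnext] at hstep
        have hcond : ¬ (pref ρ (e + t) = pref π (pref ρ (e + t)).length ∧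
            ρ (e + t) = π (pref ρ (e + t)).length) := by
          rw [pref_length]
          rintro ⟨h1, h2⟩
          rcases eq_or_lt_of_le (show d ≤ e + t by omega) with h | h
          · apply hd
            rw [hde] at h ⊢
            rw [← h] at h2
            exact h2
          · exact hd (pref_eq_imp h1 d h)
        rw [if_neg hcond] at hstep
        -- compute ψ (pref ρ (e + t))
        have hψval : ψ (pref ρ (e + t)) = pref ρ'' (g + t) := by
          have hfg : Nat.findGreatest
              (fun j => (pref ρ (e + t)).take j = pref π j) (pref ρ (e + t)).length = d := by
            rw [pref_length]
            rw [Nat.findGreatest_eq_iff]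
            refine ⟨by omega, fun _ => ?_, ?_⟩
            · rw [pref_take ρ (show d ≤ e + t by omega)]
              exact pref_congr hdmin
            · intro k hdk hke hP
              rw [pref_take ρ hke] at hP
              exact hd (pref_eq_imp hP d hdk)
          show (if Nat.findGreatest (fun j => (pref ρ (e + t)).take j = pref π j)
              (pref ρ (e + t)).length = 0 then pref ρ (e + t)
            else pref π' (F (Nat.findGreatest (fun j => (pref ρ (e + t)).take j = pref π j)
              (pref ρ (e + t)).length - 1)) ++
              (pref ρ (e + t)).drop (Nat.findGreatest
                (fun j => (pref ρ (e + t)).take j = pref π j) (pref ρ (e + t)).length - 1))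
            = pref ρ'' (g + t)
          rw [hfg, if_neg hd0]
          have hd1 : d - 1 = e := by omega
          rw [hd1, pref_drop, hpref2]
        rw [hmgt, hρ''j t, show g + t + 1 = g + (t + 1) from by omega, hρ''j (t+1),
          show e + (t + 1) = e + t + 1 from by omega, hstep, hψval]
  -- transfer the Büchi objective from ρ to ρ''
  have hρ''B : ρ'' ∈ BuchiObj (T i) := by
    intro j
    obtain ⟨k, hk, hkT⟩ := hρB (e + j)
    refine ⟨g + (k - e), by omega, ?_⟩
    rw [hρ''j (k - e), show e + (k - e) = k from by omega]
    exact hkT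
  -- contradiction with the Nash equilibrium property of σ'
  apply hi'
  have := hNE i τ' (by rw [houtρ'']; exact hρ''B)
  rw [hπ'] at this
  exact this

end Arena
namespace Arena

variable {V : Type} {n : ℕ}

/-- Assemble a lasso play from a simple prefix and `K` simple legs forming a cycle. -/
lemma assemble (A : Arena V n) (v0 : V) (a0 : ℕ) (Pf : ℕ → V)
    (K : ℕ) (u : ℕ → V) (lam : ℕ → ℕ) (leg : ℕ → ℕ → V)
    (hK : 0 < K)
    (hlam : ∀ r, r < K → 1 ≤ lam r)
    (hPf0 : Pf 0 = v0)
    (hPfend : Pf a0 = u 0)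
    (hPfinj : ∀ t t', t ≤ a0 → t' ≤ a0 → Pf t = Pf t' → t = t')
    (hPfE : ∀ t, t < a0 → A.E (Pf t) (Pf (t+1)))
    (hleg0 : ∀ r, r < K → leg r 0 = u r)
    (hlegend : ∀ r, r < K → leg r (lam r) = u ((r+1) % K))
    (hlegE : ∀ r, r < K → ∀ s, s < lam r → A.E (leg r s) (leg r (s+1)))
    (hsimp : (K = 1 ∧ ∀ s s', s < lam 0 → s' < lam 0 → leg 0 s = leg 0 s' → s = s')
      ∨ (1 < K ∧ ∀ r, r < K → ∀ s s', s ≤ lam r → s' ≤ lam r → leg r s = leg r s' → s = s')) :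
    ∃ (π : ℕ → V) (p : ℕ → ℕ),
      π 0 = v0 ∧ A.IsPlay π ∧
      (∀ m, m ≤ a0 → π m = Pf m) ∧
      (∀ m, a0 ≤ m → ∃ r, r < K ∧ ∃ s, s < lam r ∧ π m = leg r s) ∧
      (∀ r, r < K → ∀ s, s < lam r → ∀ j, ∃ m, j ≤ m ∧ a0 ≤ m ∧ π m = leg r s) ∧
      p 0 = 0 ∧ p 1 = a0 ∧ (∀ l, p l ≤ p (l + 1)) ∧ (∀ l, 1 ≤ l → p l < p (l + 1)) ∧
      (∀ l, SimpleSeg π (p l) (p (l + 1)) ∨ SimpleCycleSeg π (p l) (p (l + 1))) ∧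
      (∀ l, 1 ≤ l → SegEq π p l (l + K)) ∧
      ((K = 1 ∧ SimpleCycleSeg π (p 1) (p 2)) ∨
        (1 < K ∧ ∀ l, 1 ≤ l → l ≤ K →
          p l < p (l + 1) ∧ SimpleSeg π (p l) (p (l + 1)))) := by
  -- cumulative cut offsets within the cycle
  set c : ℕ → ℕ := fun r => Nat.rec 0 (fun r ih => ih + lam (r % K)) r with hcdef
  have hc0 : c 0 = 0 := rfl
  have hcs : ∀ r, c (r + 1) = c r + lam (r % K) := fun r => rfl
  set N : ℕ := c K with hNdef
  have hlam' : ∀ r, 1 ≤ lam (r % K) := fun r => hlam _ (Nat.mod_lt r hK)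
  have hcmono : Monotone c := monotone_nat_of_le_succ (by
    intro r; rw [hcs]; omega)
  have hcstrict : ∀ r, c r < c (r + 1) := by
    intro r; rw [hcs]; have := hlam' r; omega
  have hNpos : 0 < N := by
    have h1 : c 0 < c 1 := hcstrict 0
    have h2 : c 1 ≤ c K := hcmono hK
    omega
  have hcK : ∀ r, c (r + K) = c r + N := by
    intro r
    induction r with
    | zero => simp [hc0, hNdef]
    | succ r ih =>
      have : r + 1 + K = (r + K) + 1 := by omega
      rw [this, hcs, ih, Nat.add_mod_right, hcs]
      omega
  have hcq : ∀ q r, c (q * K + r) = q * N + c r := by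
    intro q
    induction q with
    | zero => simp
    | succ q ih =>
      intro r
      have : (q + 1) * K + r = (q * K + r) + K := by ring
      rw [this, hcK, ih]
      ring
  have hcleN : ∀ r, r ≤ K → c r ≤ N := fun r hr => hcmono hr
  -- the cyclic part
  set R : ℕ → ℕ := fun t => Nat.findGreatest (fun r => c r ≤ t) K with hRdef
  set cyc : ℕ → V := fun t => leg (R t) (t - c (R t)) with hcycdef
  have hR : ∀ r, r < K → ∀ s, s < lam r → R (c r + s) = r := by
    intro r hr s hs
    rw [hRdef]
    rw [Nat.findGreatest_eq_iff]
    refine ⟨le_of_lt hr, fun _ => Nat.le_add_right _ _, ?_⟩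
    intro k hk hkK hc
    have h1 : c (r + 1) ≤ c k := hcmono hk
    rw [hcs, Nat.mod_eq_of_lt hr] at h1
    omega
  have hcyc : ∀ r, r < K → ∀ s, s < lam r → cyc (c r + s) = leg r s := by
    intro r hr s hs
    rw [hcycdef]
    simp only [hR r hr s hs, Nat.add_sub_cancel_left]
  have hdecomp : ∀ t, t < N → ∃ r, r < K ∧ ∃ s, s < lam r ∧ t = c r + s := by
    intro t ht
    have hP0 : c 0 ≤ t := by omega
    have hspec : c (R t) ≤ t :=
      Nat.findGreatest_spec (P := fun r => c r ≤ t) (Nat.zero_le K) hP0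
    have hRle : R t ≤ K := Nat.findGreatest_le K
    have hRlt : R t < K := by
      rcases lt_or_eq_of_le hRle with h | h
      · exact h
      · exfalso; rw [h] at hspec; omega
    refine ⟨R t, hRlt, t - c (R t), ?_, by omega⟩
    by_contra hbig
    push_neg at hbig
    have hP : c (R t + 1) ≤ t := by
      rw [hcs, Nat.mod_eq_of_lt hRlt]; omega
    have h4 : R t + 1 ≤ R t :=
      Nat.le_findGreatest (P := fun r => c r ≤ t) (show R t + 1 ≤ K from hRlt) hP
    omega
  -- the play and cut positions
  set π : ℕ → V := fun m => if m < a0 then Pf m else cyc ((m - a0) % N) with hπdef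
  set p : ℕ → ℕ := fun l => if l = 0 then 0 else a0 + c (l - 1) with hpdef
  have hπlt : ∀ m, m < a0 → π m = Pf m := by
    intro m hm; simp only [hπdef, if_pos hm]
  have hπge : ∀ t, π (a0 + t) = cyc (t % N) := by
    intro t
    have h1 : ¬ (a0 + t < a0) := by omega
    simp only [hπdef, if_neg h1, Nat.add_sub_cancel_left]
  have hcyc0 : cyc 0 = u 0 := by
    have := hcyc 0 hK 0 (hlam 0 hK)
    rw [hc0] at this
    rw [this]
    exact hleg0 0 hK
  have hπa0 : π a0 = u 0 := by
    have := hπge 0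
    rw [Nat.add_zero] at this
    rw [this, Nat.zero_mod, hcyc0]
  have hπPf : ∀ m, m ≤ a0 → π m = Pf m := by
    intro m hm
    rcases lt_or_eq_of_le hm with h | h
    · exact hπlt m h
    · rw [h, hπa0, hPfend]
  have hπ0 : π 0 = v0 := by rw [hπPf 0 (Nat.zero_le a0), hPf0]
  have hperiod : ∀ m, a0 ≤ m → π (m + N) = π m := by
    intro m hm
    have h1 : m + N = a0 + (m - a0 + N) := by omega
    have h2 : m = a0 + (m - a0) := by omega
    rw [h1, hπge, Nat.add_mod_right]
    conv_rhs => rw [h2, hπge]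
  have hp0 : p 0 = 0 := rfl
  have hpsucc : ∀ l, p (l + 1) = a0 + c l := by
    intro l; simp only [hpdef, if_neg (Nat.succ_ne_zero l), Nat.add_sub_cancel]
  have hp1 : p 1 = a0 := by rw [hpsucc 0, hc0]; omega
  have hpval : ∀ l, 1 ≤ l → p l = a0 + c (l - 1) := by
    intro l hl; simp only [hpdef, if_neg (by omega : l ≠ 0)]
  have hpmono : ∀ l, p l ≤ p (l + 1) := by
    intro l
    match l with
    | 0 => rw [hp0, hp1]; omega
    | l + 1 =>
      rw [hpsucc l, hpsucc (l+1)]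
      have := hcstrict l
      omega
  have hpstrict : ∀ l, 1 ≤ l → p l < p (l + 1) := by
    intro l hl
    rw [hpval l hl, hpsucc l]
    have : c (l - 1) < c (l - 1 + 1) := hcstrict (l - 1)
    have h2 : l - 1 + 1 = l := by omega
    rw [h2] at this
    omega
  have hplen : ∀ l, 1 ≤ l → p (l + 1) - p l = lam ((l - 1) % K) := by
    intro l hl
    rw [hpval l hl, hpsucc l]
    have h3 := hcs (l - 1)
    have h4 : l - 1 + 1 = l := by omega
    rw [h4] at h3
    omega
  -- main index computation
  have IDX0 : ∀ l, 1 ≤ l → ∀ s, s < lam ((l - 1) % K) →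
      π (p l + s) = leg ((l - 1) % K) s := by
    intro l hl s hs
    set r := (l - 1) % K with hrdef
    set q := (l - 1) / K with hqdef
    have hlqr : l - 1 = q * K + r := by
      rw [hrdef, hqdef, Nat.mul_comm]
      exact (Nat.div_add_mod (l - 1) K).symm
    have hcval : c (l - 1) = q * N + c r := by rw [hlqr, hcq]
    have hrK : r < K := Nat.mod_lt _ hK
    have h1 : p l + s = a0 + ((c r + s) + q * N) := by
      rw [hpval l hl, hcval]; omega
    rw [h1, hπge]
    have h2 : ((c r + s) + q * N) % N = c r + s := by
      rw [Nat.add_mul_mod_self_right]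
      apply Nat.mod_eq_of_lt
      have h3 : c r + s < c (r + 1) := by
        rw [hcs, Nat.mod_eq_of_lt hrK]; omega
      exact lt_of_lt_of_le h3 (hcleN (r+1) hrK)
    rw [h2]
    exact hcyc r hrK s hs
  have IDXend : ∀ l, 1 ≤ l → π (p (l + 1)) = leg ((l - 1) % K) (lam ((l - 1) % K)) := by
    intro l hl
    set r := (l - 1) % K with hrdef
    have hrK : r < K := Nat.mod_lt _ hK
    have h1 : π (p (l + 1)) = leg (((l + 1) - 1) % K) 0 := by
      have := IDX0 (l + 1) (by omega) 0 (hlam _ (Nat.mod_lt _ hK))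
      rw [Nat.add_zero] at this
      exact this
    rw [h1, hleg0 _ (Nat.mod_lt _ hK), hlegend r hrK]
    congr 1
    have h2 : l + 1 - 1 = (l - 1) + 1 := by omega
    rw [h2, hrdef]
    conv_lhs => rw [Nat.add_mod]
    conv_rhs => rw [Nat.add_mod, Nat.mod_mod_of_dvd _ dvd_rfl]
  -- values in the cyclic part
  have hcrsN : ∀ r, r < K → ∀ s, s < lam r → c r + s < N := by
    intro r hr s hs
    have h3 : c r + s < c (r + 1) := by
      rw [hcs, Nat.mod_eq_of_lt hr]; omega
    exact lt_of_lt_of_le h3 (hcleN (r+1) hr)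

  have hmodsucc : ∀ x, (x + 1) % N = (x % N + 1) % N := by
    intro x
    conv_lhs => rw [Nat.add_mod]
    conv_rhs => rw [Nat.add_mod, Nat.mod_mod_of_dvd _ dvd_rfl]
  have hcycE : ∀ t, t < N → A.E (cyc t) (cyc ((t + 1) % N)) := by
    intro t htN
    obtain ⟨r, hr, s, hs, ht⟩ := hdecomp t htN
    have hedge := hlegE r hr s hs
    rcases lt_or_eq_of_le (Nat.succ_le_of_lt hs) with hlt | heq
    · have h1 : (t + 1) % N = c r + (s + 1) := by
        rw [ht, show c r + s + 1 = c r + (s + 1) from by omega]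
        exact Nat.mod_eq_of_lt (hcrsN r hr (s+1) hlt)
      rw [h1, ht, hcyc r hr s hs, hcyc r hr (s+1) hlt]
      exact hedge
    · have heq' : s + 1 = lam r := heq
      have hc1 : t + 1 = c (r + 1) := by
        rw [ht, hcs, Nat.mod_eq_of_lt hr]; omega
      rcases lt_or_eq_of_le (Nat.succ_le_of_lt hr) with hK0 | hK0
      · have hK' : r + 1 < K := hK0
        have hlt1 : c (r + 1) < N := by
          have := hcrsN (r+1) hK' 0 (hlam _ hK')
          omega
        have h1 : (t + 1) % N = c (r + 1) := by
          rw [hc1]; exact Nat.mod_eq_of_lt hlt1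
        have h2 := hcyc (r+1) hK' 0 (hlam _ hK')
        rw [Nat.add_zero] at h2
        rw [h1, ht, hcyc r hr s hs, h2, hleg0 _ hK']
        rw [heq', hlegend r hr, Nat.mod_eq_of_lt hK'] at hedge
        exact hedge
      · have hK' : r + 1 = K := hK0
        have h1 : (t + 1) % N = 0 := by
          rw [hc1, hK']; exact Nat.mod_self N
        rw [h1, ht, hcyc r hr s hs, hcyc0]
        rw [heq', hlegend r hr, hK', Nat.mod_self] at hedge
        exact hedge
  have hπplay : A.IsPlay π := by
    intro m
    by_cases h1 : m + 1 ≤ a0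
    · rw [hπPf m (by omega), hπPf (m+1) h1]
      exact hPfE m (by omega)
    · have hm : m = a0 + (m - a0) := by omega
      have hm1 : m + 1 = a0 + ((m - a0) + 1) := by omega
      have e1 := hπge (m - a0)
      rw [← hm] at e1
      have e2 := hπge ((m - a0) + 1)
      rw [← hm1] at e2
      rw [e1, e2, hmodsucc]
      exact hcycE _ (Nat.mod_lt _ hNpos)
  have hπcycVal : ∀ m, a0 ≤ m → ∃ r, r < K ∧ ∃ s, s < lam r ∧ π m = leg r s := by
    intro m hm
    have hmod : (m - a0) % N < N := Nat.mod_lt _ hNpos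
    obtain ⟨r, hr, s, hs, ht⟩ := hdecomp _ hmod
    refine ⟨r, hr, s, hs, ?_⟩
    have h1 : m = a0 + (m - a0) := by omega
    rw [h1, hπge, ht]
    exact hcyc r hr s hs
  have hinfoft : ∀ r, r < K → ∀ s, s < lam r → ∀ j, ∃ m, j ≤ m ∧ a0 ≤ m ∧ π m = leg r s := by
    intro r hr s hs j
    have hjN : j ≤ j * N := Nat.le_mul_of_pos_right j hNpos
    refine ⟨a0 + ((c r + s) + j * N), by omega, by omega, ?_⟩
    rw [hπge, Nat.add_mul_mod_self_right, Nat.mod_eq_of_lt (hcrsN r hr s hs)]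
    exact hcyc r hr s hs
  -- each segment of the decomposition carries a leg
  have hπseg : ∀ l, 1 ≤ l → ∀ m, p l ≤ m → m ≤ p (l+1) →
      π m = leg ((l-1) % K) (m - p l) := by
    intro l hl m h1 h2
    have hlen := hplen l hl
    have hs : m - p l ≤ lam ((l-1) % K) := by omega
    rcases lt_or_eq_of_le hs with h | h
    · have := IDX0 l hl (m - p l) h
      rwa [show p l + (m - p l) = m from by omega] at this
    · rw [h]
      have hm : m = p (l + 1) := by omega
      rw [hm]
      exact IDXend l hl
  have hseg0 : SimpleSeg π (p 0) (p 1) := by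
    rw [hp0, hp1]
    intro m m' h0m hma h0m' hm'a heq
    exact hPfinj m m' hma hm'a (by rw [← hπPf m hma, ← hπPf m' hm'a]; exact heq)
  have hpa0 : ∀ l, 1 ≤ l → a0 ≤ p l := by
    intro l hl; rw [hpval l hl]; omega
  have hpshift : ∀ l, 1 ≤ l → p (l + K) = p l + N := by
    intro l hl
    rw [hpval (l+K) (by omega), hpval l hl,
      show l + K - 1 = (l - 1) + K from by omega, hcK]
    omega
  have hSegEq : ∀ l, 1 ≤ l → SegEq π p l (l + K) := by
    intro l hl
    constructor
    · rw [hplen (l + K) (by omega), hplen l hl,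
        show l + K - 1 = (l - 1) + K from by omega, Nat.add_mod_right]
    · intro m hm
      rw [hpshift l hl, show p l + N + m = (p l + m) + N from by omega]
      exact hperiod (p l + m) (le_trans (hpa0 l hl) (Nat.le_add_right _ _))
  -- simplicity, in the two cases
  rcases hsimp with ⟨hK1, hinj⟩ | ⟨hK2, hinj⟩
  · -- K = 1 : every later segment is a simple cycle
    have hcycseg : ∀ l, 1 ≤ l → SimpleCycleSeg π (p l) (p (l + 1)) := by
      intro l hl
      have hr0 : (l - 1) % K = 0 := by rw [hK1, Nat.mod_one]
      refine ⟨hpstrict l hl, ?_, ?_⟩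
      · have h1 := hπseg l hl (p (l+1)) (le_of_lt (hpstrict l hl)) le_rfl
        have h2 := hπseg l hl (p l) le_rfl (le_of_lt (hpstrict l hl))
        rw [h1, h2, Nat.sub_self, hr0, hplen l hl, hr0, hleg0 0 hK, hlegend 0 hK,
          show (0 + 1) % K = 0 from by rw [hK1]]
      · intro m m' h1 h2 h1' h2' heq
        have hlen := hplen l hl
        have e1 := hπseg l hl m h1 (by omega)
        have e2 := hπseg l hl m' h1' (by omega)
        rw [e1, e2, hr0] at heq
        have := hinj (m - p l) (m' - p l) (by rw [← hr0]; omega) (by rw [← hr0]; omega) heq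
        omega
    refine ⟨π, p, hπ0, ?_, hπPf, hπcycVal, hinfoft, hp0, hp1, hpmono, hpstrict, ?_, hSegEq,
      Or.inl ⟨hK1, hcycseg 1 le_rfl⟩⟩
    · exact hπplay
    · intro l
      match l with
      | 0 => exact Or.inl hseg0
      | l + 1 => exact Or.inr (hcycseg (l+1) (by omega))
  · -- 1 < K : every segment is simple
    have hsimseg : ∀ l, 1 ≤ l → SimpleSeg π (p l) (p (l + 1)) := by
      intro l hl
      intro m m' h1 h2 h1' h2' heq
      have hlen := hplen l hl
      have hrK : (l - 1) % K < K := Nat.mod_lt _ hK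
      have e1 := hπseg l hl m h1 h2
      have e2 := hπseg l hl m' h1' h2'
      rw [e1, e2] at heq
      have := hinj _ hrK (m - p l) (m' - p l) (by omega) (by omega) heq
      omega
    refine ⟨π, p, hπ0, ?_, hπPf, hπcycVal, hinfoft, hp0, hp1, hpmono, hpstrict, ?_, hSegEq,
      Or.inr ⟨hK2, fun l hl1 hlK => ⟨hpstrict l hl1, hsimseg l hl1⟩⟩⟩
    · exact hπplay
    · intro l
      match l with
      | 0 => exact Or.inl hseg0
      | l + 1 => exact Or.inl (hsimseg (l+1) (by omega))

end Arena

/-- Well-structured Nash-equilibrium outcomes in Büchi games when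
some vertex occurs infinitely often.  The infinite decomposition
`(sg_0, sg_1, sg_2, …)` of `π` is encoded by its cut positions `p`, with
`sg_l = π[p l .. p (l+1)]`. -/
theorem buchi_decomposition_infinitely_occurring
    (V : Type) (n : ℕ) (A : Arena V n) (T : Fin n → Set V) (v0 : V)
    (σ' : Fin n → A.Strategy)
    (hNE : A.IsNEObj (fun i => BuchiObj (T i)) σ' v0)
    (π' : ℕ → V) (hπ' : outcome A σ' v0 = π')
    (hinf : ∃ v, ∀ j, ∃ k, j ≤ k ∧ π' k = v)
    (hsat : (satBuchi T π').Nonempty) :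
    ∃ (σ : Fin n → A.Strategy) (π : ℕ → V) (p : ℕ → ℕ) (K : ℕ),
      A.IsNEObj (fun i => BuchiObj (T i)) σ v0 ∧
      outcome A σ v0 = π ∧
      satBuchi T π = satBuchi T π' ∧
      -- cut positions of the decomposition
      p 0 = 0 ∧ (∀ l, p l ≤ p (l + 1)) ∧ (∀ l, 1 ≤ l → p l < p (l + 1)) ∧
      -- the decomposition is simple (a segment may be a simple cycle)
      (∀ l, SimpleSeg π (p l) (p (l + 1)) ∨ SimpleCycleSeg π (p l) (p (l + 1))) ∧
      -- (i): targets of losing players do not occur in `sg_l`, l ≥ 1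
      (∀ l, 1 ≤ l → ∀ i, i ∉ satBuchi T π →
        ∀ m, p l ≤ m → m ≤ p (l + 1) → π m ∉ T i) ∧
      -- (ii): periodicity with period `K ≤ |Sat(π')|`
      1 ≤ K ∧ K ≤ (satBuchi T π').ncard ∧
      (∀ l, 1 ≤ l → SegEq π p l (l + K)) ∧
      -- (iii)
      ((K = 1 ∧ SimpleCycleSeg π (p 1) (p 2)) ∨
        (1 < K ∧ ∀ l, 1 ≤ l → l ≤ K →
          p l < p (l + 1) ∧ SimpleSeg π (p l) (p (l + 1)))) := by
  classical
  set S := satBuchi T π' with hSdef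
  have hπ'0 : π' 0 = v0 := by rw [← hπ']; rfl
  have hπ'play : A.IsPlay π' := hπ' ▸ outcome_isPlay A σ' v0
  obtain ⟨v, hv⟩ := hinf
  -- bound beyond which losing players' targets are avoided
  have hbound : ∀ i : Fin n, ∃ J, i ∉ S → ∀ k, J ≤ k → π' k ∉ T i := by
    intro i
    by_cases h : i ∈ S
    · exact ⟨0, fun hi => absurd h hi⟩
    · have h' : ¬ ∀ j, ∃ k, j ≤ k ∧ π' k ∈ T i := h
      push_neg at h'
      obtain ⟨j, hj⟩ := h'
      exact ⟨j, fun _ k hk => hj k hk⟩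
  choose B hB using hbound
  set J := Finset.univ.sup B with hJdef
  have hJ : ∀ k, J ≤ k → ∀ i, i ∉ S → π' k ∉ T i := by
    intro k hk i hi
    exact hB i hi k (le_trans (Finset.le_sup (Finset.mem_univ i)) hk)
  obtain ⟨a, haJ, hva⟩ := hv J
  -- positions where winning players' targets are visited, after `a`
  have hq0 : ∀ i : Fin n, ∃ k, i ∈ S → (a + 1 ≤ k ∧ π' k ∈ T i) := by
    intro i
    by_cases h : i ∈ S
    · have h' : ∀ j, ∃ k, j ≤ k ∧ π' k ∈ T i := h
      obtain ⟨k, hk1, hk2⟩ := h' (a+1)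
      exact ⟨k, fun _ => ⟨hk1, hk2⟩⟩
    · exact ⟨0, fun hi => absurd hi h⟩
  choose q hq using hq0
  set M := Finset.univ.sup q with hMdef
  obtain ⟨b, hbM, hvb⟩ := hv (M + 1)
  have hqa : ∀ i, i ∈ S → a < q i ∧ q i < b ∧ π' (q i) ∈ T i := by
    intro i hi
    obtain ⟨h1, h2⟩ := hq i hi
    have h3 : q i ≤ M := Finset.le_sup (Finset.mem_univ i)
    exact ⟨by omega, by omega, h2⟩
  have hab : a < b := by
    obtain ⟨i0, hi0⟩ := hsat
    have := hqa i0 hi0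
    omega
  have hπ'ab : π' b = π' a := by rw [hva, hvb]
  -- the anchor set
  set Sfin := (Set.toFinite S).toFinset with hSfindef
  have hSfin : ∀ i, i ∈ Sfin ↔ i ∈ S := fun i => Set.Finite.mem_toFinset _
  set U := Sfin.image (fun i => π' (q i)) with hUdef
  set K := U.card with hKdef
  have hUne : U.Nonempty := by
    obtain ⟨i0, hi0⟩ := hsat
    exact ⟨π' (q i0), Finset.mem_image_of_mem _ ((hSfin i0).mpr hi0)⟩
  have hKpos : 0 < K := Finset.card_pos.mpr hUne
  have hKle : K ≤ S.ncard := by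
    rw [Set.ncard_eq_toFinset_card S (Set.toFinite S)]
    exact Finset.card_image_le
  -- positions of the anchors on the cycle of π'
  have htpos : ∀ x : V, ∃ m, x ∈ U → (a ≤ m ∧ m < b ∧ π' m = x) := by
    intro x
    by_cases hx : x ∈ U
    · obtain ⟨i, hi, hix⟩ := Finset.mem_image.mp hx
      have h := hqa i ((hSfin i).mp hi)
      exact ⟨q i, fun _ => ⟨by omega, by omega, hix⟩⟩
    · exact ⟨0, fun h => absurd h hx⟩
  choose tp htp using htpos
  -- enumeration of the anchors
  set u : ℕ → V := fun r => if h : r < K then (U.equivFin.symm ⟨r, h⟩ : V) else v with hudef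
  have humem : ∀ r, r < K → u r ∈ U := by
    intro r hr
    simp only [hudef, dif_pos hr]
    exact (U.equivFin.symm ⟨r, hr⟩).2
  have huinj : ∀ r r', r < K → r' < K → u r = u r' → r = r' := by
    intro r r' hr hr' h
    simp only [hudef, dif_pos hr, dif_pos hr'] at h
    have h2 := U.equivFin.symm.injective (Subtype.coe_injective h)
    exact congrArg Fin.val h2
  have hucover : ∀ x, x ∈ U → ∃ r, r < K ∧ u r = x := by
    intro x hx
    refine ⟨(U.equivFin ⟨x, hx⟩).1, (U.equivFin ⟨x, hx⟩).2, ?_⟩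
    simp only [hudef, dif_pos (U.equivFin ⟨x, hx⟩).2, Fin.eta, Equiv.symm_apply_apply]
    exact dif_pos (U.equivFin ⟨x, hx⟩).2
  -- modular walks around the cycle of π'
  set L := b - a with hLdef
  have hLpos : 0 < L := by omega
  have hLmodsucc : ∀ y, (y + 1) % L = (y % L + 1) % L := by
    intro y
    conv_lhs => rw [Nat.add_mod]
    conv_rhs => rw [Nat.add_mod, Nat.mod_mod_of_dvd _ dvd_rfl]
  have hwalkE : ∀ y, A.E (π' (a + y % L)) (π' (a + (y + 1) % L)) := by
    intro y
    rw [hLmodsucc]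
    have hx : y % L < L := Nat.mod_lt _ hLpos
    rcases lt_or_eq_of_le (Nat.succ_le_of_lt hx) with h | h
    · rw [Nat.mod_eq_of_lt h, show a + (y % L + 1) = (a + y % L) + 1 from by omega]
      exact hπ'play _
    · have h' : y % L + 1 = L := h
      rw [h', Nat.mod_self, Nat.add_zero]
      have hb1 : a + y % L = b - 1 := by omega
      have h3 := hπ'play (b - 1)
      rw [show b - 1 + 1 = b from by omega, hπ'ab] at h3
      rw [hb1]
      exact h3
  have hwalkmem : ∀ y, ∃ m, a ≤ m ∧ m ≤ b ∧ π' m = π' (a + y % L) := by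
    intro y
    have := Nat.mod_lt y hLpos
    exact ⟨a + y % L, by omega, by omega, rfl⟩
  -- construction of the legs
  have hlegs : ∀ r : ℕ, ∃ (lr : ℕ) (wr : ℕ → V), r < K →
      (1 ≤ lr ∧ wr 0 = u r ∧ wr lr = u ((r + 1) % K) ∧
        (∀ s, s < lr → A.E (wr s) (wr (s + 1))) ∧
        (∀ t, t ≤ lr → ∃ m, a ≤ m ∧ m ≤ b ∧ π' m = wr t) ∧
        (∀ s s', s < lr → s' < lr → wr s = wr s' → s = s') ∧
        (1 < K → ∀ s s', s ≤ lr → s' ≤ lr → wr s = wr s' → s = s')) := by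
    intro r
    by_cases hr : r < K
    · set x := u r with hxdef
      set x' := u ((r + 1) % K) with hx'def
      have hxU : x ∈ U := humem r hr
      have hr1K : (r + 1) % K < K := Nat.mod_lt _ hKpos
      have hx'U : x' ∈ U := humem _ hr1K
      obtain ⟨hta, htb, htx⟩ := htp x hxU
      obtain ⟨hta', htb', htx'⟩ := htp x' hx'U
      set d1 := tp x - a with hd1def
      set d2 := tp x' - a with hd2def
      have hd1 : d1 < L := by omega
      have hd2 : d2 < L := by omega
      set w : ℕ → V := fun t => π' (a + (d1 + t) % L) with hwdef
      have hw0 : w 0 = x := by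
        simp only [hwdef, Nat.add_zero]
        rw [Nat.mod_eq_of_lt hd1, show a + d1 = tp x from by omega, htx]
      have hwE : ∀ t, A.E (w t) (w (t + 1)) := by
        intro t
        have h3 := hwalkE (d1 + t)
        rw [show d1 + t + 1 = d1 + (t + 1) from by omega] at h3
        exact h3
      have hwmem : ∀ t, ∃ m, a ≤ m ∧ m ≤ b ∧ π' m = w t := fun t => hwalkmem (d1 + t)
      by_cases hK1 : K = 1
      · -- single anchor: a simple cycle
        have hr0 : r = 0 := by omega
        have hxx' : x' = x := by
          rw [hx'def, hxdef, hr0, hK1]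
        have hwL : w L = x := by
          simp only [hwdef]
          rw [Nat.add_mod_right, Nat.mod_eq_of_lt hd1,
            show a + d1 = tp x from by omega, htx]
        obtain ⟨m', w', hm'pos, hm'le, hE', h0', hend', hinj', hmem'⟩ :=
          exists_simple_cycle A.E L w hLpos (fun t _ => hwE t) (by rw [hwL, hw0])
        refine ⟨m', w', fun _ => ⟨hm'pos, by rw [h0', hw0], ?_, hE', ?_, hinj',
          fun hKK => absurd hK1 (by omega)⟩⟩
        · rw [hend', hw0, hxx']
        · intro t ht
          obtain ⟨sm, hsm, hws'⟩ := hmem' t ht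
          obtain ⟨m0, h1, h2, h3⟩ := hwmem sm
          exact ⟨m0, h1, h2, by rw [h3, hws']⟩
      · -- several anchors: a simple path to the next anchor
        have hK2 : 1 < K := by omega
        have hne : x ≠ x' := by
          intro h
          have h4 := huinj r ((r+1)%K) hr hr1K (by rw [← hxdef, ← hx'def, h])
          rcases lt_or_eq_of_le (Nat.succ_le_of_lt hr) with h' | h'
          · have : (r + 1) % K = r + 1 := Nat.mod_eq_of_lt h'
            omega
          · have h'' : r + 1 = K := h'
            have : (r + 1) % K = 0 := by rw [h'']; exact Nat.mod_self K
            omega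
        have hd12 : d1 ≠ d2 := by
          intro h
          apply hne
          rw [← htx, ← htx']
          congr 1
          omega
        set sst := if d1 < d2 then d2 - d1 else L + d2 - d1 with hsdef
        have hspos : 0 < sst ∧ (d1 + sst) % L = d2 := by
          by_cases h : d1 < d2
          · rw [hsdef, if_pos h]
            refine ⟨by omega, ?_⟩
            rw [show d1 + (d2 - d1) = d2 from by omega]
            exact Nat.mod_eq_of_lt hd2
          · rw [hsdef, if_neg h]
            refine ⟨by omega, ?_⟩
            rw [show d1 + (L + d2 - d1) = d2 + L from by omega, Nat.add_mod_right]
            exact Nat.mod_eq_of_lt hd2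
        have hws : w sst = x' := by
          simp only [hwdef]
          rw [hspos.2, show a + d2 = tp x' from by omega, htx']
        obtain ⟨m', w', hm'le, hE', h0', hend', hinj', hmem'⟩ :=
          exists_simple_path A.E sst w (fun t _ => hwE t)
        rw [hws] at hend'
        rw [hw0] at h0'
        have hm'pos : 1 ≤ m' := by
          rcases Nat.eq_zero_or_pos m' with h | h
          · exfalso
            apply hne
            rw [← h0', ← hend', h]
          · exact h
        refine ⟨m', w', fun _ => ⟨hm'pos, h0', hend', hE', ?_,
          fun s s' hs hs' => hinj' s s' (le_of_lt hs) (le_of_lt hs'), fun _ => hinj'⟩⟩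
        intro t ht
        obtain ⟨sm, hsm, hws'⟩ := hmem' t ht
        obtain ⟨m0, h1, h2, h3⟩ := hwmem sm
        exact ⟨m0, h1, h2, by rw [h3, hws']⟩
    · exact ⟨0, fun _ => v, fun h => absurd h hr⟩
  choose lam leg hlegsp using hlegs
  -- the simple prefix from v0 to the first anchor
  obtain ⟨a0, Pf, _, hPfE, hPf0, hPfend, hPfinj, hPfmem⟩ :=
    exists_simple_path A.E (tp (u 0)) π' (fun t _ => hπ'play t)
  -- assemble the lasso play
  have hsimp : (K = 1 ∧ ∀ s s', s < lam 0 → s' < lam 0 → leg 0 s = leg 0 s' → s = s')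
      ∨ (1 < K ∧ ∀ r, r < K → ∀ s s', s ≤ lam r → s' ≤ lam r →
          leg r s = leg r s' → s = s') := by
    by_cases hK1 : K = 1
    · exact Or.inl ⟨hK1, (hlegsp 0 hKpos).2.2.2.2.2.1⟩
    · exact Or.inr ⟨by omega, fun r hr => (hlegsp r hr).2.2.2.2.2.2 (by omega)⟩
  obtain ⟨π, p, hπ0, hπplay, hπPf, hπcyc, hinfoft, hp0, hp1, hpmono, hpstrict,
      hsimpseg, hSegEq, hiii⟩ :=
    assemble A v0 a0 Pf K u lam leg hKpos
      (fun r hr => (hlegsp r hr).1)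
      (by rw [hPf0, hπ'0])
      (by rw [hPfend]; exact (htp (u 0) (humem 0 hKpos)).2.2)
      hPfinj hPfE
      (fun r hr => (hlegsp r hr).2.1)
      (fun r hr => (hlegsp r hr).2.2.1)
      (fun r hr => (hlegsp r hr).2.2.2.1)
      hsimp
  -- losing players never see their target in the cyclic part
  have havoid : ∀ i, i ∉ S → ∀ m, a0 ≤ m → π m ∉ T i := by
    intro i hi m hm
    obtain ⟨r, hr, s, hs, hval⟩ := hπcyc m hm
    obtain ⟨m0, hm0a, hm0b, hm0⟩ := (hlegsp r hr).2.2.2.2.1 s (le_of_lt hs)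
    rw [hval, ← hm0]
    exact hJ m0 (by omega) i hi
  -- the satisfied players are unchanged
  have hSat : satBuchi T π = S := by
    ext i
    constructor
    · intro hiB
      by_contra hi
      have hiB' : ∀ j, ∃ k, j ≤ k ∧ π k ∈ T i := hiB
      obtain ⟨k, hk1, hk2⟩ := hiB' a0
      exact havoid i hi k hk1 hk2
    · intro hi
      have hx : π' (q i) ∈ U := Finset.mem_image_of_mem _ ((hSfin i).mpr hi)
      obtain ⟨r, hr, hur⟩ := hucover _ hx
      intro j
      obtain ⟨m, hjm, hma0, hmv⟩ := hinfoft r hr 0 ((hlegsp r hr).1) j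
      refine ⟨m, hjm, ?_⟩
      rw [hmv, (hlegsp r hr).2.1, hur]
      exact (hqa i hi).2.2
  -- every vertex of π is a vertex of π'
  have hall : ∀ m, ∃ m0, π' m0 = π m := by
    intro m
    by_cases hm : a0 ≤ m
    · obtain ⟨r, hr, s, hs, hval⟩ := hπcyc m hm
      obtain ⟨m0, _, _, hm0⟩ := (hlegsp r hr).2.2.2.2.1 s (le_of_lt hs)
      exact ⟨m0, by rw [hval]; exact hm0⟩
    · obtain ⟨m0, _, hm0⟩ := hPfmem m (by omega)
      exact ⟨m0, by rw [hπPf m (by omega)]; exact hm0⟩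
  choose F hF using hall
  -- transfer the Nash equilibrium
  obtain ⟨σ, hout, hNE2⟩ := ne_transfer A T v0 σ' hNE π' hπ' π F hπ0 hπplay hF
    (by rw [hSat])
  have hpmono' : Monotone p := monotone_nat_of_le_succ hpmono
  refine ⟨σ, π, p, K, hNE2, hout, hSat, hp0, hpmono, hpstrict, hsimpseg, ?_,
    hKpos, hKle, hSegEq, hiii⟩
  intro l hl i hi m h1 h2
  rw [hSat] at hi
  have hm : a0 ≤ m := by
    have h3 : p 1 ≤ p l := hpmono' hl
    rw [hp1] at h3
    omega
  exact havoid i hi m hm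
end
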